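/- arXiv:1401.2681 — 4 statements merged into one kernel-verified Lean document; each statement's English description precedes it below -/
import Mathlib

section
/- Let Γ be a countable connected locally 2-arc-transitive bipartite graph, M its associated 2-level poset, and suppose that every interval [x,y]^{M^D} with x ∈ Min(M), y ∈ Max(M), x < y is order-isomorphic to 1 + ℤ + 1. Let D be the digraph on M^+ \ M with an edge x → y iff x > y in M^D and no element of M^D lies strictly between y and x. If D is locally finite (every vertex has only finitely many in-neighbours and only finitely many out-neighbours), then D is strongly transitive. -/
set_option autoImplicit false

section Preamble

/-- A *cut* of a poset `M`: a nonempty subset, bounded above, which equals the set of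
lower bounds of its set of upper bounds. -/
def IsCut {M : Type*} [PartialOrder M] (J : Set M) : Prop :=
  J.Nonempty ∧ (upperBounds J).Nonempty ∧ lowerBounds (upperBounds J) = J

/-- The Dedekind–MacNeille completion of `M`: the set of cuts, ordered by inclusion. -/
abbrev DMC (M : Type*) [PartialOrder M] : Type _ := {J : Set M // IsCut J}

/-- The canonical embedding of `M` into `DMC M`, `a ↦ {x | x ≤ a}`. -/
def principalCut {M : Type*} [PartialOrder M] (a : M) : DMC M :=
  ⟨Set.Iic a, ⟨a, le_refl a⟩, ⟨a, fun _ hx => hx⟩, by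
    apply Set.Subset.antisymm
    · intro x hx
      exact hx (fun _ hy => hy)
    · exact subset_lowerBounds_upperBounds _⟩

/-- The image of `M` in its Dedekind–MacNeille completion (the principal cuts). -/
def principalSet (M : Type*) [PartialOrder M] : Set (DMC M) :=
  Set.range (fun a : M => principalCut a)

/-- A 2-level poset: every element is minimal or maximal. -/
def IsTwoLevel (M : Type*) [PartialOrder M] : Prop :=
  ∀ x : M, IsMin x ∨ IsMax x

/-- The set `Min(M)` of minimal elements. -/
def minSet (M : Type*) [PartialOrder M] : Set M := {x | IsMin x}

/-- The set `Max(M)` of maximal elements. -/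
def maxSet (M : Type*) [PartialOrder M] : Set M := {x | IsMax x}

/-- The comparability graph of a poset: `x` adjacent to `y` iff `x < y` or `y < x`. -/
def compGraph (M : Type*) [PartialOrder M] : SimpleGraph M where
  Adj x y := x < y ∨ y < x
  symm := ⟨fun _ _ h => Or.symm h⟩
  loopless := ⟨fun x h => by rcases h with h | h <;> exact lt_irrefl x h⟩

/-- Upward ramification points of `M`: infima in `DMC M` of two incomparable elements of `M`. -/
def upRam (M : Type*) [PartialOrder M] : Set (DMC M) :=
  {p | ∃ a b : M, ¬ a ≤ b ∧ ¬ b ≤ a ∧ IsGLB {principalCut a, principalCut b} p}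

/-- Downward ramification points of `M`: suprema in `DMC M` of two incomparable elements of `M`. -/
def downRam (M : Type*) [PartialOrder M] : Set (DMC M) :=
  {p | ∃ a b : M, ¬ a ≤ b ∧ ¬ b ≤ a ∧ IsLUB {principalCut a, principalCut b} p}

/-- `M⁺ = M ∪ Ram(M)`, as a subset of `DMC M`. -/
def MPlus (M : Type*) [PartialOrder M] : Set (DMC M) :=
  principalSet M ∪ upRam M ∪ downRam M

/-- A 2-arc in a graph. -/
def IsTwoArc {V : Type*} (G : SimpleGraph V) (v₀ v₁ v₂ : V) : Prop :=
  G.Adj v₀ v₁ ∧ G.Adj v₁ v₂ ∧ v₀ ≠ v₂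

/-- Local 1-arc-transitivity: every vertex stabilizer is transitive on neighbours. -/
def LocallyOneArcTransitive {V : Type*} (G : SimpleGraph V) : Prop :=
  ∀ v u w : V, G.Adj v u → G.Adj v w → ∃ g : G ≃g G, g v = v ∧ g u = w

/-- Local 2-arc-transitivity: every vertex stabilizer is transitive on 2-arcs from that vertex. -/
def LocallyTwoArcTransitive {V : Type*} (G : SimpleGraph V) : Prop :=
  ∀ v u₁ w₁ u₂ w₂ : V, IsTwoArc G v u₁ w₁ → IsTwoArc G v u₂ w₂ →
    ∃ g : G ≃g G, g v = v ∧ g u₁ = u₂ ∧ g w₁ = w₂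

/-- (Global) 1-arc-transitivity of a graph. -/
def OneArcTransitive {V : Type*} (G : SimpleGraph V) : Prop :=
  ∀ v₀ v₁ u₀ u₁ : V, G.Adj v₀ v₁ → G.Adj u₀ u₁ →
    ∃ g : G ≃g G, g v₀ = u₀ ∧ g v₁ = u₁

/-- (Global) 2-arc-transitivity of a graph. -/
def TwoArcTransitive {V : Type*} (G : SimpleGraph V) : Prop :=
  ∀ v₀ v₁ v₂ u₀ u₁ u₂ : V, IsTwoArc G v₀ v₁ v₂ → IsTwoArc G u₀ u₁ u₂ →
    ∃ g : G ≃g G, g v₀ = u₀ ∧ g v₁ = u₁ ∧ g v₂ = u₂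

/-- 3-CS-homogeneity: every isomorphism between connected 3-element induced subposets
extends to an automorphism. -/
def ThreeCSHomogeneous (M : Type*) [PartialOrder M] : Prop :=
  ∀ A B : Set M, A.ncard = 3 → B.ncard = 3 →
    ((compGraph M).induce A).Connected → ((compGraph M).induce B).Connected →
    ∀ f : ↥A ≃o ↥B, ∃ g : M ≃o M, ∀ a : ↥A, g ↑a = ↑(f a)

/-- 2-CS-transitivity: the automorphism group is transitive on comparable pairs. -/
def TwoCSTransitive (M : Type*) [PartialOrder M] : Prop :=
  ∀ a b a' b' : M, a < b → a' < b' → ∃ g : M ≃o M, g a = a' ∧ g b = b'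

/-- 3-CS-transitivity: for any two isomorphic connected 3-element induced subposets there
is an automorphism carrying one onto the other. -/
def ThreeCSTransitive (M : Type*) [PartialOrder M] : Prop :=
  ∀ A B : Set M, A.ncard = 3 → B.ncard = 3 →
    ((compGraph M).induce A).Connected → ((compGraph M).induce B).Connected →
    Nonempty (↥A ≃o ↥B) → ∃ g : M ≃o M, ⇑g '' A = B

/-- A subset of a poset is a `k`-diamond if it consists of a least element, a greatest
element, and exactly `k` pairwise incomparable elements strictly in between. -/
def IsKDiamond {P : Type*} [PartialOrder P] (s : Set P) (k : ℕ) : Prop :=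
  ∃ a b : P, a ∈ s ∧ b ∈ s ∧ a ≠ b ∧ (∀ z ∈ s, a ≤ z ∧ z ≤ b) ∧
    (s \ {a, b}).ncard = k ∧
    ∀ z ∈ s \ ({a, b} : Set P), ∀ w ∈ s \ ({a, b} : Set P), z ≠ w → ¬ z ≤ w

end Preamble
section Digraph

/-- Automorphisms of a digraph `(V, E)`. -/
def DigraphAut {V : Type*} (E : V → V → Prop) : Type _ :=
  {g : V ≃ V // ∀ x y : V, E (g x) (g y) ↔ E x y}

/-- Descendants of a vertex: vertices reachable by a directed path (including itself). -/
def descSet {V : Type*} (E : V → V → Prop) (u : V) : Set V :=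
  {v | Relation.ReflTransGen E u v}

/-- Ancestors of a vertex. -/
def ancSet {V : Type*} (E : V → V → Prop) (u : V) : Set V :=
  {v | Relation.ReflTransGen E v u}

/-- Highly arc-transitive digraph: vertex-transitive and transitive on `s`-arcs for all `s ≥ 1`. -/
def HighlyArcTransitive {V : Type*} (E : V → V → Prop) : Prop :=
  (∀ u v : V, ∃ g : DigraphAut E, g.val u = v) ∧
  (∀ s : ℕ, 1 ≤ s → ∀ a b : ℕ → V,
    (∀ i < s, E (a i) (a (i + 1))) → (∀ i < s, E (b i) (b (i + 1))) →
    ∃ g : DigraphAut E, ∀ i ≤ s, g.val (a i) = b i)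

/-- The intersection property: nonempty intersections of principal ideals are principal. -/
def IntersectionProperty {V : Type*} (E : V → V → Prop) : Prop :=
  ∀ x y : V, (descSet E x ∩ descSet E y).Nonempty →
    ∃ z : V, descSet E x ∩ descSet E y = descSet E z

/-- A directed line: a `ℤ`-indexed sequence of distinct vertices with consecutive edges. -/
def IsDirectedLine {V : Type*} (E : V → V → Prop) (x : ℤ → V) : Prop :=
  Function.Injective x ∧ ∀ i : ℤ, E (x i) (x (i + 1))

/-- A `Y`-configuration: two directed lines agreeing exactly on indices `i ≥ 0`. -/
def IsYConfig {V : Type*} (E : V → V → Prop) (x y : ℤ → V) : Prop :=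
  IsDirectedLine E x ∧ IsDirectedLine E y ∧ ∀ i : ℤ, x i = y i ↔ 0 ≤ i

/-- A `Ȳ`-configuration: two directed lines agreeing exactly on indices `i ≤ 0`. -/
def IsYBarConfig {V : Type*} (E : V → V → Prop) (x y : ℤ → V) : Prop :=
  IsDirectedLine E x ∧ IsDirectedLine E y ∧ ∀ i : ℤ, x i = y i ↔ i ≤ 0

/-- Strong transitivity: the automorphism group is transitive on `Y`-configurations and
on `Ȳ`-configurations. -/
def StronglyTransitive {V : Type*} (E : V → V → Prop) : Prop :=
  (∀ x y x' y' : ℤ → V, IsYConfig E x y → IsYConfig E x' y' →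
    ∃ g : DigraphAut E, g.val '' (Set.range x ∪ Set.range y) = Set.range x' ∪ Set.range y') ∧
  (∀ x y x' y' : ℤ → V, IsYBarConfig E x y → IsYBarConfig E x' y' →
    ∃ g : DigraphAut E, g.val '' (Set.range x ∪ Set.range y) = Set.range x' ∪ Set.range y')

end Digraph

/-- The digraph on `M⁺ \ M` with an edge `x → y` iff `x` covers `y` in `M^D`. -/
def coverDigraph (M : Type*) [PartialOrder M] :
    ↥(MPlus M \ principalSet M) → ↥(MPlus M \ principalSet M) → Prop :=
  fun p q => (q : DMC M) ⋖ (p : DMC M)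

section SecA
namespace ST
open Set

variable {M : Type*} [PartialOrder M]

lemma lb_ub_lb (s : Set M) : lowerBounds (upperBounds (lowerBounds s)) = lowerBounds s := by
  apply subset_antisymm
  · intro x hx y hy
    exact hx (fun z hz => hz hy)
  · exact subset_lowerBounds_upperBounds _

lemma cut_eq (q : DMC M) : lowerBounds (upperBounds q.1) = q.1 := q.2.2.2

lemma cut_nonempty (q : DMC M) : q.1.Nonempty := q.2.1

lemma cut_bddAbove (q : DMC M) : (upperBounds q.1).Nonempty := q.2.2.1

lemma cut_downclosed (q : DMC M) {z w : M} (hw : w ∈ q.1) (hz : z ≤ w) : z ∈ q.1 := by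
  rw [← cut_eq q] at hw ⊢
  exact fun u hu => le_trans hz (hw hu)

lemma DMC.le_def {q r : DMC M} : q ≤ r ↔ q.1 ⊆ r.1 := Iff.rfl

lemma DMC.lt_of_le_ne {q r : DMC M} (h : q ≤ r) (hne : q ≠ r) : q < r :=
  lt_of_le_of_ne h hne

@[simp] lemma principalCut_val (a : M) : (principalCut a).1 = Set.Iic a := rfl

lemma principalCut_le_iff {a : M} {q : DMC M} : principalCut a ≤ q ↔ a ∈ q.1 := by
  constructor
  · intro h; exact h (le_refl a)
  · intro h z hz; exact cut_downclosed q h hz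

lemma le_principalCut_iff {b : M} {q : DMC M} : q ≤ principalCut b ↔ b ∈ upperBounds q.1 := by
  constructor
  · intro h z hz; exact h hz
  · intro h z hz; exact h hz

lemma subset_Iic_iff {b : M} {s : Set M} : s ⊆ Set.Iic b ↔ b ∈ upperBounds s := by
  constructor
  · intro h z hz; exact h hz
  · intro h z hz; exact h hz

lemma eq_principalCut_of_mem {a : M} {q : DMC M} (h1 : a ∈ q.1) (h2 : a ∈ upperBounds q.1) :
    q = principalCut a := by
  apply Subtype.ext
  apply subset_antisymm
  · intro z hz; exact h2 hz
  · intro z hz; exact cut_downclosed q h1 hz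

/-- a cut in `MPlus \ principalSet` is not principal -/
lemma not_principal {q : DMC M} (hq : q ∈ MPlus M \ principalSet M) (a : M) :
    q ≠ principalCut a := by
  intro h
  exact hq.2 ⟨a, h.symm⟩

lemma isCut_inter_Iic {b b' : M} (hne : (Set.Iic b ∩ Set.Iic b').Nonempty) :
    IsCut (Set.Iic b ∩ Set.Iic b') := by
  refine ⟨hne, ⟨b, fun z hz => hz.1⟩, ?_⟩
  apply subset_antisymm
  · intro z hz
    exact ⟨hz (fun w hw => hw.1), hz (fun w hw => hw.2)⟩
  · exact subset_lowerBounds_upperBounds _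

lemma isCut_cl {S : Set M} (h1 : S.Nonempty) (h2 : (upperBounds S).Nonempty) :
    IsCut (lowerBounds (upperBounds S)) := by
  obtain ⟨a, ha⟩ := h1
  obtain ⟨b, hb⟩ := h2
  refine ⟨⟨a, fun w hw => hw ha⟩, ⟨b, fun z hz => hz hb⟩, lb_ub_lb _⟩

/- two-level facts -/
lemma lt_min_max (h2lev : IsTwoLevel M) {a b : M} (hab : a < b) : IsMin a ∧ IsMax b := by
  constructor
  · rcases h2lev a with h | h
    · exact h
    · exact absurd (le_of_lt hab) (fun hle => absurd (h hle) (not_le_of_gt hab))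
  · rcases h2lev b with h | h
    · exact absurd (h (le_of_lt hab)) (not_le_of_gt hab)
    · exact h

/-- a member together with an upper bound of a non-principal cut gives a strict pair -/
lemma pair_lt {q : DMC M} (h2lev : IsTwoLevel M) (hq : q ∈ MPlus M \ principalSet M)
    {a b : M} (ha : a ∈ q.1) (hb : b ∈ upperBounds q.1) :
    a < b ∧ IsMin a ∧ IsMax b := by
  have hab : a ≤ b := hb ha
  have hne : a ≠ b := by
    rintro rfl
    exact not_principal hq a (eq_principalCut_of_mem ha hb)
  have hlt : a < b := lt_of_le_of_ne hab hne
  exact ⟨hlt, lt_min_max h2lev hlt⟩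

end ST
end SecA
section SecC
namespace ST
open Set

variable {M : Type*} [PartialOrder M]

/-- abbreviation for the interval hypothesis -/
def IH (M : Type*) [PartialOrder M] : Prop :=
  ∀ x y : M, x ∈ minSet M → y ∈ maxSet M → x < y →
      Nonempty (↥(Set.Icc (principalCut x) (principalCut y)) ≃o WithBot (WithTop ℤ))

/-- two cuts with a common member and a common upper bound are comparable -/
lemma cuts_comparable (hint : IH M) {a b : M} (hab : a < b) (hmin : IsMin a) (hmax : IsMax b)
    {q r : DMC M} (haq : a ∈ q.1) (har : a ∈ r.1)
    (hbq : b ∈ upperBounds q.1) (hbr : b ∈ upperBounds r.1) :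
    q ≤ r ∨ r ≤ q := by
  obtain ⟨e⟩ := hint a b hmin hmax hab
  have hq : q ∈ Set.Icc (principalCut a) (principalCut b) :=
    ⟨principalCut_le_iff.2 haq, le_principalCut_iff.2 hbq⟩
  have hr : r ∈ Set.Icc (principalCut a) (principalCut b) :=
    ⟨principalCut_le_iff.2 har, le_principalCut_iff.2 hbr⟩
  rcases le_total (e ⟨q, hq⟩) (e ⟨r, hr⟩) with h | h
  · left; exact e.le_iff_le.1 h
  · right; exact e.le_iff_le.1 h

/-- there exists a cut strictly between the endpoints of an edge -/
lemma exists_middle (hint : IH M) {a b : M} (hab : a < b) (hmin : IsMin a) (hmax : IsMax b) :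
    ∃ q : DMC M, principalCut a < q ∧ q < principalCut b := by
  obtain ⟨e⟩ := hint a b hmin hmax hab
  have hab' : principalCut a ≤ principalCut (M := M) b := by
    rw [le_principalCut_iff]
    intro z hz; exact le_trans hz (le_of_lt hab)
  set B : ↥(Set.Icc (principalCut a) (principalCut b)) :=
    ⟨principalCut a, le_refl _, hab'⟩ with hB
  set T : ↥(Set.Icc (principalCut a) (principalCut b)) :=
    ⟨principalCut b, hab', le_refl _⟩ with hT
  have heB : e B = ⊥ := by
    have : ∀ w, e B ≤ w := by
      intro w
      have : B ≤ e.symm w := (e.symm w).2.1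
      simpa using e.le_iff_le.2 this
    exact le_bot_iff.1 (this ⊥)
  have heT : e T = ⊤ := by
    have : ∀ w, w ≤ e T := by
      intro w
      have : e.symm w ≤ T := (e.symm w).2.2
      simpa using e.le_iff_le.2 this
    exact top_le_iff.1 (this ⊤)
  set mid : WithBot (WithTop ℤ) := ((((0 : ℤ) : WithTop ℤ)) : WithBot (WithTop ℤ)) with hmid
  have h1 : (⊥ : WithBot (WithTop ℤ)) < mid := WithBot.bot_lt_coe _
  have h2 : mid < ⊤ := by
    rw [hmid]
    have : ((⊤ : WithTop ℤ) : WithBot (WithTop ℤ)) = ⊤ := rfl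
    rw [← this]
    exact WithBot.coe_lt_coe.2 (WithTop.coe_lt_top _)
  refine ⟨(e.symm mid).1, ?_, ?_⟩
  · have : B < e.symm mid := by
      rw [← e.symm_apply_apply B, heB]
      exact e.symm.strictMono h1
    exact this
  · have : e.symm mid < T := by
      rw [← e.symm_apply_apply T, heT]
      exact e.symm.strictMono h2
    exact this

/-- second maximal neighbour -/
lemma exists_second_max (hint : IH M) (h2lev : IsTwoLevel M) {a b : M} (hab : a < b) :
    ∃ b₂ : M, b₂ ≠ b ∧ a < b₂ := by
  obtain ⟨hmin, hmax⟩ := lt_min_max h2lev hab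
  obtain ⟨q, hq1, hq2⟩ := exists_middle hint hab hmin hmax
  have haq : a ∈ q.1 := principalCut_le_iff.1 (le_of_lt hq1)
  have hbq : b ∈ upperBounds q.1 := le_principalCut_iff.1 (le_of_lt hq2)
  -- upperBounds q.1 ≠ {b}
  have hub : upperBounds q.1 ≠ {b} := by
    intro h
    apply ne_of_lt hq2
    apply Subtype.ext
    have : q.1 = lowerBounds {b} := by rw [← h, cut_eq]
    rw [this, lowerBounds_singleton]; rfl
  have : ∃ b₂ ∈ upperBounds q.1, b₂ ≠ b := by
    by_contra hcon
    push_neg at hcon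
    apply hub
    apply subset_antisymm
    · intro z hz; exact hcon z hz
    · intro z hz; rw [Set.mem_singleton_iff] at hz; rw [hz]; exact hbq
  obtain ⟨b₂, hb₂, hb₂ne⟩ := this
  refine ⟨b₂, hb₂ne, ?_⟩
  have hle : a ≤ b₂ := hb₂ haq
  apply lt_of_le_of_ne hle
  rintro rfl
  apply ne_of_lt hq1
  exact (eq_principalCut_of_mem haq hb₂).symm

/-- second minimal neighbour -/
lemma exists_second_min (hint : IH M) (h2lev : IsTwoLevel M) {a b : M} (hab : a < b) :
    ∃ a₂ : M, a₂ ≠ a ∧ a₂ < b := by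
  obtain ⟨hmin, hmax⟩ := lt_min_max h2lev hab
  obtain ⟨q, hq1, hq2⟩ := exists_middle hint hab hmin hmax
  have hbq : b ∈ upperBounds q.1 := le_principalCut_iff.1 (le_of_lt hq2)
  have hsub : ¬ q.1 ⊆ Set.Iic a := by
    intro h
    apply ne_of_lt hq1
    apply Subtype.ext
    apply subset_antisymm
    · intro z hz
      exact cut_downclosed q (principalCut_le_iff.1 (le_of_lt hq1)) hz
    · exact h
  obtain ⟨a₂, ha₂q, ha₂⟩ := Set.not_subset.1 hsub
  refine ⟨a₂, fun h => ha₂ (h ▸ le_refl a), ?_⟩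
  have hle : a₂ ≤ b := hbq ha₂q
  apply lt_of_le_of_ne hle
  rintro rfl
  apply ne_of_lt hq2
  exact eq_principalCut_of_mem ha₂q hbq

end ST
end SecC
section SecD
namespace ST
open Set

variable {M : Type*} [PartialOrder M]

/-- two covers below a non-principal cut sharing a member are equal -/
lemma cover_below_unique (hint : IH M) (h2lev : IsTwoLevel M) {q r r' : DMC M}
    (hq : q ∈ MPlus M \ principalSet M)
    (hr : r ⋖ q) (hr' : r' ⋖ q) {a b : M} (har : a ∈ r.1) (har' : a ∈ r'.1)
    (hb : b ∈ upperBounds q.1) : r = r' := by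
  have haq : a ∈ q.1 := hr.1.le har
  obtain ⟨hab, hamin, hbmax⟩ := pair_lt h2lev hq haq hb
  have hbr : b ∈ upperBounds r.1 := fun z hz => hb (hr.1.le hz)
  have hbr' : b ∈ upperBounds r'.1 := fun z hz => hb (hr'.1.le hz)
  rcases cuts_comparable hint hab hamin hbmax har har' hbr hbr' with h | h
  · rcases eq_or_lt_of_le h with h1 | h1
    · exact Subtype.ext (congrArg Subtype.val h1)
    · exact absurd hr'.1 (hr.2 h1)
  · rcases eq_or_lt_of_le h with h1 | h1
    · exact (Subtype.ext (congrArg Subtype.val h1)).symm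
    · exact absurd hr.1 (hr'.2 h1)

/-- two covers above a non-principal cut below a common upper bound are equal -/
lemma cover_above_unique (hint : IH M) (h2lev : IsTwoLevel M) {q s s' : DMC M}
    (hq : q ∈ MPlus M \ principalSet M)
    (hs : q ⋖ s) (hs' : q ⋖ s') {b : M}
    (hb : b ∈ upperBounds s.1) (hb' : b ∈ upperBounds s'.1) : s = s' := by
  obtain ⟨a, haq⟩ := cut_nonempty q
  have hbq : b ∈ upperBounds q.1 := fun z hz => hb (hs.1.le hz)
  obtain ⟨hab, hamin, hbmax⟩ := pair_lt h2lev hq haq hbq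
  have has : a ∈ s.1 := hs.1.le haq
  have has' : a ∈ s'.1 := hs'.1.le haq
  rcases cuts_comparable hint hab hamin hbmax has has' hb hb' with h | h
  · rcases eq_or_lt_of_le h with h1 | h1
    · exact Subtype.ext (congrArg Subtype.val h1)
    · exact absurd h1 (hs'.2 hs.1)
  · rcases eq_or_lt_of_le h with h1 | h1
    · exact (Subtype.ext (congrArg Subtype.val h1)).symm
    · exact absurd h1 (hs.2 hs'.1)

/-- the branch vertex of a `Y` is the intersection of the principal cuts of the two
upper-bound anchors -/
lemma meet_eq (hint : IH M) (h2lev : IsTwoLevel M) {q r r' : DMC M}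
    (hq : q ∈ MPlus M \ principalSet M)
    (hrm : r ∈ MPlus M \ principalSet M) (hrm' : r' ∈ MPlus M \ principalSet M)
    (hr : q ⋖ r) (hr' : q ⋖ r') (hne : r ≠ r')
    {a b b' : M} (haq : a ∈ q.1) (hb : b ∈ upperBounds r.1) (hb' : b' ∈ upperBounds r'.1) :
    q.1 = Set.Iic b ∩ Set.Iic b' ∧ b ≠ b' := by
  have har : a ∈ r.1 := hr.1.le haq
  have har' : a ∈ r'.1 := hr'.1.le haq
  obtain ⟨hab, hamin, hbmax⟩ := pair_lt h2lev hrm har hb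
  obtain ⟨hab', hamin', hbmax'⟩ := pair_lt h2lev hrm' har' hb'
  have hbb' : b ≠ b' := by
    rintro rfl
    exact hne (cover_above_unique hint h2lev hq hr hr' hb hb')
  set K : DMC M := ⟨Set.Iic b ∩ Set.Iic b',
    isCut_inter_Iic ⟨a, le_of_lt hab, le_of_lt hab'⟩⟩ with hK
  have hqK : q ≤ K := by
    intro z hz
    exact ⟨hb (hr.1.le hz), hb' (hr'.1.le hz)⟩
  have haK : a ∈ K.1 := ⟨le_of_lt hab, le_of_lt hab'⟩
  have hbK : b ∈ upperBounds K.1 := fun z hz => hz.1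
  have hb'K : b' ∈ upperBounds K.1 := fun z hz => hz.2
  refine ⟨?_, hbb'⟩
  by_contra hcon
  have hKq : q < K := lt_of_le_of_ne hqK (fun h => hcon (congrArg Subtype.val h))
  have hrK : r ≤ K := by
    rcases cuts_comparable hint hab hamin hbmax har haK hb hbK with h | h
    · exact h
    · rcases eq_or_lt_of_le h with h1 | h1
      · exact le_of_eq h1.symm
      · exact absurd h1 (hr.2 hKq)
  have hrK' : r' ≤ K := by
    rcases cuts_comparable hint hab' hamin' hbmax' har' haK hb' hb'K with h | h
    · exact h
    · rcases eq_or_lt_of_le h with h1 | h1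
      · exact le_of_eq h1.symm
      · exact absurd h1 (hr'.2 hKq)
  exact hne (cover_above_unique hint h2lev hq hr hr' hb
    (fun z hz => (hrK' hz).1))

/-- the branch vertex of a `Ȳ` is the cut generated by the two member anchors -/
lemma join_eq (hint : IH M) (h2lev : IsTwoLevel M) {q r r' : DMC M}
    (hq : q ∈ MPlus M \ principalSet M)
    (hr : r ⋖ q) (hr' : r' ⋖ q) (hne : r ≠ r')
    {a a' b : M} (ha : a ∈ r.1) (ha' : a' ∈ r'.1) (hb : b ∈ upperBounds q.1) :
    q.1 = lowerBounds (upperBounds {a, a'}) ∧ a ≠ a' := by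
  have haq : a ∈ q.1 := hr.1.le ha
  have ha'q : a' ∈ q.1 := hr'.1.le ha'
  obtain ⟨hab, hamin, hbmax⟩ := pair_lt h2lev hq haq hb
  obtain ⟨hab', hamin', hbmax'⟩ := pair_lt h2lev hq ha'q hb
  have haa' : a ≠ a' := by
    rintro rfl
    exact hne (cover_below_unique hint h2lev hq hr hr' ha ha' hb)
  have hbpair : b ∈ upperBounds ({a, a'} : Set M) := by
    intro z hz
    rcases hz with rfl | hz
    · exact le_of_lt hab
    · rw [Set.mem_singleton_iff] at hz; rw [hz]; exact le_of_lt hab'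
  set L : DMC M := ⟨lowerBounds (upperBounds {a, a'}),
    isCut_cl ⟨a, Set.mem_insert _ _⟩ ⟨b, hbpair⟩⟩ with hL
  have hLq : L ≤ q := by
    intro z hz
    rw [← cut_eq q]
    intro w hw
    apply hz
    intro u hu
    rcases hu with rfl | hu
    · exact hw haq
    · rw [Set.mem_singleton_iff] at hu; rw [hu]; exact hw ha'q
  have haL : a ∈ L.1 := fun w hw => hw (Set.mem_insert _ _)
  have ha'L : a' ∈ L.1 := fun w hw => hw (Set.mem_insert_of_mem _ rfl)
  have hbL : b ∈ upperBounds L.1 := fun z hz => hb (hLq hz)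
  refine ⟨?_, haa'⟩
  by_contra hcon
  have hLq' : L < q := lt_of_le_of_ne hLq (fun h => hcon (congrArg Subtype.val h).symm)
  have hbr : b ∈ upperBounds r.1 := fun z hz => hb (hr.1.le hz)
  have hbr' : b ∈ upperBounds r'.1 := fun z hz => hb (hr'.1.le hz)
  have hLr : L ≤ r := by
    rcases cuts_comparable hint hab hamin hbmax ha haL hbr hbL with h | h
    · rcases eq_or_lt_of_le h with h1 | h1
      · exact le_of_eq h1.symm
      · exact absurd hLq' (hr.2 h1)
    · exact h
  have hLr' : L ≤ r' := by
    rcases cuts_comparable hint hab' hamin' hbmax' ha' ha'L hbr' hbL with h | h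
    · rcases eq_or_lt_of_le h with h1 | h1
      · exact le_of_eq h1.symm
      · exact absurd hLq' (hr'.2 h1)
    · exact h
  exact hne (cover_below_unique hint h2lev hq hr hr' ha (hLr' haL) hb)

end ST
end SecD
section SecE
namespace ST
open Set

variable {M : Type*} [PartialOrder M]

lemma not_isMax_of_lt {a b : M} (h : a < b) : ¬ IsMax a :=
  fun hmax => absurd (hmax h.le) (not_le_of_gt h)

lemma adj_dichot (h2lev : IsTwoLevel M) {u w : M} (h : (compGraph M).Adj u w) :
    IsMax u ↔ ¬ IsMax w := by
  rcases h with h | h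
  · exact iff_of_false (not_isMax_of_lt h) (not_not_intro (lt_min_max h2lev h).2)
  · exact iff_of_true (lt_min_max h2lev h).2 (not_isMax_of_lt h)

lemma walk_parity (h2lev : IsTwoLevel M) {u v : M} (p : (compGraph M).Walk u v) :
    (IsMax u ↔ IsMax v) ↔ Even p.length := by
  induction p with
  | nil => simp
  | cons h q ih =>
      rw [SimpleGraph.Walk.length_cons, Nat.even_add_one, ← ih]
      have hd := adj_dichot h2lev h
      tauto

lemma classPres (h2lev : IsTwoLevel M) (hconn : (compGraph M).Connected)
    (g : compGraph M ≃g compGraph M) {m : M}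
    (hm : IsMax m) (hgm : IsMax (g m)) {z : M} (hz : IsMax z) : IsMax (g z) := by
  obtain ⟨p⟩ := hconn.preconnected m z
  have h1 := walk_parity h2lev p
  have h2 : (IsMax (g m) ↔ IsMax (g z)) ↔ Even (p.map g.toHom).length :=
    walk_parity h2lev (p.map g.toHom)
  rw [SimpleGraph.Walk.length_map] at h2
  tauto

lemma iso_lt (h2lev : IsTwoLevel M) (hconn : (compGraph M).Connected)
    (g : compGraph M ≃g compGraph M) {m : M}
    (hm : IsMax m) (hgm : IsMax (g m)) {u v : M} (huv : u < v) : g u < g v := by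
  have hadj : (compGraph M).Adj u v := Or.inl huv
  have hadj' : (compGraph M).Adj (g u) (g v) := g.map_adj_iff.2 hadj
  have hgvmax : IsMax (g v) := classPres h2lev hconn g hm hgm (lt_min_max h2lev huv).2
  rcases hadj' with h | h
  · exact h
  · exact absurd (hgvmax h.le) (not_le_of_gt h)

/-- upgrade a graph automorphism with a max-anchor to an order automorphism -/
noncomputable def toOrderIso (h2lev : IsTwoLevel M) (hconn : (compGraph M).Connected)
    (g : compGraph M ≃g compGraph M) {m : M}
    (hm : IsMax m) (hgm : IsMax (g m)) : M ≃o M where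
  toEquiv := g.toEquiv
  map_rel_iff' := by
    intro u v
    have hgm' : IsMax (g.symm (g m)) := by simpa using hm
    constructor
    · intro h
      rcases eq_or_lt_of_le h with h1 | h1
      · exact le_of_eq (g.toEquiv.injective h1)
      · have := iso_lt h2lev hconn g.symm hgm hgm' h1
        simpa using this.le
    · intro h
      rcases eq_or_lt_of_le h with h1 | h1
      · exact le_of_eq (congrArg _ h1)
      · exact (iso_lt h2lev hconn g hm hgm h1).le

@[simp] lemma toOrderIso_apply (h2lev : IsTwoLevel M) (hconn : (compGraph M).Connected)
    (g : compGraph M ≃g compGraph M) {m : M}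
    (hm : IsMax m) (hgm : IsMax (g m)) (x : M) :
    toOrderIso h2lev hconn g hm hgm x = g x := rfl

lemma orderIso_isMax (σ : M ≃o M) {z : M} (hz : IsMax z) : IsMax (σ z) := by
  intro w hw
  have h1 : z ≤ σ.symm w := by
    rw [← σ.symm_apply_apply z]
    exact σ.symm.monotone hw
  have h2 : σ.symm w ≤ z := hz h1
  calc w = σ (σ.symm w) := (σ.apply_symm_apply w).symm
    _ ≤ σ z := σ.monotone h2

lemma orderIso_adj (σ : M ≃o M) {u v : M} (h : (compGraph M).Adj u v) :
    (compGraph M).Adj (σ u) (σ v) := by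
  rcases h with h | h
  · exact Or.inl (σ.strictMono h)
  · exact Or.inr (σ.strictMono h)

lemma exists_other_nbr (hint : IH M) (h2lev : IsTwoLevel M) {p q : M}
    (h : (compGraph M).Adj p q) :
    ∃ z, (compGraph M).Adj q z ∧ z ≠ p := by
  rcases h with h | h
  · obtain ⟨a₂, ha₂, hlt⟩ := exists_second_min hint h2lev h
    exact ⟨a₂, Or.inr hlt, ha₂⟩
  · obtain ⟨b₂, hb₂, hlt⟩ := exists_second_max hint h2lev h
    exact ⟨b₂, Or.inl hlt, hb₂⟩

lemma stab_trans (hint : IH M) (h2lev : IsTwoLevel M) (hconn : (compGraph M).Connected)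
    (h2arc : LocallyTwoArcTransitive (compGraph M)) {m u w : M}
    (h1 : (compGraph M).Adj m u) (h2 : (compGraph M).Adj m w) :
    ∃ σ : M ≃o M, σ m = m ∧ σ u = w := by
  obtain ⟨z, hz, hzm⟩ := exists_other_nbr hint h2lev h1
  obtain ⟨z', hz', hz'm⟩ := exists_other_nbr hint h2lev h2
  obtain ⟨g, hgm, hgu, hgz⟩ := h2arc m u z w z' ⟨h1, hz, fun he => hzm he.symm⟩
    ⟨h2, hz', fun he => hz'm he.symm⟩
  -- find an anchor
  rcases h1 with hlt1 | hlt1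
  · -- m < u, so u is max; then m < w also (else contradiction)
    have humax : IsMax u := (lt_min_max h2lev hlt1).2
    have hwmax : IsMax w := by
      rcases h2 with hlt2 | hlt2
      · exact (lt_min_max h2lev hlt2).2
      · exact absurd (lt_min_max h2lev hlt2).2 (not_isMax_of_lt hlt1)
    have hgu' : IsMax (g u) := by rw [hgu]; exact hwmax
    exact ⟨toOrderIso h2lev hconn g humax hgu', by simpa using hgm, by simpa using hgu⟩
  · -- u < m : m is max
    have hmmax : IsMax m := (lt_min_max h2lev hlt1).2
    have hgm' : IsMax (g m) := by rw [hgm]; exact hmmax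
    exact ⟨toOrderIso h2lev hconn g hmmax hgm', by simpa using hgm, by simpa using hgu⟩

lemma vertex_trans_aux (hint : IH M) (h2lev : IsTwoLevel M)
    (hconn : (compGraph M).Connected) (h2arc : LocallyTwoArcTransitive (compGraph M)) :
    ∀ (n : ℕ) (u v : M) (p : (compGraph M).Walk u v), p.length ≤ n →
      (IsMax u ↔ IsMax v) → ∃ σ : M ≃o M, σ u = v := by
  intro n
  induction n with
  | zero =>
      intro u v p hp _
      cases p with
      | nil => exact ⟨OrderIso.refl M, rfl⟩
      | cons h q => simp at hp
  | succ n ih =>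
      intro u v p hp hclass
      cases p with
      | nil => exact ⟨OrderIso.refl M, rfl⟩
      | @cons _ a _ h q =>
          cases q with
          | nil =>
              have := adj_dichot h2lev h
              tauto
          | @cons _ u₂ _ h₂ q₂ =>
              obtain ⟨σ₁, hσa, hσu⟩ := stab_trans hint h2lev hconn h2arc h.symm h₂
              have hclass₂ : IsMax u₂ ↔ IsMax v := by
                have d1 := adj_dichot h2lev h
                have d2 := adj_dichot h2lev h₂
                tauto
              have hlen : q₂.length ≤ n := by
                simp only [SimpleGraph.Walk.length_cons] at hp
                omega
              obtain ⟨σ₂, hσ₂⟩ := ih u₂ v q₂ hlen hclass₂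
              exact ⟨σ₁.trans σ₂, by simp [OrderIso.trans_apply, hσu, hσ₂]⟩

lemma vertex_trans (hint : IH M) (h2lev : IsTwoLevel M)
    (hconn : (compGraph M).Connected) (h2arc : LocallyTwoArcTransitive (compGraph M))
    {u v : M} (hclass : IsMax u ↔ IsMax v) : ∃ σ : M ≃o M, σ u = v := by
  obtain ⟨p⟩ := hconn.preconnected u v
  exact vertex_trans_aux hint h2lev hconn h2arc p.length u v p le_rfl hclass

/-- global two-arc transitivity -/
lemma two_arc_trans (hint : IH M) (h2lev : IsTwoLevel M)
    (hconn : (compGraph M).Connected) (h2arc : LocallyTwoArcTransitive (compGraph M))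
    {v₀ v₁ v₂ w₀ w₁ w₂ : M}
    (h : IsTwoArc (compGraph M) v₀ v₁ v₂) (h' : IsTwoArc (compGraph M) w₀ w₁ w₂)
    (hclass : IsMax v₀ ↔ IsMax w₀) :
    ∃ σ : M ≃o M, σ v₀ = w₀ ∧ σ v₁ = w₁ ∧ σ v₂ = w₂ := by
  obtain ⟨σ₁, hσ₁⟩ := vertex_trans hint h2lev hconn h2arc hclass
  have harc : IsTwoArc (compGraph M) w₀ (σ₁ v₁) (σ₁ v₂) := by
    refine ⟨?_, orderIso_adj σ₁ h.2.1, ?_⟩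
    · rw [← hσ₁]; exact orderIso_adj σ₁ h.1
    · rw [← hσ₁]
      intro he
      exact h.2.2 (σ₁.injective he)
  obtain ⟨g, hg0, hg1, hg2⟩ := h2arc w₀ (σ₁ v₁) (σ₁ v₂) w₁ w₂ harc h'
  by_cases hw₀ : IsMax w₀
  · have hgw : IsMax (g w₀) := by rw [hg0]; exact hw₀
    refine ⟨σ₁.trans (toOrderIso h2lev hconn g hw₀ hgw), ?_, ?_, ?_⟩ <;>
      simp [OrderIso.trans_apply, hσ₁, hg0, hg1, hg2]
  · -- anchor at the centre
    have hv₁max : IsMax (σ₁ v₁) := by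
      apply orderIso_isMax
      have d := adj_dichot h2lev h.1
      have : ¬ IsMax v₀ := fun hh => hw₀ (hclass.1 hh)
      tauto
    have hgv₁ : IsMax (g (σ₁ v₁)) := by
      rw [hg1]
      have d := adj_dichot h2lev h'.1
      tauto
    refine ⟨σ₁.trans (toOrderIso h2lev hconn g hv₁max hgv₁), ?_, ?_, ?_⟩ <;>
      simp [OrderIso.trans_apply, hσ₁, hg0, hg1, hg2]

end ST
end SecE
section SecF
namespace ST
open Set

variable {M : Type*} [PartialOrder M]

/-- generic digraph automorphism operations -/
def DigraphAut.trans {V : Type*} {E : V → V → Prop} (g h : DigraphAut E) : DigraphAut E :=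
  ⟨g.1.trans h.1, fun u v => by
    simp only [Equiv.trans_apply]
    rw [h.2, g.2]⟩

def DigraphAut.symm {V : Type*} {E : V → V → Prop} (g : DigraphAut E) : DigraphAut E :=
  ⟨g.1.symm, fun u v => by
    conv_rhs => rw [← g.1.apply_symm_apply u, ← g.1.apply_symm_apply v, g.2]⟩

def cutMap (σ : M ≃o M) (q : DMC M) : DMC M :=
  ⟨σ '' q.1, by
    obtain ⟨h1, h2, h3⟩ := q.2
    refine ⟨h1.image σ, ?_, ?_⟩
    · rw [OrderIso.upperBounds_image]
      exact h2.image σ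
    · rw [OrderIso.upperBounds_image, OrderIso.lowerBounds_image]
      rw [h3]⟩

@[simp] lemma cutMap_val (σ : M ≃o M) (q : DMC M) : (cutMap σ q).1 = σ '' q.1 := rfl

def cutIso (σ : M ≃o M) : DMC M ≃o DMC M where
  toFun := cutMap σ
  invFun := cutMap σ.symm
  left_inv := fun q => Subtype.ext (by
    simp only [cutMap_val]
    rw [← Set.image_comp]
    simp)
  right_inv := fun q => Subtype.ext (by
    simp only [cutMap_val]
    rw [← Set.image_comp]
    simp)
  map_rel_iff' := by
    intro q r
    show σ '' q.1 ⊆ σ '' r.1 ↔ q ≤ r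
    exact Set.image_subset_image_iff σ.injective

@[simp] lemma cutIso_val (σ : M ≃o M) (q : DMC M) : (cutIso σ q).1 = σ '' q.1 := rfl

lemma cutIso_principal (σ : M ≃o M) (a : M) :
    cutIso σ (principalCut a) = principalCut (σ a) := by
  apply Subtype.ext
  show σ '' Set.Iic a = Set.Iic (σ a)
  exact OrderIso.image_Iic σ a

lemma cutIso_symm_cancel (σ : M ≃o M) (q : DMC M) : cutIso σ.symm (cutIso σ q) = q :=
  (cutIso σ).left_inv q

lemma mem_principalSet_map (σ : M ≃o M) {q : DMC M} (h : q ∈ principalSet M) :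
    cutIso σ q ∈ principalSet M := by
  obtain ⟨a, ha⟩ := h
  exact ⟨σ a, by rw [← ha, cutIso_principal]⟩

lemma mem_upRam_map (σ : M ≃o M) {q : DMC M} (h : q ∈ upRam M) :
    cutIso σ q ∈ upRam M := by
  obtain ⟨a, b, h1, h2, hglb⟩ := h
  refine ⟨σ a, σ b, fun hle => h1 (σ.le_iff_le.1 hle), fun hle => h2 (σ.le_iff_le.1 hle), ?_⟩
  have : ({principalCut (σ a), principalCut (σ b)} : Set (DMC M)) =
      (cutIso σ) '' {principalCut a, principalCut b} := by
    rw [Set.image_pair, cutIso_principal, cutIso_principal]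
  rw [this]
  exact (OrderIso.isGLB_image' (cutIso σ)).2 hglb

lemma mem_downRam_map (σ : M ≃o M) {q : DMC M} (h : q ∈ downRam M) :
    cutIso σ q ∈ downRam M := by
  obtain ⟨a, b, h1, h2, hlub⟩ := h
  refine ⟨σ a, σ b, fun hle => h1 (σ.le_iff_le.1 hle), fun hle => h2 (σ.le_iff_le.1 hle), ?_⟩
  have : ({principalCut (σ a), principalCut (σ b)} : Set (DMC M)) =
      (cutIso σ) '' {principalCut a, principalCut b} := by
    rw [Set.image_pair, cutIso_principal, cutIso_principal]
  rw [this]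
  exact (OrderIso.isLUB_image' (cutIso σ)).2 hlub

lemma mem_V_iff (σ : M ≃o M) (q : DMC M) :
    q ∈ MPlus M \ principalSet M ↔ cutIso σ q ∈ MPlus M \ principalSet M := by
  constructor
  · rintro ⟨hp, hnp⟩
    refine ⟨?_, ?_⟩
    · rcases hp with (hp | hp) | hp
      · exact Or.inl (Or.inl (mem_principalSet_map σ hp))
      · exact Or.inl (Or.inr (mem_upRam_map σ hp))
      · exact Or.inr (mem_downRam_map σ hp)
    · intro hc
      apply hnp
      have := mem_principalSet_map σ.symm hc
      rwa [cutIso_symm_cancel] at this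
  · rintro ⟨hp, hnp⟩
    refine ⟨?_, fun hc => hnp (mem_principalSet_map σ hc)⟩
    rcases hp with (hp | hp) | hp
    · have := mem_principalSet_map σ.symm hp
      rw [cutIso_symm_cancel] at this
      exact Or.inl (Or.inl this)
    · have := mem_upRam_map σ.symm hp
      rw [cutIso_symm_cancel] at this
      exact Or.inl (Or.inr this)
    · have := mem_downRam_map σ.symm hp
      rw [cutIso_symm_cancel] at this
      exact Or.inr this

/-- the digraph automorphism induced by an order automorphism of `M` -/
def DAut (σ : M ≃o M) : DigraphAut (coverDigraph M) :=
  ⟨Equiv.subtypeEquiv (cutIso σ).toEquiv (fun q => mem_V_iff σ q), by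
    intro p q
    show (cutIso σ q.1) ⋖ (cutIso σ p.1) ↔ q.1 ⋖ p.1
    exact apply_covBy_apply_iff (cutIso σ)⟩

@[simp] lemma DAut_apply_val (σ : M ≃o M) (v : ↥(MPlus M \ principalSet M)) :
    (((DAut σ).1 v : DMC M)) = cutIso σ v.1 := rfl

end ST
end SecF
section SecG
namespace ST
open Set

variable {M : Type*} [PartialOrder M]

lemma line_le {x : ℤ → ↥(MPlus M \ principalSet M)}
    (hx : ∀ i, coverDigraph M (x i) (x (i + 1))) {i j : ℤ} (hij : i ≤ j) :
    (x j).1 ≤ (x i).1 := by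
  exact Int.le_induction (motive := fun j _ => (x j).1 ≤ (x i).1) (le_refl _)
    (fun j _ ih => le_trans (hx j).le ih) j hij

/-- the per-window automorphism for `Y`-configurations -/
lemma windowY (hint : IH M) (h2lev : IsTwoLevel M) (hconn : (compGraph M).Connected)
    (h2arc : LocallyTwoArcTransitive (compGraph M))
    {x y x' y' : ℤ → ↥(MPlus M \ principalSet M)}
    (hxy : IsYConfig (coverDigraph M) x y) (hxy' : IsYConfig (coverDigraph M) x' y')
    (n : ℕ) :
    ∃ g : DigraphAut (coverDigraph M),
      ∀ i : ℤ, |i| ≤ (n : ℤ) → g.1 (x i) = x' i ∧ g.1 (y i) = y' i := by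
  obtain ⟨hx, hy, hiff⟩ := hxy
  obtain ⟨hx', hy', hiff'⟩ := hxy'
  set m : ℤ := (n : ℤ) + 1 with hm
  -- anchors
  obtain ⟨a, ha⟩ := cut_nonempty (x m).1
  obtain ⟨b, hb⟩ := cut_bddAbove (x (-m)).1
  obtain ⟨b', hb'⟩ := cut_bddAbove (y (-m)).1
  obtain ⟨a2, ha2⟩ := cut_nonempty (x' m).1
  obtain ⟨b2, hb2⟩ := cut_bddAbove (x' (-m)).1
  obtain ⟨b2', hb2'⟩ := cut_bddAbove (y' (-m)).1
  -- membership facts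
  have hax : ∀ i : ℤ, i ≤ m → a ∈ (x i).1.1 := fun i hi => line_le hx.2 hi ha
  have hbx : ∀ i : ℤ, -m ≤ i → b ∈ upperBounds (x i).1.1 :=
    fun i hi z hz => hb (line_le hx.2 hi hz)
  have hxy0 : x 0 = y 0 := (hiff 0).2 le_rfl
  have hxy0' : x' 0 = y' 0 := (hiff' 0).2 le_rfl
  have hay : ∀ i : ℤ, i ≤ 0 → a ∈ (y i).1.1 := by
    intro i hi
    have h0 : a ∈ (y 0).1.1 := by rw [← hxy0]; exact hax 0 (by omega)
    exact line_le hy.2 hi h0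
  have hb'y : ∀ i : ℤ, -m ≤ i → b' ∈ upperBounds (y i).1.1 :=
    fun i hi z hz => hb' (line_le hy.2 hi hz)
  have hax' : ∀ i : ℤ, i ≤ m → a2 ∈ (x' i).1.1 := fun i hi => line_le hx'.2 hi ha2
  have hbx' : ∀ i : ℤ, -m ≤ i → b2 ∈ upperBounds (x' i).1.1 :=
    fun i hi z hz => hb2 (line_le hx'.2 hi hz)
  have hay' : ∀ i : ℤ, i ≤ 0 → a2 ∈ (y' i).1.1 := by
    intro i hi
    have h0 : a2 ∈ (y' 0).1.1 := by rw [← hxy0']; exact hax' 0 (by omega)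
    exact line_le hy'.2 hi h0
  have hb'y' : ∀ i : ℤ, -m ≤ i → b2' ∈ upperBounds (y' i).1.1 :=
    fun i hi z hz => hb2' (line_le hy'.2 hi hz)
  -- split covers
  have covx0 : (x 0).1 ⋖ (x (-1)).1 := by
    have h := hx.2 (-1)
    rw [show (-1 : ℤ) + 1 = 0 by ring] at h
    exact h
  have covy0 : (x 0).1 ⋖ (y (-1)).1 := by
    have h := hy.2 (-1)
    rw [show (-1 : ℤ) + 1 = 0 by ring, ← hxy0] at h
    exact h
  have covx0' : (x' 0).1 ⋖ (x' (-1)).1 := by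
    have h := hx'.2 (-1)
    rw [show (-1 : ℤ) + 1 = 0 by ring] at h
    exact h
  have covy0' : (x' 0).1 ⋖ (y' (-1)).1 := by
    have h := hy'.2 (-1)
    rw [show (-1 : ℤ) + 1 = 0 by ring, ← hxy0'] at h
    exact h
  have hne : (x (-1)).1 ≠ (y (-1)).1 := by
    intro h
    have : x (-1) = y (-1) := Subtype.ext h
    have := (hiff (-1)).1 this
    omega
  have hne' : (x' (-1)).1 ≠ (y' (-1)).1 := by
    intro h
    have : x' (-1) = y' (-1) := Subtype.ext h
    have := (hiff' (-1)).1 this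
    omega
  -- the meet identification
  obtain ⟨hmeet, hbb'⟩ := meet_eq hint h2lev (x 0).2 (x (-1)).2 (y (-1)).2
    covx0 covy0 hne (hax 0 (by omega)) (hbx (-1) (by omega)) (hb'y (-1) (by omega))
  obtain ⟨hmeet', hbb2'⟩ := meet_eq hint h2lev (x' 0).2 (x' (-1)).2 (y' (-1)).2
    covx0' covy0' hne' (hax' 0 (by omega)) (hbx' (-1) (by omega)) (hb'y' (-1) (by omega))
  -- strict pairs
  obtain ⟨hab, hamin, hbmax⟩ := pair_lt h2lev (x (-m)).2 (hax (-m) (by omega)) (hbx (-m) (by omega))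
  obtain ⟨hab', _, hb'max⟩ := pair_lt h2lev (y (-m)).2 (hay (-m) (by omega)) (hb'y (-m) (by omega))
  obtain ⟨hab2, _, hb2max⟩ := pair_lt h2lev (x' (-m)).2 (hax' (-m) (by omega)) (hbx' (-m) (by omega))
  obtain ⟨hab2', _, hb2'max⟩ := pair_lt h2lev (y' (-m)).2 (hay' (-m) (by omega)) (hb'y' (-m) (by omega))
  -- automorphism of M
  obtain ⟨σ, hσb, hσa, hσb'⟩ := two_arc_trans hint h2lev hconn h2arc
    (⟨Or.inr hab, Or.inl hab', hbb'⟩ : IsTwoArc (compGraph M) b a b')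
    (⟨Or.inr hab2, Or.inl hab2', hbb2'⟩ : IsTwoArc (compGraph M) b2 a2 b2')
    (iff_of_true hbmax hb2max)
  -- base identity
  have base : cutIso σ (x 0).1 = (x' 0).1 := by
    apply Subtype.ext
    show σ '' (x 0).1.1 = (x' 0).1.1
    rw [hmeet, hmeet', Set.image_inter σ.injective, OrderIso.image_Iic, OrderIso.image_Iic,
      hσb, hσb']
  -- downward induction
  have down : ∀ k : ℕ, (k : ℤ) ≤ m → cutIso σ (x (k : ℤ)).1 = (x' (k : ℤ)).1 := by
    intro k
    induction k with
    | zero => intro _; exact_mod_cast base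
    | succ k ih =>
        intro hk
        have hk' : (k : ℤ) ≤ m := by push_cast at hk ⊢; omega
        have ihk := ih hk'
        have covk : (x ((k : ℤ) + 1)).1 ⋖ (x (k : ℤ)).1 := hx.2 (k : ℤ)
        have covk' : (x' ((k : ℤ) + 1)).1 ⋖ (x' (k : ℤ)).1 := hx'.2 (k : ℤ)
        have hcast : ((k + 1 : ℕ) : ℤ) = (k : ℤ) + 1 := by push_cast; ring
        rw [hcast]
        apply cover_below_unique hint h2lev (x' (k : ℤ)).2
          (r := cutIso σ (x ((k : ℤ) + 1)).1) (r' := (x' ((k : ℤ) + 1)).1)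
          (a := a2) (b := b2)
        · rw [← ihk]
          exact (apply_covBy_apply_iff (cutIso σ)).2 covk
        · exact covk'
        · exact ⟨a, hax ((k : ℤ) + 1) (by omega), hσa⟩
        · exact hax' ((k : ℤ) + 1) (by omega)
        · exact hbx' (k : ℤ) (by omega)
  -- upward induction, x branch
  have upx : ∀ k : ℕ, (k : ℤ) ≤ m → cutIso σ (x (-(k : ℤ))).1 = (x' (-(k : ℤ))).1 := by
    intro k
    induction k with
    | zero => intro _; simpa using base
    | succ k ih =>
        intro hk
        have hk' : (k : ℤ) ≤ m := by push_cast at hk ⊢; omega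
        have ihk := ih hk'
        have covk : (x (-(k : ℤ))).1 ⋖ (x (-((k : ℤ) + 1))).1 := by
          have h := hx.2 (-((k : ℤ) + 1))
          rw [show -((k : ℤ) + 1) + 1 = -(k : ℤ) by ring] at h
          exact h
        have covk' : (x' (-(k : ℤ))).1 ⋖ (x' (-((k : ℤ) + 1))).1 := by
          have h := hx'.2 (-((k : ℤ) + 1))
          rw [show -((k : ℤ) + 1) + 1 = -(k : ℤ) by ring] at h
          exact h
        have hcast : -((k + 1 : ℕ) : ℤ) = -((k : ℤ) + 1) := by push_cast; ring
        rw [hcast]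
        apply cover_above_unique hint h2lev (x' (-(k : ℤ))).2
          (s := cutIso σ (x (-((k : ℤ) + 1))).1) (s' := (x' (-((k : ℤ) + 1))).1) (b := b2)
        · rw [← ihk]
          exact (apply_covBy_apply_iff (cutIso σ)).2 covk
        · exact covk'
        · rintro z ⟨w, hw, rfl⟩
          rw [← hσb]
          exact σ.monotone (hbx (-((k : ℤ) + 1)) (by omega) hw)
        · exact hbx' (-((k : ℤ) + 1)) (by omega)
  -- upward induction, y branch
  have upy : ∀ k : ℕ, (k : ℤ) ≤ m → cutIso σ (y (-(k : ℤ))).1 = (y' (-(k : ℤ))).1 := by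
    intro k
    induction k with
    | zero =>
        intro _
        simp only [Nat.cast_zero, neg_zero]
        rw [← hxy0, ← hxy0']
        exact base
    | succ k ih =>
        intro hk
        have hk' : (k : ℤ) ≤ m := by push_cast at hk ⊢; omega
        have ihk := ih hk'
        have covk : (y (-(k : ℤ))).1 ⋖ (y (-((k : ℤ) + 1))).1 := by
          have h := hy.2 (-((k : ℤ) + 1))
          rw [show -((k : ℤ) + 1) + 1 = -(k : ℤ) by ring] at h
          exact h
        have covk' : (y' (-(k : ℤ))).1 ⋖ (y' (-((k : ℤ) + 1))).1 := by
          have h := hy'.2 (-((k : ℤ) + 1))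
          rw [show -((k : ℤ) + 1) + 1 = -(k : ℤ) by ring] at h
          exact h
        have hcast : -((k + 1 : ℕ) : ℤ) = -((k : ℤ) + 1) := by push_cast; ring
        rw [hcast]
        apply cover_above_unique hint h2lev (y' (-(k : ℤ))).2
          (s := cutIso σ (y (-((k : ℤ) + 1))).1) (s' := (y' (-((k : ℤ) + 1))).1) (b := b2')
        · rw [← ihk]
          exact (apply_covBy_apply_iff (cutIso σ)).2 covk
        · exact covk'
        · rintro z ⟨w, hw, rfl⟩
          rw [← hσb']
          exact σ.monotone (hb'y (-((k : ℤ) + 1)) (by omega) hw)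
        · exact hb'y' (-((k : ℤ) + 1)) (by omega)
  -- assemble
  refine ⟨DAut σ, ?_⟩
  intro i hi
  rw [abs_le] at hi
  have key : ∀ j : ℤ, -m ≤ j → j ≤ m → (DAut σ).1 (x j) = x' j := by
    intro j hj1 hj2
    apply Subtype.ext
    show cutIso σ (x j).1 = (x' j).1
    rcases le_or_gt 0 j with hj | hj
    · have : j = ((j.toNat : ℕ) : ℤ) := (Int.toNat_of_nonneg hj).symm
      rw [this]
      exact down j.toNat (by omega)
    · have : j = -(((-j).toNat : ℕ) : ℤ) := by
        have := Int.toNat_of_nonneg (by omega : (0:ℤ) ≤ -j)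
        omega
      rw [this]
      exact upx (-j).toNat (by omega)
  have keyy : ∀ j : ℤ, -m ≤ j → j ≤ 0 → (DAut σ).1 (y j) = y' j := by
    intro j hj1 hj2
    apply Subtype.ext
    show cutIso σ (y j).1 = (y' j).1
    have : j = -(((-j).toNat : ℕ) : ℤ) := by
      have := Int.toNat_of_nonneg (by omega : (0:ℤ) ≤ -j)
      omega
    rw [this]
    exact upy (-j).toNat (by omega)
  constructor
  · exact key i (by omega) (by omega)
  · rcases le_or_gt i 0 with h0 | h0
    · exact keyy i (by omega) h0
    · have h1 : y i = x i := ((hiff i).2 (by omega)).symm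
      have h2 : y' i = x' i := ((hiff' i).2 (by omega)).symm
      rw [h1, h2]
      exact key i (by omega) (by omega)

end ST
end SecG
section SecG2
namespace ST
open Set

variable {M : Type*} [PartialOrder M]

/-- the per-window automorphism for `Ȳ`-configurations -/
lemma windowYbar (hint : IH M) (h2lev : IsTwoLevel M) (hconn : (compGraph M).Connected)
    (h2arc : LocallyTwoArcTransitive (compGraph M))
    {x y x' y' : ℤ → ↥(MPlus M \ principalSet M)}
    (hxy : IsYBarConfig (coverDigraph M) x y) (hxy' : IsYBarConfig (coverDigraph M) x' y')
    (n : ℕ) :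
    ∃ g : DigraphAut (coverDigraph M),
      ∀ i : ℤ, |i| ≤ (n : ℤ) → g.1 (x i) = x' i ∧ g.1 (y i) = y' i := by
  obtain ⟨hx, hy, hiff⟩ := hxy
  obtain ⟨hx', hy', hiff'⟩ := hxy'
  set m : ℤ := (n : ℤ) + 1 with hm
  obtain ⟨a, ha⟩ := cut_nonempty (x m).1
  obtain ⟨a', ha'⟩ := cut_nonempty (y m).1
  obtain ⟨b, hb⟩ := cut_bddAbove (x (-m)).1
  obtain ⟨a2, ha2⟩ := cut_nonempty (x' m).1
  obtain ⟨a2', ha2'⟩ := cut_nonempty (y' m).1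
  obtain ⟨b2, hb2⟩ := cut_bddAbove (x' (-m)).1
  have hxy0 : x 0 = y 0 := (hiff 0).2 le_rfl
  have hxy0' : x' 0 = y' 0 := (hiff' 0).2 le_rfl
  have hxym : x (-m) = y (-m) := (hiff (-m)).2 (by omega)
  have hxym' : x' (-m) = y' (-m) := (hiff' (-m)).2 (by omega)
  have hax : ∀ i : ℤ, i ≤ m → a ∈ (x i).1.1 := fun i hi => line_le hx.2 hi ha
  have ha'y : ∀ i : ℤ, i ≤ m → a' ∈ (y i).1.1 := fun i hi => line_le hy.2 hi ha'
  have hbx : ∀ i : ℤ, -m ≤ i → b ∈ upperBounds (x i).1.1 :=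
    fun i hi z hz => hb (line_le hx.2 hi hz)
  have hby : ∀ i : ℤ, -m ≤ i → b ∈ upperBounds (y i).1.1 := by
    intro i hi z hz
    have : (y i).1 ≤ (y (-m)).1 := line_le hy.2 hi
    rw [← hxym] at this
    exact hb (this hz)
  have hax' : ∀ i : ℤ, i ≤ m → a2 ∈ (x' i).1.1 := fun i hi => line_le hx'.2 hi ha2
  have ha'y' : ∀ i : ℤ, i ≤ m → a2' ∈ (y' i).1.1 := fun i hi => line_le hy'.2 hi ha2'
  have hbx' : ∀ i : ℤ, -m ≤ i → b2 ∈ upperBounds (x' i).1.1 :=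
    fun i hi z hz => hb2 (line_le hx'.2 hi hz)
  have hby' : ∀ i : ℤ, -m ≤ i → b2 ∈ upperBounds (y' i).1.1 := by
    intro i hi z hz
    have : (y' i).1 ≤ (y' (-m)).1 := line_le hy'.2 hi
    rw [← hxym'] at this
    exact hb2 (this hz)
  -- split covers (downward)
  have covx1 : (x 1).1 ⋖ (x 0).1 := by
    have h := hx.2 0
    rw [show (0 : ℤ) + 1 = 1 by ring] at h
    exact h
  have covy1 : (y 1).1 ⋖ (x 0).1 := by
    have h := hy.2 0
    rw [show (0 : ℤ) + 1 = 1 by ring, ← hxy0] at h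
    exact h
  have covx1' : (x' 1).1 ⋖ (x' 0).1 := by
    have h := hx'.2 0
    rw [show (0 : ℤ) + 1 = 1 by ring] at h
    exact h
  have covy1' : (y' 1).1 ⋖ (x' 0).1 := by
    have h := hy'.2 0
    rw [show (0 : ℤ) + 1 = 1 by ring, ← hxy0'] at h
    exact h
  have hne : (x 1).1 ≠ (y 1).1 := by
    intro h
    have := (hiff 1).1 (Subtype.ext h)
    omega
  have hne' : (x' 1).1 ≠ (y' 1).1 := by
    intro h
    have := (hiff' 1).1 (Subtype.ext h)
    omega
  obtain ⟨hjoin, haa'⟩ := join_eq hint h2lev (x 0).2 covx1 covy1 hne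
    (hax 1 (by omega)) (ha'y 1 (by omega)) (hbx 0 (by omega))
  obtain ⟨hjoin', haa2'⟩ := join_eq hint h2lev (x' 0).2 covx1' covy1' hne'
    (hax' 1 (by omega)) (ha'y' 1 (by omega)) (hbx' 0 (by omega))
  obtain ⟨hab, hamin, hbmax⟩ := pair_lt h2lev (x (-m)).2 (hax (-m) (by omega)) (hbx (-m) (by omega))
  obtain ⟨hab', ha'min, _⟩ := pair_lt h2lev (y (-m)).2 (ha'y (-m) (by omega)) (hby (-m) (by omega))
  obtain ⟨hab2, ha2min, hb2max⟩ := pair_lt h2lev (x' (-m)).2 (hax' (-m) (by omega)) (hbx' (-m) (by omega))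
  obtain ⟨hab2', _, _⟩ := pair_lt h2lev (y' (-m)).2 (ha'y' (-m) (by omega)) (hby' (-m) (by omega))
  obtain ⟨σ, hσa, hσb, hσa'⟩ := two_arc_trans hint h2lev hconn h2arc
    (⟨Or.inl hab, Or.inr hab', haa'⟩ : IsTwoArc (compGraph M) a b a')
    (⟨Or.inl hab2, Or.inr hab2', haa2'⟩ : IsTwoArc (compGraph M) a2 b2 a2')
    (iff_of_false (not_isMax_of_lt hab) (not_isMax_of_lt hab2))
  have base : cutIso σ (x 0).1 = (x' 0).1 := by
    apply Subtype.ext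
    show σ '' (x 0).1.1 = (x' 0).1.1
    rw [hjoin, hjoin', ← OrderIso.lowerBounds_image, ← OrderIso.upperBounds_image,
      Set.image_pair, hσa, hσa']
  -- downward induction, x branch
  have downx : ∀ k : ℕ, (k : ℤ) ≤ m → cutIso σ (x (k : ℤ)).1 = (x' (k : ℤ)).1 := by
    intro k
    induction k with
    | zero => intro _; exact_mod_cast base
    | succ k ih =>
        intro hk
        have hk' : (k : ℤ) ≤ m := by push_cast at hk ⊢; omega
        have ihk := ih hk'
        have hcast : ((k + 1 : ℕ) : ℤ) = (k : ℤ) + 1 := by push_cast; ring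
        rw [hcast]
        apply cover_below_unique hint h2lev (x' (k : ℤ)).2
          (r := cutIso σ (x ((k : ℤ) + 1)).1) (r' := (x' ((k : ℤ) + 1)).1)
          (a := a2) (b := b2)
        · rw [← ihk]
          exact (apply_covBy_apply_iff (cutIso σ)).2 (hx.2 (k : ℤ))
        · exact hx'.2 (k : ℤ)
        · exact ⟨a, hax ((k : ℤ) + 1) (by omega), hσa⟩
        · exact hax' ((k : ℤ) + 1) (by omega)
        · exact hbx' (k : ℤ) (by omega)
  -- downward induction, y branch
  have downy : ∀ k : ℕ, (k : ℤ) ≤ m → cutIso σ (y (k : ℤ)).1 = (y' (k : ℤ)).1 := by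
    intro k
    induction k with
    | zero =>
        intro _
        simp only [Nat.cast_zero]
        rw [← hxy0, ← hxy0']
        exact base
    | succ k ih =>
        intro hk
        have hk' : (k : ℤ) ≤ m := by push_cast at hk ⊢; omega
        have ihk := ih hk'
        have hcast : ((k + 1 : ℕ) : ℤ) = (k : ℤ) + 1 := by push_cast; ring
        rw [hcast]
        apply cover_below_unique hint h2lev (y' (k : ℤ)).2
          (r := cutIso σ (y ((k : ℤ) + 1)).1) (r' := (y' ((k : ℤ) + 1)).1)
          (a := a2') (b := b2)
        · rw [← ihk]
          exact (apply_covBy_apply_iff (cutIso σ)).2 (hy.2 (k : ℤ))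
        · exact hy'.2 (k : ℤ)
        · exact ⟨a', ha'y ((k : ℤ) + 1) (by omega), hσa'⟩
        · exact ha'y' ((k : ℤ) + 1) (by omega)
        · exact hby' (k : ℤ) (by omega)
  -- upward induction (common branch)
  have upx : ∀ k : ℕ, (k : ℤ) ≤ m → cutIso σ (x (-(k : ℤ))).1 = (x' (-(k : ℤ))).1 := by
    intro k
    induction k with
    | zero => intro _; simpa using base
    | succ k ih =>
        intro hk
        have hk' : (k : ℤ) ≤ m := by push_cast at hk ⊢; omega
        have ihk := ih hk'
        have covk : (x (-(k : ℤ))).1 ⋖ (x (-((k : ℤ) + 1))).1 := by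
          have h := hx.2 (-((k : ℤ) + 1))
          rw [show -((k : ℤ) + 1) + 1 = -(k : ℤ) by ring] at h
          exact h
        have covk' : (x' (-(k : ℤ))).1 ⋖ (x' (-((k : ℤ) + 1))).1 := by
          have h := hx'.2 (-((k : ℤ) + 1))
          rw [show -((k : ℤ) + 1) + 1 = -(k : ℤ) by ring] at h
          exact h
        have hcast : -((k + 1 : ℕ) : ℤ) = -((k : ℤ) + 1) := by push_cast; ring
        rw [hcast]
        apply cover_above_unique hint h2lev (x' (-(k : ℤ))).2
          (s := cutIso σ (x (-((k : ℤ) + 1))).1) (s' := (x' (-((k : ℤ) + 1))).1) (b := b2)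
        · rw [← ihk]
          exact (apply_covBy_apply_iff (cutIso σ)).2 covk
        · exact covk'
        · rintro z ⟨w, hw, rfl⟩
          rw [← hσb]
          exact σ.monotone (hbx (-((k : ℤ) + 1)) (by omega) hw)
        · exact hbx' (-((k : ℤ) + 1)) (by omega)
  refine ⟨DAut σ, ?_⟩
  intro i hi
  rw [abs_le] at hi
  have key : ∀ j : ℤ, -m ≤ j → j ≤ m → (DAut σ).1 (x j) = x' j := by
    intro j hj1 hj2
    apply Subtype.ext
    show cutIso σ (x j).1 = (x' j).1
    rcases le_or_gt 0 j with hj | hj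
    · have : j = ((j.toNat : ℕ) : ℤ) := (Int.toNat_of_nonneg hj).symm
      rw [this]
      exact downx j.toNat (by omega)
    · have : j = -(((-j).toNat : ℕ) : ℤ) := by
        have := Int.toNat_of_nonneg (by omega : (0:ℤ) ≤ -j)
        omega
      rw [this]
      exact upx (-j).toNat (by omega)
  have keyy : ∀ j : ℤ, 0 ≤ j → j ≤ m → (DAut σ).1 (y j) = y' j := by
    intro j hj1 hj2
    apply Subtype.ext
    show cutIso σ (y j).1 = (y' j).1
    have : j = ((j.toNat : ℕ) : ℤ) := (Int.toNat_of_nonneg hj1).symm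
    rw [this]
    exact downy j.toNat (by omega)
  constructor
  · exact key i (by omega) (by omega)
  · rcases le_or_gt 0 i with h0 | h0
    · exact keyy i h0 (by omega)
    · have h1 : x i = y i := (hiff i).2 (by omega)
      have h2 : x' i = y' i := (hiff' i).2 (by omega)
      rw [← h1, ← h2]
      exact key i (by omega) (by omega)

end ST
end SecG2
section SecH
namespace ST
open Set Filter

variable {V : Type*} {E : V → V → Prop}

def symStep (E : V → V → Prop) : V → V → Prop := fun u v => E u v ∨ E v u

lemma aut_symStep (g : DigraphAut E) {u v : V} (h : symStep E u v) :
    symStep E (g.1 u) (g.1 v) := by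
  rcases h with h | h
  · exact Or.inl ((g.2 u v).2 h)
  · exact Or.inr ((g.2 v u).2 h)

lemma aut_reach (g : DigraphAut E) {u v : V} (h : Relation.ReflTransGen (symStep E) u v) :
    Relation.ReflTransGen (symStep E) (g.1 u) (g.1 v) := by
  induction h with
  | refl => exact Relation.ReflTransGen.refl
  | tail _ hbc ih => exact ih.tail (aut_symStep g hbc)

lemma valset_finite (hlf : ∀ u : V, {v | E u v}.Finite ∧ {v | E v u}.Finite)
    (k : ℕ → DigraphAut E) {r : V} (hfix : ∀ n, (k n).1 r = r)
    {v : V} (hv : Relation.ReflTransGen (symStep E) r v) :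
    (Set.range (fun n => (k n).1 v)).Finite := by
  induction hv with
  | refl =>
      apply Set.Finite.subset (Set.finite_singleton r)
      rintro w ⟨n, rfl⟩
      exact hfix n
  | @tail b c _ hbc ih =>
      have hsub : (Set.range fun n => (k n).1 c) ⊆
          ⋃ u ∈ (Set.range fun n => (k n).1 b), ({w | E u w} ∪ {w | E w u}) := by
        rintro w ⟨n, rfl⟩
        apply Set.mem_biUnion (Set.mem_range_self n)
        rcases hbc with h | h
        · exact Or.inl (((k n).2 b c).2 h)
        · exact Or.inr (((k n).2 c b).2 h)
      exact Set.Finite.subset (Set.Finite.biUnion ih (fun u _ => ((hlf u).1.union (hlf u).2))) hsub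

lemma exists_ulimit {f : ℕ → V} (hf : (Set.range f).Finite) :
    ∃ w, {n | f n = w} ∈ (Filter.hyperfilter ℕ : Ultrafilter ℕ) := by
  have hmem : Set.range f ∈ Ultrafilter.map f (Filter.hyperfilter ℕ) := by
    rw [Ultrafilter.mem_map]
    have : f ⁻¹' Set.range f = Set.univ := by
      ext n; simp [Set.mem_range_self]
    rw [this]
    exact Filter.univ_mem
  obtain ⟨w, _, hw⟩ := Ultrafilter.eq_pure_of_finite_mem hf hmem
  refine ⟨w, ?_⟩
  have h2 : ({w} : Set V) ∈ Ultrafilter.map f (Filter.hyperfilter ℕ) := by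
    rw [hw]
    exact Ultrafilter.mem_pure.2 (Set.mem_singleton w)
  rw [Ultrafilter.mem_map] at h2
  have h3 : f ⁻¹' {w} = {n | f n = w} := by ext n; simp
  rwa [h3] at h2

lemma line_reach {z : ℤ → V} (hz : ∀ i, E (z i) (z (i + 1))) (i : ℤ) :
    Relation.ReflTransGen (symStep E) (z 0) (z i) := by
  rcases le_or_gt 0 i with h | h
  · have key : ∀ k : ℕ, Relation.ReflTransGen (symStep E) (z 0) (z (k : ℤ)) := by
      intro k
      induction k with
      | zero => exact .refl
      | succ k ih =>
          have hcast : ((k + 1 : ℕ) : ℤ) = (k : ℤ) + 1 := by push_cast; ring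
          rw [hcast]
          exact ih.tail (Or.inl (hz (k : ℤ)))
    have hi : i = ((i.toNat : ℕ) : ℤ) := (Int.toNat_of_nonneg h).symm
    rw [hi]; exact key _
  · have key : ∀ k : ℕ, Relation.ReflTransGen (symStep E) (z 0) (z (-(k : ℤ))) := by
      intro k
      induction k with
      | zero => simpa using Relation.ReflTransGen.refl
      | succ k ih =>
          have hcast : -((k + 1 : ℕ) : ℤ) = -((k : ℤ) + 1) := by push_cast; ring
          rw [hcast]
          refine ih.tail (Or.inr ?_)
          have hh := hz (-((k : ℤ) + 1))
          rw [show -((k : ℤ) + 1) + 1 = -(k : ℤ) by ring] at hh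
          exact hh
    have hi : i = -(((-i).toNat : ℕ) : ℤ) := by
      have := Int.toNat_of_nonneg (by omega : (0:ℤ) ≤ -i)
      omega
    rw [hi]; exact key _

/-- the gluing lemma: window automorphisms yield a global automorphism -/
lemma glue (hlf : ∀ u : V, {v | E u v}.Finite ∧ {v | E v u}.Finite)
    {x y x' y' : ℤ → V}
    (hx : ∀ i, E (x i) (x (i + 1))) (hy : ∀ i, E (y i) (y (i + 1)))
    (hy'0 : y' 0 = x' 0)
    (H : ∀ n : ℕ, ∃ g : DigraphAut E,
      ∀ i : ℤ, |i| ≤ (n : ℤ) → g.1 (x i) = x' i ∧ g.1 (y i) = y' i) :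
    ∃ g : DigraphAut E, g.1 '' (Set.range x ∪ Set.range y) = Set.range x' ∪ Set.range y' := by
  classical
  set U : Ultrafilter ℕ := Filter.hyperfilter ℕ with hU
  set G : ℕ → DigraphAut E := fun n => (H n).choose with hGdef
  have hG : ∀ (n : ℕ) (i : ℤ), |i| ≤ (n : ℤ) → (G n).1 (x i) = x' i ∧ (G n).1 (y i) = y' i :=
    fun n => (H n).choose_spec
  set g0 : DigraphAut E := G 0 with hg0def
  have hg00 : g0.1 (x 0) = x' 0 := (hG 0 0 (by simp)).1
  have hg00y : g0.1 (y 0) = y' 0 := (hG 0 0 (by simp)).2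
  set k : ℕ → DigraphAut E := fun n => DigraphAut.trans (DigraphAut.symm g0) (G n) with hkdef
  have hkapp : ∀ n v, (k n).1 v = (G n).1 (g0.1.symm v) := fun n v => rfl
  have hfix : ∀ n, (k n).1 (x' 0) = x' 0 := by
    intro n
    rw [hkapp]
    have : g0.1.symm (x' 0) = x 0 := by
      rw [← hg00, Equiv.symm_apply_apply]
    rw [this]
    exact (hG n 0 (by simp)).1
  -- the component of x' 0
  set C : Set V := {v | Relation.ReflTransGen (symStep E) (x' 0) v} with hC
  have hCk : ∀ n, ∀ v ∈ C, (k n).1 v ∈ C := by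
    intro n v hv
    have := aut_reach (k n) hv
    rwa [hfix n] at this
  have hCk' : ∀ n, ∀ v ∈ C, (DigraphAut.symm (k n)).1 v ∈ C := by
    intro n v hv
    have h2 : (DigraphAut.symm (k n)).1 (x' 0) = x' 0 := by
      show (k n).1.symm (x' 0) = x' 0
      rw [Equiv.symm_apply_eq, hfix n]
    have := aut_reach (DigraphAut.symm (k n)) hv
    rwa [h2] at this
  -- limits
  have hval : ∀ v ∈ C, ∃ w, {n | (k n).1 v = w} ∈ U :=
    fun v hv => exists_ulimit (valset_finite hlf k hfix hv)
  have hval' : ∀ v ∈ C, ∃ w, {n | (DigraphAut.symm (k n)).1 v = w} ∈ U := by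
    intro v hv
    apply exists_ulimit
    apply valset_finite hlf (fun n => DigraphAut.symm (k n))
    · intro n
      show (k n).1.symm (x' 0) = x' 0
      rw [Equiv.symm_apply_eq, hfix n]
    · exact hv
  choose lim hlim using hval
  choose lim' hlim' using hval'
  set F : V → V := fun v => if hv : v ∈ C then lim v hv else v with hF
  set F' : V → V := fun v => if hv : v ∈ C then lim' v hv else v with hF'
  have hFpos : ∀ v (hv : v ∈ C), F v = lim v hv := fun v hv => dif_pos hv
  have hF'pos : ∀ v (hv : v ∈ C), F' v = lim' v hv := fun v hv => dif_pos hv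
  have hFmem : ∀ v (hv : v ∈ C), {n | (k n).1 v = F v} ∈ U := by
    intro v hv
    rw [hFpos v hv]; exact hlim v hv
  have hF'mem : ∀ v (hv : v ∈ C), {n | (k n).1.symm v = F' v} ∈ U := by
    intro v hv
    rw [hF'pos v hv]; exact hlim' v hv
  have uniq : ∀ (f : ℕ → V) (w w' : V), {n | f n = w} ∈ U → {n | f n = w'} ∈ U → w = w' := by
    intro f w w' h1 h2
    obtain ⟨n, hn1, hn2⟩ := Filter.nonempty_of_mem (Filter.inter_mem h1 h2)
    rw [← hn1, ← hn2]
  have hpick : ∀ (s t : Set ℕ), s ∈ U → t ∈ U → ∃ n, n ∈ s ∧ n ∈ t := by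
    intro s t hs ht
    exact Filter.nonempty_of_mem (Filter.inter_mem hs ht)
  have hpick3 : ∀ (s t u : Set ℕ), s ∈ U → t ∈ U → u ∈ U → ∃ n, n ∈ s ∧ n ∈ t ∧ n ∈ u := by
    intro s t u hs ht hu
    obtain ⟨n, hn1, hn2, hn3⟩ := Filter.nonempty_of_mem
      (Filter.inter_mem hs (Filter.inter_mem ht hu))
    exact ⟨n, hn1, hn2, hn3⟩
  have hFC : ∀ v (hv : v ∈ C), F v ∈ C := by
    intro v hv
    obtain ⟨n, hn⟩ := Filter.nonempty_of_mem (hFmem v hv)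
    rw [← hn]
    exact hCk n v hv
  have hF'C : ∀ v (hv : v ∈ C), F' v ∈ C := by
    intro v hv
    obtain ⟨n, hn⟩ := Filter.nonempty_of_mem (hF'mem v hv)
    rw [← hn]
    exact hCk' n v hv
  have hFnot : ∀ v, v ∉ C → F v = v := fun v hv => dif_neg hv
  have hF'not : ∀ v, v ∉ C → F' v = v := fun v hv => dif_neg hv
  have hleft : ∀ v, F' (F v) = v := by
    intro v
    by_cases hv : v ∈ C
    · have hFv := hFC v hv
      obtain ⟨n, hn1, hn2⟩ := hpick _ _ (hFmem v hv) (hF'mem (F v) hFv)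
      simp only [Set.mem_setOf_eq] at hn1 hn2
      rw [← hn2, ← hn1, Equiv.symm_apply_apply]
    · rw [hFnot v hv, hF'not v hv]
  have hright : ∀ v, F (F' v) = v := by
    intro v
    by_cases hv : v ∈ C
    · have hFv := hF'C v hv
      obtain ⟨n, hn1, hn2⟩ := hpick _ _ (hF'mem v hv) (hFmem (F' v) hFv)
      simp only [Set.mem_setOf_eq] at hn1 hn2
      rw [← hn2, ← hn1, Equiv.apply_symm_apply]
    · rw [hF'not v hv, hFnot v hv]
  -- crossing edges are impossible
  have hcross : ∀ u v : V, u ∈ C → v ∉ C → ¬ symStep E u v := by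
    intro u v hu hv hs
    exact hv (Relation.ReflTransGen.tail hu hs)
  have hedge : ∀ u v : V, E (F u) (F v) ↔ E u v := by
    intro u v
    by_cases hu : u ∈ C <;> by_cases hv : v ∈ C
    · obtain ⟨n, hn1, hn2⟩ := hpick _ _ (hFmem u hu) (hFmem v hv)
      simp only [Set.mem_setOf_eq] at hn1 hn2
      rw [← hn1, ← hn2]
      exact (k n).2 u v
    · constructor
      · intro h
        rw [hFnot v hv] at h
        exact absurd (Or.inl h) (hcross (F u) v (hFC u hu) hv)
      · intro h
        exact absurd (Or.inl h) (hcross u v hu hv)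
    · constructor
      · intro h
        rw [hFnot u hu] at h
        exact absurd (Or.inr h) (hcross (F v) u (hFC v hv) hu)
      · intro h
        exact absurd (Or.inr h) (hcross v u hv hu)
    · rw [hFnot u hu, hFnot v hv]
  set ghat : DigraphAut E := ⟨⟨F, F', hleft, hright⟩, fun u v => hedge u v⟩ with hghat
  refine ⟨DigraphAut.trans g0 ghat, ?_⟩
  have happ : ∀ v, (DigraphAut.trans g0 ghat).1 v = F (g0.1 v) := fun v => rfl
  -- evaluation
  have heval : ∀ (z z' : ℤ → V), (∀ i, E (z i) (z (i + 1))) → z' 0 = x' 0 →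
      (∀ (n : ℕ) (i : ℤ), |i| ≤ (n : ℤ) → (G n).1 (z i) = z' i) →
      ∀ i, F (g0.1 (z i)) = z' i := by
    intro z z' hz hz0 hGz i
    have hreach : g0.1 (z i) ∈ C := by
      have h1 := aut_reach g0 (line_reach hz i)
      have h2 : g0.1 (z 0) = x' 0 := by
        rw [hGz 0 0 (by simp), hz0]
      rwa [h2] at h1
    have hVcof : {n : ℕ | i.natAbs ≤ n} ∈ U := by
      apply Filter.mem_hyperfilter_of_finite_compl
      have : {n : ℕ | i.natAbs ≤ n}ᶜ ⊆ Set.Iio i.natAbs := by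
        intro n hn
        simp only [Set.mem_compl_iff, Set.mem_setOf_eq, not_le] at hn
        exact hn
      exact Set.Finite.subset (Set.finite_Iio _) this
    have hsub : {n : ℕ | i.natAbs ≤ n} ⊆ {n | (k n).1 (g0.1 (z i)) = z' i} := by
      intro n hn
      simp only [Set.mem_setOf_eq] at hn ⊢
      rw [hkapp, Equiv.symm_apply_apply]
      exact hGz n i (by rw [Int.abs_eq_natAbs]; exact_mod_cast hn)
    have h1 : {n | (k n).1 (g0.1 (z i)) = z' i} ∈ U := Filter.mem_of_superset hVcof hsub
    exact uniq _ _ _ (hFmem _ hreach) h1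
  have hevalx : ∀ i, (DigraphAut.trans g0 ghat).1 (x i) = x' i := by
    intro i
    rw [happ]
    exact heval x x' hx rfl (fun n i hi => (hG n i hi).1) i
  have hevaly : ∀ i, (DigraphAut.trans g0 ghat).1 (y i) = y' i := by
    intro i
    rw [happ]
    exact heval y y' hy hy'0 (fun n i hi => (hG n i hi).2) i
  ext w
  constructor
  · rintro ⟨v, hv, rfl⟩
    rcases hv with ⟨i, rfl⟩ | ⟨i, rfl⟩
    · exact Or.inl ⟨i, (hevalx i).symm⟩
    · exact Or.inr ⟨i, (hevaly i).symm⟩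
  · rintro (⟨i, rfl⟩ | ⟨i, rfl⟩)
    · exact ⟨x i, Or.inl ⟨i, rfl⟩, hevalx i⟩
    · exact ⟨y i, Or.inr ⟨i, rfl⟩, hevaly i⟩

end ST
end SecH
/-- Theorem 3.15, last clause. In the setting of the converse direction of
Theorem 3.15, if the covering digraph on `M⁺ \ M` is locally finite then it is strongly
transitive. -/
theorem coverDigraph_stronglyTransitive_of_locallyFinite (M : Type*) [PartialOrder M]
    [Countable M]
    (h2lev : IsTwoLevel M)
    (hconn : (compGraph M).Connected)
    (h2arc : LocallyTwoArcTransitive (compGraph M))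
    (hint : ∀ x y : M, x ∈ minSet M → y ∈ maxSet M → x < y →
      Nonempty (↥(Set.Icc (principalCut x) (principalCut y)) ≃o WithBot (WithTop ℤ)))
    (hlf : ∀ u, {v | coverDigraph M u v}.Finite ∧ {v | coverDigraph M v u}.Finite) :
    StronglyTransitive (coverDigraph M) := by
  constructor
  · intro x y x' y' hxy hxy'
    exact ST.glue hlf hxy.1.2 hxy.2.1.2 ((hxy'.2.2 0).2 le_rfl).symm
      (fun n => ST.windowY hint h2lev hconn h2arc hxy hxy' n)
  · intro x y x' y' hxy hxy'
    exact ST.glue hlf hxy.1.2 hxy.2.1.2 ((hxy'.2.2 0).2 le_rfl).symm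
      (fun n => ST.windowYbar hint h2lev hconn h2arc hxy hxy' n)
end

section
/- Let M be a countable connected 2-level poset that is 2-CS-transitive and 3-CS-transitive, and suppose that for all a ∈ Min(M) and b ∈ Max(M) with a < b the interval [a,b]^{M^D} is finite. If b, c ∈ Max(M) are distinct and have a common lower bound, then their infimum y = b ∧ c exists in M^D and is covered by both b and c in M^D (i.e. y < b with no element of M^D strictly between, and likewise y < c). Conversely, if b, c ∈ Max(M) are distinct and both cover some element y of M^D, then y = b ∧ c. -/
set_option autoImplicit false

section AuxForProof

open Set

variable {M : Type*} [PartialOrder M]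

lemma DMC.le_def {x y : DMC M} : x ≤ y ↔ x.val ⊆ y.val := Iff.rfl

lemma mem_principalCut {x a : M} : x ∈ (principalCut a).val ↔ x ≤ a := Iff.rfl

lemma isCut_inter {b c : M} (hne : (Set.Iic b ∩ Set.Iic c).Nonempty) :
    IsCut (Set.Iic b ∩ Set.Iic c) := by
  refine ⟨hne, ⟨b, fun x hx => hx.1⟩, ?_⟩
  apply Set.Subset.antisymm
  · intro z hz
    exact ⟨hz (fun x hx => hx.1), hz (fun x hx => hx.2)⟩
  · exact subset_lowerBounds_upperBounds _

lemma IsCut.image (g : M ≃o M) {J : Set M} (h : IsCut J) : IsCut (⇑g '' J) := by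
  obtain ⟨h1, h2, h3⟩ := h
  refine ⟨h1.image g, ?_, ?_⟩
  · rw [g.upperBounds_image]
    exact h2.image g
  · rw [g.upperBounds_image, g.lowerBounds_image, h3]

/-- The order isomorphism of `DMC M` induced by an order automorphism of `M`. -/
def DMC.mapIso (g : M ≃o M) : DMC M ≃o DMC M where
  toFun J := ⟨⇑g '' J.val, J.prop.image g⟩
  invFun J := ⟨⇑g.symm '' J.val, J.prop.image g.symm⟩
  left_inv J := Subtype.ext (by simp [Set.image_image])
  right_inv J := Subtype.ext (by simp [Set.image_image])
  map_rel_iff' {X Y} := by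
    change ⇑g '' X.val ⊆ ⇑g '' Y.val ↔ _
    rw [Set.image_subset_image_iff g.injective]
    rfl

lemma DMC.mapIso_principalCut (g : M ≃o M) (a : M) :
    DMC.mapIso g (principalCut a) = principalCut (g a) :=
  Subtype.ext (g.image_Iic a)

lemma isMin_map (g : M ≃o M) {a : M} (h : IsMin a) : IsMin (g a) := by
  intro z hz
  have h1 : g.symm z ≤ a := by
    have := g.symm.monotone hz
    simpa using this
  have h2 := h h1
  calc g a ≤ g (g.symm z) := g.monotone h2
    _ = z := g.apply_symm_apply z

lemma isMax_map (g : M ≃o M) {a : M} (h : IsMax a) : IsMax (g a) := by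
  intro z hz
  have h1 : a ≤ g.symm z := by
    have := g.symm.monotone hz
    simpa using this
  have h2 := h h1
  calc z = g (g.symm z) := (g.apply_symm_apply z).symm
    _ ≤ g a := g.monotone h2

lemma ncard_triple {a b c : M} (hab : a ≠ b) (hac : a ≠ c) (hbc : b ≠ c) :
    ({a, b, c} : Set M).ncard = 3 := by
  rw [Set.ncard_insert_of_notMem (by simp [hab, hac]),
    Set.ncard_insert_of_notMem (by simp [hbc]), Set.ncard_singleton]

lemma vee_connected {a b c : M} (hab : a < b) (hac : a < c) :
    ((compGraph M).induce ({a, b, c} : Set M)).Connected := by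
  haveI : Nonempty ↥({a, b, c} : Set M) := ⟨⟨a, by simp⟩⟩
  have hA : ∀ x : ↥({a, b, c} : Set M),
      ((compGraph M).induce ({a, b, c} : Set M)).Reachable x ⟨a, by simp⟩ := by
    rintro ⟨xv, hx⟩
    simp only [Set.mem_insert_iff, Set.mem_singleton_iff] at hx
    rcases hx with rfl | rfl | rfl
    · rfl
    · exact SimpleGraph.Adj.reachable (show (compGraph M).Adj xv a from Or.inr hab)
    · exact SimpleGraph.Adj.reachable (show (compGraph M).Adj xv a from Or.inr hac)
  exact ⟨fun u v => (hA u).trans (hA v).symm⟩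

lemma vee_orderIso {a b c d : M}
    (hab : a < b) (hac : a < c) (had : a < d)
    (hbc : ¬ b ≤ c) (hcb : ¬ c ≤ b) (hbd : ¬ b ≤ d) (hdb : ¬ d ≤ b) :
    Nonempty (↥({a, b, c} : Set M) ≃o ↥({a, b, d} : Set M)) := by
  classical
  have hac' : a ≠ c := hac.ne
  have had' : a ≠ d := had.ne
  have hbc' : b ≠ c := fun h => hbc h.le
  have hbd' : b ≠ d := fun h => hbd h.le
  have hba : ¬ b ≤ a := fun h => absurd (hab.trans_le h) (lt_irrefl a)
  have hca : ¬ c ≤ a := fun h => absurd (hac.trans_le h) (lt_irrefl a)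
  have hda : ¬ d ≤ a := fun h => absurd (had.trans_le h) (lt_irrefl a)
  refine ⟨{
    toFun := fun x => ⟨if x.val = c then d else x.val, ?_⟩
    invFun := fun x => ⟨if x.val = d then c else x.val, ?_⟩
    left_inv := ?_
    right_inv := ?_
    map_rel_iff' := ?_ }⟩
  · obtain ⟨xv, hx⟩ := x
    simp only [Set.mem_insert_iff, Set.mem_singleton_iff] at hx ⊢
    rcases hx with rfl | rfl | rfl <;> simp [hac', hbc']
  · obtain ⟨xv, hx⟩ := x
    simp only [Set.mem_insert_iff, Set.mem_singleton_iff] at hx ⊢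
    rcases hx with rfl | rfl | rfl <;> simp [had', hbd']
  · rintro ⟨xv, hx⟩
    simp only [Set.mem_insert_iff, Set.mem_singleton_iff] at hx
    apply Subtype.ext
    rcases hx with rfl | rfl | rfl <;> simp [hac', hbc', had', hbd']
  · rintro ⟨xv, hx⟩
    simp only [Set.mem_insert_iff, Set.mem_singleton_iff] at hx
    apply Subtype.ext
    rcases hx with rfl | rfl | rfl <;> simp [hac', hbc', had', hbd']
  · rintro ⟨xv, hx⟩ ⟨yv, hy⟩
    simp only [Set.mem_insert_iff, Set.mem_singleton_iff] at hx hy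
    show (Subtype.mk _ _ ≤ Subtype.mk _ _) ↔ _
    rw [Subtype.mk_le_mk, Subtype.mk_le_mk]
    rcases hx with rfl | rfl | rfl <;> rcases hy with rfl | rfl | rfl <;>
      simp [hac', hbc', had', hbd', hab.le, hac.le, had.le, hbc, hcb, hbd, hdb, hba, hca, hda]

lemma key_auto (h3cs : ThreeCSTransitive M) {a b c d : M}
    (ha : IsMin a) (hb : IsMax b) (hc : IsMax c) (hd : IsMax d)
    (hab : a < b) (hac : a < c) (had : a < d) (hbc : b ≠ c) (hbd : b ≠ d) :
    ∃ g : M ≃o M, g a = a ∧ ⇑g '' (Set.Iic b ∩ Set.Iic c) = Set.Iic b ∩ Set.Iic d := by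
  have hbc1 : ¬ b ≤ c := fun h => hbc (le_antisymm h (hb h))
  have hcb1 : ¬ c ≤ b := fun h => hbc (le_antisymm (hc h) h)
  have hbd1 : ¬ b ≤ d := fun h => hbd (le_antisymm h (hb h))
  have hdb1 : ¬ d ≤ b := fun h => hbd (le_antisymm (hd h) h)
  obtain ⟨g, hg⟩ := h3cs {a, b, c} {a, b, d}
    (ncard_triple hab.ne hac.ne hbc)
    (ncard_triple hab.ne had.ne hbd)
    (vee_connected hab hac) (vee_connected hab had)
    (vee_orderIso hab hac had hbc1 hcb1 hbd1 hdb1)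
  rw [Set.image_insert_eq, Set.image_insert_eq, Set.image_singleton] at hg
  -- g a = a
  have hmem : ∀ x ∈ ({a, b, c} : Set M), g x ∈ ({a, b, d} : Set M) := by
    intro x hx
    rw [← hg]
    simp only [Set.mem_insert_iff, Set.mem_singleton_iff] at hx ⊢
    rcases hx with rfl | rfl | rfl <;> tauto
  have hnotminb : ¬ IsMin b := fun h => absurd (le_antisymm hab.le (h hab.le)) hab.ne
  have hnotmind : ¬ IsMin d := fun h => absurd (le_antisymm had.le (h had.le)) had.ne
  have hga : g a = a := by
    have h1 := hmem a (by simp)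
    have h2 : IsMin (g a) := isMin_map g ha
    simp only [Set.mem_insert_iff, Set.mem_singleton_iff] at h1
    rcases h1 with h1 | h1 | h1
    · exact h1
    · rw [h1] at h2; exact absurd h2 hnotminb
    · rw [h1] at h2; exact absurd h2 hnotmind
  have hnotmaxa : ¬ IsMax a := fun h => absurd (le_antisymm hab.le (h hab.le)) hab.ne
  have hgb : g b = b ∨ g b = d := by
    have h1 := hmem b (by simp)
    simp only [Set.mem_insert_iff, Set.mem_singleton_iff] at h1
    rcases h1 with h1 | h1 | h1
    · exfalso
      have := isMax_map g hb
      rw [h1] at this; exact hnotmaxa this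
    · exact Or.inl h1
    · exact Or.inr h1
  have hgc : g c = b ∨ g c = d := by
    have h1 := hmem c (by simp)
    simp only [Set.mem_insert_iff, Set.mem_singleton_iff] at h1
    rcases h1 with h1 | h1 | h1
    · exfalso
      have := isMax_map g hc
      rw [h1] at this; exact hnotmaxa this
    · exact Or.inl h1
    · exact Or.inr h1
  have hgbc : g b ≠ g c := fun h => hbc (g.injective h)
  have himg : ⇑g '' (Set.Iic b ∩ Set.Iic c) = Set.Iic (g b) ∩ Set.Iic (g c) := by
    rw [Set.image_inter g.injective, g.image_Iic, g.image_Iic]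
  refine ⟨g, hga, ?_⟩
  rcases hgb with h1 | h1 <;> rcases hgc with h2 | h2
  · exact absurd (h1.trans h2.symm) hgbc
  · rw [himg, h1, h2]
  · rw [himg, h1, h2, Set.inter_comm]
  · exact absurd (h1.trans h2.symm) hgbc

end AuxForProof

lemma cut_covby {M : Type*} [PartialOrder M] (h2lev : IsTwoLevel M)
    (h3cs : ThreeCSTransitive M)
    (hfin : ∀ a b : M, a ∈ minSet M → b ∈ maxSet M → a < b →
      (Set.Icc (principalCut a) (principalCut b)).Finite)
    {a b c : M} (ha : IsMin a) (hb : IsMax b) (hc : IsMax c)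
    (hab : a < b) (hac : a < c) (hbc : b ≠ c)
    (y : DMC M) (hy : y.val = Set.Iic b ∩ Set.Iic c) :
    y ⋖ principalCut b := by
  have hyle : y ≤ principalCut b := DMC.le_def.mpr (by rw [hy]; exact Set.inter_subset_left)
  have haJ : a ∈ y.val := by rw [hy]; exact ⟨hab.le, hac.le⟩
  have hbnotin : b ∉ y.val := by
    rw [hy]
    rintro ⟨-, h2⟩
    exact hbc (le_antisymm h2 (hb h2))
  have hlt : y < principalCut b := lt_of_le_of_ne hyle (by
    intro h
    exact hbnotin (by rw [h]; exact Set.self_mem_Iic))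
  refine ⟨hlt, fun K hyK hKb => ?_⟩
  have hKb1 : K.val ⊆ Set.Iic b := DMC.le_def.mp hKb.le
  have hssyK : y.val ⊂ K.val :=
    ssubset_of_subset_of_ne (DMC.le_def.mp hyK.le) (fun h => hyK.ne (Subtype.ext h))
  obtain ⟨x, hxK, hxJ⟩ := Set.exists_of_ssubset hssyK
  have hxb : x ≤ b := hKb1 hxK
  have hssKb : K.val ⊂ Set.Iic b :=
    ssubset_of_subset_of_ne hKb1 (fun h => hKb.ne (Subtype.ext h))
  obtain ⟨z, hzb, hzK⟩ := Set.exists_of_ssubset hssKb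
  have hz2 : z ∉ lowerBounds (upperBounds K.val) := by rw [K.prop.2.2]; exact hzK
  rw [mem_lowerBounds] at hz2
  push_neg at hz2
  obtain ⟨d, hdub, hzd⟩ := hz2
  have hdb : d ≠ b := fun h => hzd (h ▸ hzb)
  have haK : a ∈ K.val := DMC.le_def.mp hyK.le haJ
  have had0 : a ≤ d := hdub haK
  have hxd : x ≤ d := hdub hxK
  have had : a < d := by
    refine lt_of_le_of_ne had0 (fun h => ?_)
    have hxa : x ≤ a := h ▸ hxd
    have hx_eq : x = a := le_antisymm hxa (ha hxa)
    rw [hx_eq] at hxJ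
    exact hxJ haJ
  have hd : IsMax d := by
    rcases h2lev d with h | h
    · exact absurd (le_antisymm had0 (h had0)) had.ne
    · exact h
  obtain ⟨g, hga, hgJ⟩ := key_auto h3cs ha hb hc hd hab hac had hbc (fun h => hdb h.symm)
  set J' : Set M := Set.Iic b ∩ Set.Iic d with hJ'
  have hJ'cut : IsCut J' := isCut_inter ⟨a, hab.le, had.le⟩
  set y' : DMC M := ⟨J', hJ'cut⟩ with hy'
  have hsub : y.val ⊆ y'.val := by
    intro w hw
    have hwK : w ∈ K.val := DMC.le_def.mp hyK.le hw
    exact ⟨hKb1 hwK, hdub hwK⟩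
  have hxy' : x ∈ y'.val := ⟨hxb, hxd⟩
  set e : DMC M ≃o DMC M := DMC.mapIso g with he
  have hePa : e (principalCut a) = principalCut a := by
    rw [he, DMC.mapIso_principalCut, hga]
  have hey : e y = y' := by
    apply Subtype.ext
    show ⇑g '' y.val = J'
    rw [hy, hgJ]
  have hPay : principalCut a ≤ y := DMC.le_def.mpr (by
    rw [hy]; exact fun w hw => ⟨le_trans hw hab.le, le_trans hw hac.le⟩)
  have hPay' : principalCut a ≤ y' :=
    DMC.le_def.mpr (fun w hw => ⟨le_trans hw hab.le, le_trans hw had.le⟩)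
  have hy'b : y' ≤ principalCut b := DMC.le_def.mpr Set.inter_subset_left
  have Ffin : (Set.Icc (principalCut a) (principalCut b)).Finite := hfin a b ha hb hab
  have hSfin : (Set.Icc (principalCut a) y).Finite :=
    Ffin.subset (Set.Icc_subset_Icc_right hyle)
  have hS'fin : (Set.Icc (principalCut a) y').Finite :=
    Ffin.subset (Set.Icc_subset_Icc_right hy'b)
  have himg : ⇑e '' Set.Icc (principalCut a) y = Set.Icc (principalCut a) y' := by
    rw [e.image_Icc, hePa, hey]
  have hcard : (Set.Icc (principalCut a) y').ncard = (Set.Icc (principalCut a) y).ncard := by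
    rw [← himg, Set.ncard_image_of_injective _ e.injective]
  have hyley' : y ≤ y' := DMC.le_def.mpr hsub
  have hss : Set.Icc (principalCut a) y ⊂ Set.Icc (principalCut a) y' := by
    refine ssubset_of_subset_of_ne (Set.Icc_subset_Icc_right hyley') (fun h => ?_)
    have hy'mem : y' ∈ Set.Icc (principalCut a) y := by
      rw [h]; exact ⟨hPay', le_refl y'⟩
    exact hxJ (DMC.le_def.mp hy'mem.2 hxy')
  have := Set.ncard_lt_ncard hss hS'fin
  omega

theorem meet_of_maximals_covered' (M : Type*) [PartialOrder M] [Countable M]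
    (h2lev : IsTwoLevel M)
    (hconn : (compGraph M).Connected)
    (h2cs : TwoCSTransitive M) (h3cs : ThreeCSTransitive M)
    (hfin : ∀ a b : M, a ∈ minSet M → b ∈ maxSet M → a < b →
      (Set.Icc (principalCut a) (principalCut b)).Finite) :
    (∀ b c : M, b ∈ maxSet M → c ∈ maxSet M → b ≠ c → (∃ a : M, a ≤ b ∧ a ≤ c) →
      ∃ y : DMC M, IsGLB {principalCut b, principalCut c} y ∧
        y ⋖ principalCut b ∧ y ⋖ principalCut c) ∧
    (∀ b c : M, b ∈ maxSet M → c ∈ maxSet M → b ≠ c → ∀ y : DMC M,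
      y ⋖ principalCut b → y ⋖ principalCut c →
      IsGLB {principalCut b, principalCut c} y) := by
  have hGLB : ∀ b c : M, ∀ y : DMC M, y.val = Set.Iic b ∩ Set.Iic c →
      IsGLB {principalCut b, principalCut c} y := by
    intro b c y hyv
    constructor
    · rintro w hw
      simp only [Set.mem_insert_iff, Set.mem_singleton_iff] at hw
      rcases hw with rfl | rfl
      · exact DMC.le_def.mpr (by rw [hyv]; exact Set.inter_subset_left)
      · exact DMC.le_def.mpr (by rw [hyv]; exact Set.inter_subset_right)
    · intro w hw
      have h1 : w ≤ principalCut b := hw (Set.mem_insert _ _)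
      have h2 : w ≤ principalCut c := hw (by simp)
      exact DMC.le_def.mpr (by
        rw [hyv]
        exact fun x hx => ⟨DMC.le_def.mp h1 hx, DMC.le_def.mp h2 hx⟩)
  constructor
  · rintro b c hb hc hbc ⟨a, h1, h2⟩
    have hb' : IsMax b := hb
    have hc' : IsMax c := hc
    have hab : a < b := by
      refine lt_of_le_of_ne h1 (fun h => ?_)
      exact hbc (le_antisymm (h ▸ h2) (hb' (h ▸ h2)))
    have hac : a < c := by
      refine lt_of_le_of_ne h2 (fun h => ?_)
      exact hbc (le_antisymm (hc' (h ▸ h1)) (h ▸ h1))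
    have ha : IsMin a := by
      rcases h2lev a with h | h
      · exact h
      · exact absurd (le_antisymm h1 (h h1)) hab.ne
    refine ⟨⟨Set.Iic b ∩ Set.Iic c, isCut_inter ⟨a, h1, h2⟩⟩, hGLB b c _ rfl, ?_, ?_⟩
    · exact cut_covby h2lev h3cs hfin ha hb' hc' hab hac hbc _ rfl
    · exact cut_covby h2lev h3cs hfin ha hc' hb' hac hab (Ne.symm hbc) _
        (Set.inter_comm _ _)
  · intro b c hb hc hbc y hyb hyc
    have hb' : IsMax b := hb
    obtain ⟨w, hw⟩ := y.prop.1
    have hne : (Set.Iic b ∩ Set.Iic c).Nonempty :=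
      ⟨w, DMC.le_def.mp hyb.le hw, DMC.le_def.mp hyc.le hw⟩
    set z : DMC M := ⟨Set.Iic b ∩ Set.Iic c, isCut_inter hne⟩ with hz
    have hyz : y ≤ z :=
      DMC.le_def.mpr (fun x hx => ⟨DMC.le_def.mp hyb.le hx, DMC.le_def.mp hyc.le hx⟩)
    have hzb : z ≤ principalCut b := DMC.le_def.mpr Set.inter_subset_left
    rcases eq_or_lt_of_le hyz with h | h
    · rw [h]
      exact hGLB b c z rfl
    · exfalso
      have hnzb : ¬ z < principalCut b := hyb.2 h
      have hzeq : z = principalCut b := by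
        by_contra hne'
        exact hnzb (lt_of_le_of_ne hzb hne')
      have hbz : b ∈ z.val := by rw [hzeq]; exact Set.self_mem_Iic
      exact hbc (le_antisymm hbz.2 (hb' hbz.2))

/-- Lemma 4.2. In a countable connected 2- and 3-CS-transitive 2-level
poset with finite completion intervals, the meet of two distinct maximal elements with a
common lower bound is covered by both of them; conversely an element covered by two distinct
maximal elements is their meet. -/
theorem meet_of_maximals_covered (M : Type*) [PartialOrder M] [Countable M]
    (h2lev : IsTwoLevel M)
    (hconn : (compGraph M).Connected)
    (h2cs : TwoCSTransitive M) (h3cs : ThreeCSTransitive M)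
    (hfin : ∀ a b : M, a ∈ minSet M → b ∈ maxSet M → a < b →
      (Set.Icc (principalCut a) (principalCut b)).Finite) :
    (∀ b c : M, b ∈ maxSet M → c ∈ maxSet M → b ≠ c → (∃ a : M, a ≤ b ∧ a ≤ c) →
      ∃ y : DMC M, IsGLB {principalCut b, principalCut c} y ∧
        y ⋖ principalCut b ∧ y ⋖ principalCut c) ∧
    (∀ b c : M, b ∈ maxSet M → c ∈ maxSet M → b ≠ c → ∀ y : DMC M,
      y ⋖ principalCut b → y ⋖ principalCut c →
      IsGLB {principalCut b, principalCut c} y) :=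
  meet_of_maximals_covered' M h2lev hconn h2cs h3cs hfin
end

section
/- Let M be a connected 2-level poset that is 2-CS-transitive and 3-CS-transitive, and suppose that for some a, b ∈ M with a < b there exists x ∈ M^D with a < x < b such that no element of M^D lies strictly between a and x and no element of M^D lies strictly between x and b. Then for all a' ∈ Min(M) and b' ∈ Max(M) with a' < b', every maximal chain of the interval [a',b']^{M^D} has exactly three elements. -/
set_option autoImplicit false

section AuxLemmas

open Set

variable {M : Type*} [PartialOrder M]

lemma upB_lowB_upB (S : Set M) :
    upperBounds (lowerBounds (upperBounds S)) = upperBounds S :=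
  Set.Subset.antisymm (upperBounds_mono_set (subset_lowerBounds_upperBounds S))
    (subset_upperBounds_lowerBounds (upperBounds S))

/-- The cut closure of a nonempty, bounded-above set. -/
def clCut (S : Set M) (hS : S.Nonempty) (hub : (upperBounds S).Nonempty) : DMC M :=
  ⟨lowerBounds (upperBounds S),
    hS.mono (subset_lowerBounds_upperBounds S),
    by rw [upB_lowB_upB]; exact hub,
    by rw [upB_lowB_upB]⟩

lemma subset_clCut (S : Set M) (hS : S.Nonempty) (hub : (upperBounds S).Nonempty) :
    S ⊆ (clCut S hS hub).1 :=
  subset_lowerBounds_upperBounds S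

lemma clCut_le {S : Set M} {hS : S.Nonempty} {hub : (upperBounds S).Nonempty} {K : DMC M}
    (h : S ⊆ K.1) : clCut S hS hub ≤ K := by
  have h1 : upperBounds K.1 ⊆ upperBounds S := upperBounds_mono_set h
  have h2 : lowerBounds (upperBounds S) ⊆ lowerBounds (upperBounds K.1) :=
    lowerBounds_mono_set h1
  refine Subtype.coe_le_coe.mp ?_
  intro y hy
  have := h2 hy
  rwa [K.2.2.2] at this

lemma cut_lowerSet (K : DMC M) {x y : M} (hx : x ∈ K.1) (hyx : y ≤ x) : y ∈ K.1 := by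
  rw [← K.2.2.2] at hx ⊢
  exact fun u hu => hyx.trans (hx hu)

lemma Iic_of_isMin {a : M} (ha : IsMin a) : Set.Iic a = {a} := by
  ext y
  simp only [Set.mem_Iic, Set.mem_singleton_iff]
  exact ⟨fun h => le_antisymm h (ha h), fun h => h.le⟩

lemma dmc_le_iff {J K : DMC M} : J ≤ K ↔ J.1 ⊆ K.1 := Iff.rfl

/-- The automorphism of the completion induced by an automorphism of `M`. -/
def cutMap (g : M ≃o M) (J : DMC M) : DMC M :=
  ⟨g '' J.1, J.2.1.image g,
    by rw [g.upperBounds_image]; exact J.2.2.1.image g,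
    by rw [g.upperBounds_image, g.lowerBounds_image, J.2.2.2]⟩

lemma cutMap_le_iff (g : M ≃o M) {J K : DMC M} : cutMap g J ≤ cutMap g K ↔ J ≤ K := by
  rw [dmc_le_iff, dmc_le_iff]
  exact Set.image_subset_image_iff g.injective

lemma cutMap_lt_iff (g : M ≃o M) {J K : DMC M} : cutMap g J < cutMap g K ↔ J < K := by
  simp only [lt_iff_le_not_ge, cutMap_le_iff]

lemma cutMap_cutMap_symm (g : M ≃o M) (J : DMC M) : cutMap g (cutMap g.symm J) = J := by
  apply Subtype.ext
  show g '' (g.symm '' J.1) = J.1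
  simp [Set.image_image]

lemma cutMap_principalCut (g : M ≃o M) (u : M) :
    cutMap g (principalCut u) = principalCut (g u) :=
  Subtype.ext (g.image_Iic u)

lemma cutMap_covBy (g : M ≃o M) {J K : DMC M} (h : J ⋖ K) : cutMap g J ⋖ cutMap g K := by
  refine ⟨(cutMap_lt_iff g).2 h.1, fun L h1 h2 => ?_⟩
  rw [← cutMap_cutMap_symm g L] at h1 h2
  exact h.2 ((cutMap_lt_iff g).1 h1) ((cutMap_lt_iff g).1 h2)

lemma vTriple_connected {p q r : M} (hpr : p < r) (hqr : q < r) :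
    ((compGraph M).induce ({p, q, r} : Set M)).Connected := by
  rw [SimpleGraph.connected_iff]
  have hp : p ∈ ({p, q, r} : Set M) := by simp
  have hq : q ∈ ({p, q, r} : Set M) := by simp
  have hr : r ∈ ({p, q, r} : Set M) := by simp
  have hA : ((compGraph M).induce ({p, q, r} : Set M)).Adj ⟨p, hp⟩ ⟨r, hr⟩ := Or.inl hpr
  have hB : ((compGraph M).induce ({p, q, r} : Set M)).Adj ⟨q, hq⟩ ⟨r, hr⟩ := Or.inl hqr
  refine ⟨?_, ⟨⟨p, hp⟩⟩⟩
  have reach : ∀ z : ↥({p, q, r} : Set M),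
      ((compGraph M).induce ({p, q, r} : Set M)).Reachable z ⟨r, hr⟩ := by
    rintro ⟨z, hz⟩
    simp only [Set.mem_insert_iff, Set.mem_singleton_iff] at hz
    rcases hz with rfl | rfl | rfl
    · exact hA.reachable
    · exact hB.reachable
    · exact SimpleGraph.Reachable.refl _
  intro x y
  exact (reach x).trans (reach y).symm

lemma vTriple_orderIso {p q r p' q' r' : M}
    (hpr : p < r) (hqr : q < r) (hpq : ¬ p ≤ q) (hqp : ¬ q ≤ p)
    (hpr' : p' < r') (hqr' : q' < r') (hpq' : ¬ p' ≤ q') (hqp' : ¬ q' ≤ p') :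
    Nonempty (↥({p, q, r} : Set M) ≃o ↥({p', q', r'} : Set M)) := by
  classical
  have hp : p ∈ ({p, q, r} : Set M) := by simp
  have hq : q ∈ ({p, q, r} : Set M) := by simp
  have hr : r ∈ ({p, q, r} : Set M) := by simp
  have hp' : p' ∈ ({p', q', r'} : Set M) := by simp
  have hq' : q' ∈ ({p', q', r'} : Set M) := by simp
  have hr' : r' ∈ ({p', q', r'} : Set M) := by simp
  have nqp : q ≠ p := fun h => hqp (le_of_eq h)
  have npq : p ≠ q := fun h => hpq (le_of_eq h)
  have nrp : r ≠ p := hpr.ne'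
  have nrq : r ≠ q := hqr.ne'
  have nqp' : q' ≠ p' := fun h => hqp' (le_of_eq h)
  have npq' : p' ≠ q' := fun h => hpq' (le_of_eq h)
  have nrp' : r' ≠ p' := hpr'.ne'
  have nrq' : r' ≠ q' := hqr'.ne'
  refine ⟨{
    toFun := fun x => if (x : M) = p then ⟨p', hp'⟩ else if (x : M) = q then ⟨q', hq'⟩
      else ⟨r', hr'⟩
    invFun := fun x => if (x : M) = p' then ⟨p, hp⟩ else if (x : M) = q' then ⟨q, hq⟩
      else ⟨r, hr⟩
    left_inv := ?_
    right_inv := ?_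
    map_rel_iff' := ?_ }⟩
  · rintro ⟨x, hx⟩
    simp only [Set.mem_insert_iff, Set.mem_singleton_iff] at hx
    rcases hx with rfl | rfl | rfl <;>
      simp [npq, nqp, nrp, nrq, npq', nqp', nrp', nrq']
  · rintro ⟨x, hx⟩
    simp only [Set.mem_insert_iff, Set.mem_singleton_iff] at hx
    rcases hx with rfl | rfl | rfl <;>
      simp [npq, nqp, nrp, nrq, npq', nqp', nrp', nrq']
  · rintro ⟨x, hx⟩ ⟨y, hy⟩
    simp only [Set.mem_insert_iff, Set.mem_singleton_iff] at hx hy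
    rcases hx with rfl | rfl | rfl <;> rcases hy with rfl | rfl | rfl <;>
      simp [npq, nqp, nrp, nrq, npq', nqp', nrp', nrq', Subtype.mk_le_mk,
        hpq, hqp, hpq', hqp', hpr.le, hqr.le, hpr'.le, hqr'.le,
        hpr.not_ge, hqr.not_ge, hpr'.not_ge, hqr'.not_ge]

end AuxLemmas

section KeyLemma

open Set

variable {M : Type*} [PartialOrder M]

lemma mid_facts {a' b' : M} (ha' : IsMin a') (hb' : IsMax b') {z : DMC M}
    (h1 : principalCut a' < z) (h2 : z < principalCut b') :
    a' ∈ z.1 ∧ (∃ d ∈ z.1, d ≠ a') ∧ ∀ y ∈ z.1, y < b' := by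
  have hsub : z.1 ⊆ Set.Iic b' := dmc_le_iff.mp h2.le
  have hbz : b' ∉ z.1 := by
    intro hb
    have hsup : Set.Iic b' ⊆ z.1 := fun y hy => cut_lowerSet z hb hy
    exact h2.ne (Subtype.ext (Set.Subset.antisymm hsub hsup))
  have ha'z : a' ∈ z.1 := dmc_le_iff.mp h1.le (Set.mem_Iic.mpr le_rfl)
  refine ⟨ha'z, ?_, ?_⟩
  · by_contra h
    push_neg at h
    have hz1 : z.1 = {a'} := Set.Subset.antisymm (fun y hy => h y hy) (by simp [ha'z])
    have : z = principalCut a' := Subtype.ext (by rw [hz1]; exact (Iic_of_isMin ha').symm)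
    exact h1.ne' this
  · intro y hy
    exact lt_of_le_of_ne (hsub hy) (fun h => hbz (h ▸ hy))

lemma elem_isMin (h2lev : IsTwoLevel M) {y b' : M} (h : y < b') : IsMin y :=
  (h2lev y).resolve_right (fun hy => h.not_ge (hy h.le))

lemma min_incomp (h2lev : IsTwoLevel M) {u v b' : M} (hu : u < b') (hv : v < b')
    (huv : u ≠ v) : ¬ u ≤ v := by
  intro h
  exact huv (le_antisymm h (elem_isMin h2lev hv h))

lemma no_two_middles (h2lev : IsTwoLevel M) (h3cs : ThreeCSTransitive M)
    (hex : ∃ (a b : M) (x : DMC M), a < b ∧ principalCut a ⋖ x ∧ x ⋖ principalCut b)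
    {a' b' : M} (ha' : IsMin a') (hb' : IsMax b') (hab' : a' < b')
    {z1 z2 : DMC M} (hz1 : principalCut a' < z1) (hz12 : z1 < z2)
    (hz2 : z2 < principalCut b') : False := by
  classical
  obtain ⟨a, b, x, hab, hax, hxb⟩ := hex
  have hamin : IsMin a := elem_isMin h2lev hab
  have hbmax : IsMax b := (h2lev b).resolve_left (fun hy => hab.not_ge (hy hab.le))
  -- facts about x
  obtain ⟨hax', ⟨e, hex', hea⟩, hxlt⟩ := mid_facts hamin hbmax hax.lt hxb.lt
  have heb : e < b := hxlt e hex'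
  -- facts about z1
  have hz1b : z1 < principalCut b' := hz12.trans hz2
  obtain ⟨ha'z1, ⟨d, hdz1, hda'⟩, hz1lt⟩ := mid_facts ha' hb' hz1 hz1b
  have hdb' : d < b' := hz1lt d hdz1
  -- incomparabilities
  have hae : ¬ a ≤ e := min_incomp h2lev hab heb (fun h => hea h.symm)
  have hea' : ¬ e ≤ a := min_incomp h2lev heb hab hea
  have ha'd : ¬ a' ≤ d := min_incomp h2lev hab' hdb' (fun h => hda' h.symm)
  have hda'' : ¬ d ≤ a' := min_incomp h2lev hdb' hab' hda'
  -- the closure X = cl {a, e} equals x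
  have hubae : b ∈ upperBounds ({a, e} : Set M) := by
    intro y hy
    rcases hy with rfl | hy
    · exact hab.le
    · rw [Set.mem_singleton_iff] at hy; exact hy ▸ heb.le
  have hSae : ({a, e} : Set M).Nonempty := ⟨a, by simp⟩
  set X : DMC M := clCut {a, e} hSae ⟨b, hubae⟩ with hX
  have haX : a ∈ X.1 := subset_clCut _ _ _ (by simp)
  have heX : e ∈ X.1 := subset_clCut _ _ _ (by simp)
  have hXx : X ≤ x := clCut_le (by
    intro y hy
    rcases hy with rfl | hy
    · exact hax'
    · rw [Set.mem_singleton_iff] at hy; exact hy ▸ hex')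
  have hpaX : principalCut a < X := by
    refine lt_of_le_of_ne ?_ ?_
    · refine Subtype.coe_le_coe.mp ?_
      intro y hy
      exact cut_lowerSet X haX hy
    · intro h
      have : e ∈ (principalCut a).1 := h ▸ heX
      exact hea (le_antisymm this (hamin this))
  have hXeq : X = x := by
    by_contra hne
    exact hax.2 hpaX (lt_of_le_of_ne hXx hne)
  have hcovX : X ⋖ principalCut b := hXeq ▸ hxb
  -- apply 3-CS-transitivity to {a, e, b} and {a', d, b'}
  have hA3 : ({a, e, b} : Set M).ncard = 3 :=
    Set.ncard_eq_three.mpr ⟨a, e, b, fun h => hae h.le, hab.ne, heb.ne, rfl⟩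
  have hB3 : ({a', d, b'} : Set M).ncard = 3 :=
    Set.ncard_eq_three.mpr ⟨a', d, b', fun h => ha'd h.le, hab'.ne, hdb'.ne, rfl⟩
  have hAc : ((compGraph M).induce ({a, e, b} : Set M)).Connected :=
    vTriple_connected hab heb
  have hBc : ((compGraph M).induce ({a', d, b'} : Set M)).Connected :=
    vTriple_connected hab' hdb'
  have hiso := vTriple_orderIso hab heb hae hea' hab' hdb' ha'd hda''
  obtain ⟨g, hg⟩ := h3cs _ _ hA3 hB3 hAc hBc hiso
  -- g b = b'
  have hgbmax : IsMax (g b) := by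
    intro c hc
    have h1 : b ≤ g.symm c := g.le_symm_apply.mpr hc
    have h2 : g.symm c ≤ b := hbmax h1
    exact g.symm_apply_le.mp h2
  have hgbB : g b ∈ ({a', d, b'} : Set M) := by
    rw [← hg]; exact ⟨b, by simp, rfl⟩
  have hgb : g b = b' := by
    rcases hgbB with h | h | h
    · exact absurd (h ▸ hgbmax) (fun hm => hab'.not_ge (hm hab'.le))
    · exact absurd (h ▸ hgbmax) (fun hm => hdb'.not_ge (hm hdb'.le))
    · exact h
  -- g '' {a, e} = {a', d}
  have himg : g '' ({a, e} : Set M) = ({a', d} : Set M) := by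
    apply Set.Subset.antisymm
    · rintro _ ⟨u, hu, rfl⟩
      have huA : u ∈ ({a, e, b} : Set M) := by
        rcases hu with rfl | hu
        · simp
        · rw [Set.mem_singleton_iff] at hu; simp [hu]
      have : g u ∈ ({a', d, b'} : Set M) := by rw [← hg]; exact ⟨u, huA, rfl⟩
      rcases this with h | h | h
      · simp [h]
      · simp [h]
      · exfalso
        rw [Set.mem_singleton_iff, ← hgb] at h
        have : u = b := g.injective h
        rcases hu with rfl | hu
        · exact hab.ne this
        · rw [Set.mem_singleton_iff] at hu; exact heb.ne (hu ▸ this)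
    · intro v hv
      have hvB : v ∈ ({a', d, b'} : Set M) := by
        rcases hv with rfl | hv
        · simp
        · rw [Set.mem_singleton_iff] at hv; simp [hv]
      rw [← hg] at hvB
      obtain ⟨u, huA, rfl⟩ := hvB
      have hub : u ≠ b := by
        rintro rfl
        rw [hgb] at hv
        rcases hv with h | h
        · exact hab'.ne (h.symm) |>.elim
        · rw [Set.mem_singleton_iff] at h; exact hdb'.ne h.symm
      have : u ∈ ({a, e} : Set M) := by
        rcases huA with rfl | rfl | rfl
        · simp
        · simp
        · exact absurd rfl hub
      exact ⟨u, this, rfl⟩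
  -- transfer the covering relation
  have hcov' : cutMap g X ⋖ principalCut b' := by
    have := cutMap_covBy g hcovX
    rwa [cutMap_principalCut, hgb] at this
  have hubad : b' ∈ upperBounds ({a', d} : Set M) := by
    intro y hy
    rcases hy with rfl | hy
    · exact hab'.le
    · rw [Set.mem_singleton_iff] at hy; exact hy ▸ hdb'.le
  have hW : cutMap g X = clCut ({a', d} : Set M) ⟨a', by simp⟩ ⟨b', hubad⟩ := by
    apply Subtype.ext
    show g '' lowerBounds (upperBounds ({a, e} : Set M)) =
      lowerBounds (upperBounds ({a', d} : Set M))
    rw [← himg, g.upperBounds_image, g.lowerBounds_image]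
  -- contradiction: z2 lies strictly between cutMap g X and principalCut b'
  have hWz1 : cutMap g X ≤ z1 := by
    rw [hW]
    exact clCut_le (by
      intro y hy
      rcases hy with rfl | hy
      · exact ha'z1
      · rw [Set.mem_singleton_iff] at hy; exact hy ▸ hdz1)
  exact hcov'.2 (lt_of_le_of_lt hWz1 hz12) hz2

end KeyLemma

/-- Lemma 4.3. Let `M` be a connected 2- and 3-CS-transitive 2-level poset
such that for some `a < b` in `M` there is `x ∈ M^D` with `a ⋖ x ⋖ b`. Then every maximal
chain of every completion interval `[a',b']` (`a'` minimal, `b'` maximal, `a' < b'`) has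
exactly three elements. -/
theorem maximal_chains_length_three (M : Type*) [PartialOrder M]
    (h2lev : IsTwoLevel M)
    (hconn : (compGraph M).Connected)
    (h2cs : TwoCSTransitive M) (h3cs : ThreeCSTransitive M)
    (hex : ∃ (a b : M) (x : DMC M), a < b ∧ principalCut a ⋖ x ∧ x ⋖ principalCut b) :
    ∀ a' b' : M, a' ∈ minSet M → b' ∈ maxSet M → a' < b' →
      ∀ C : Set (DMC M), C ⊆ Set.Icc (principalCut a') (principalCut b') →
        IsChain (· ≤ ·) C →
        (∀ C' : Set (DMC M), C' ⊆ Set.Icc (principalCut a') (principalCut b') →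
          IsChain (· ≤ ·) C' → C ⊆ C' → C' = C) →
        C.ncard = 3 := by
  intro a' b' ha' hb' hab' C hsub hchain hmax
  have ha'min : IsMin a' := ha'
  have hb'max : IsMax b' := hb'
  have hle : principalCut a' ≤ principalCut b' := by
    rw [dmc_le_iff]
    exact fun y hy => le_trans hy hab'.le
  have hpapb : principalCut a' < principalCut b' := by
    refine lt_of_le_of_ne hle ?_
    intro h
    have : b' ∈ (principalCut a').1 := by rw [h]; exact Set.mem_Iic.mpr le_rfl
    exact hab'.not_ge this
  -- endpoints belong to every maximal chain
  have hpaC : principalCut a' ∈ C := by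
    have hch : IsChain (· ≤ ·) (insert (principalCut a') C) :=
      hchain.insert (fun z hz _ => Or.inl (hsub hz).1)
    have hss : insert (principalCut a') C ⊆ Set.Icc (principalCut a') (principalCut b') := by
      intro z hz
      rcases hz with rfl | hz
      · exact ⟨le_refl _, hle⟩
      · exact hsub hz
    have := hmax _ hss hch (Set.subset_insert _ _)
    rw [← this]
    exact Set.mem_insert _ _
  have hpbC : principalCut b' ∈ C := by
    have hch : IsChain (· ≤ ·) (insert (principalCut b') C) :=
      hchain.insert (fun z hz _ => Or.inr (hsub hz).2)
    have hss : insert (principalCut b') C ⊆ Set.Icc (principalCut a') (principalCut b') := by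
      intro z hz
      rcases hz with rfl | hz
      · exact ⟨hle, le_refl _⟩
      · exact hsub hz
    have := hmax _ hss hch (Set.subset_insert _ _)
    rw [← this]
    exact Set.mem_insert _ _
  -- there is an element strictly in between
  obtain ⟨a, b, x, hab, hax, hxb⟩ := hex
  obtain ⟨g2, hg2a, hg2b⟩ := h2cs a b a' b' hab hab'
  have hx'1 : principalCut a' < cutMap g2 x := by
    have := (cutMap_lt_iff g2).2 hax.lt
    rwa [cutMap_principalCut, hg2a] at this
  have hx'2 : cutMap g2 x < principalCut b' := by
    have := (cutMap_lt_iff g2).2 hxb.lt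
    rwa [cutMap_principalCut, hg2b] at this
  have hkey : ∀ z1 z2 : DMC M, principalCut a' < z1 → z1 < z2 → z2 < principalCut b' → False :=
    fun z1 z2 h1 h12 h2 =>
      no_two_middles h2lev h3cs ⟨a, b, x, hab, hax, hxb⟩ ha'min hb'max hab' h1 h12 h2
  have hmidC : ∃ m ∈ C, principalCut a' < m ∧ m < principalCut b' := by
    by_contra hcon
    push_neg at hcon
    have hCend : ∀ z ∈ C, z = principalCut a' ∨ z = principalCut b' := by
      intro z hz
      rcases eq_or_ne z (principalCut a') with h | h
      · exact Or.inl h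
      rcases eq_or_ne z (principalCut b') with h2 | h2
      · exact Or.inr h2
      exact absurd (lt_of_le_of_ne (hsub hz).2 h2)
        (hcon z hz (lt_of_le_of_ne (hsub hz).1 (Ne.symm h)))
    have hch : IsChain (· ≤ ·) (insert (cutMap g2 x) C) := by
      refine hchain.insert (fun z hz _ => ?_)
      rcases hCend z hz with rfl | rfl
      · exact Or.inr hx'1.le
      · exact Or.inl hx'2.le
    have hss : insert (cutMap g2 x) C ⊆ Set.Icc (principalCut a') (principalCut b') := by
      intro z hz
      rcases hz with rfl | hz
      · exact ⟨hx'1.le, hx'2.le⟩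
      · exact hsub hz
    have heq := hmax _ hss hch (Set.subset_insert _ _)
    have hxC : cutMap g2 x ∈ C := by rw [← heq]; exact Set.mem_insert _ _
    rcases hCend _ hxC with h | h
    · exact hx'1.ne' h
    · exact hx'2.ne h
  obtain ⟨m, hmC, hm1, hm2⟩ := hmidC
  have hC : C = {principalCut a', m, principalCut b'} := by
    apply Set.Subset.antisymm
    · intro z hz
      rcases eq_or_ne z (principalCut a') with rfl | h1
      · exact Set.mem_insert _ _
      rcases eq_or_ne z (principalCut b') with rfl | h2
      · exact Or.inr (Or.inr rfl)
      rcases eq_or_ne z m with rfl | h3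
      · exact Or.inr (Or.inl rfl)
      exfalso
      have hza : principalCut a' < z := lt_of_le_of_ne (hsub hz).1 (Ne.symm h1)
      have hzb : z < principalCut b' := lt_of_le_of_ne (hsub hz).2 h2
      rcases hchain hz hmC h3 with hzm | hmz
      · exact hkey z m hza (lt_of_le_of_ne hzm h3) hm2
      · exact hkey m z hm1 (lt_of_le_of_ne hmz (Ne.symm h3)) hzb
    · intro z hz
      rcases hz with rfl | rfl | rfl
      · exact hpaC
      · exact hmC
      · exact hpbC
  rw [hC]
  exact Set.ncard_eq_three.mpr
    ⟨principalCut a', m, principalCut b', hm1.ne, hpapb.ne, hm2.ne, rfl⟩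
end

section
/- Let M be a connected 2-level poset that is 2-CS-transitive and 3-CS-transitive, containing at least one pair a < b with a ∈ Min(M) and b ∈ Max(M), and suppose that no interval [a,b]^{M^D} with a ∈ Min(M), b ∈ Max(M), a < b is isomorphic to the 2-element chain or to the 3-element chain. Then the comparability graph of M is locally finite (every vertex has finite degree) if and only if every interval [a,b]^{M^D} with a ∈ Min(M), b ∈ Max(M), a < b is finite. -/
set_option autoImplicit false

namespace LFAux
open Set
variable {M : Type*} [PartialOrder M]

lemma ub_lb_ub (S : Set M) :
    upperBounds (lowerBounds (upperBounds S)) = upperBounds S := by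
  apply Set.Subset.antisymm
  · intro u hu
    intro x hx
    exact hu (subset_lowerBounds_upperBounds S hx)
  · intro u hu x hx
    exact hx hu

lemma lb_ub_lb (S : Set M) :
    lowerBounds (upperBounds (lowerBounds S)) = lowerBounds S := by
  apply Set.Subset.antisymm
  · intro u hu x hx
    exact hu (subset_upperBounds_lowerBounds S hx)
  · intro u hu x hx
    exact hx hu

/-- The block generated by two minimal elements. -/
def blk (p q : M) : Set M := lowerBounds (upperBounds {p, q})

/-- The dual block generated by two maximal elements. -/
def dblk (c d : M) : Set M := upperBounds (lowerBounds {c, d})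

lemma mem_ub_pair {p q w : M} : w ∈ upperBounds {p, q} ↔ p ≤ w ∧ q ≤ w := by
  simp [upperBounds_insert, upperBounds_singleton]

lemma mem_lb_pair {c d a : M} : a ∈ lowerBounds {c, d} ↔ a ≤ c ∧ a ≤ d := by
  simp [lowerBounds_insert, lowerBounds_singleton]

lemma mem_blk_left (p q : M) : p ∈ blk p q :=
  subset_lowerBounds_upperBounds _ (by simp)

lemma mem_blk_right (p q : M) : q ∈ blk p q :=
  subset_lowerBounds_upperBounds _ (by simp)

lemma mem_dblk_left (c d : M) : c ∈ dblk c d :=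
  subset_upperBounds_lowerBounds _ (by simp)

lemma mem_dblk_right (c d : M) : d ∈ dblk c d :=
  subset_upperBounds_lowerBounds _ (by simp)

lemma blk_comm (p q : M) : blk p q = blk q p := by
  unfold blk; rw [Set.pair_comm]

lemma dblk_comm (c d : M) : dblk c d = dblk d c := by
  unfold dblk; rw [Set.pair_comm]

lemma ub_blk (p q : M) : upperBounds (blk p q) = upperBounds {p, q} := ub_lb_ub _

lemma lb_dblk (c d : M) : lowerBounds (dblk c d) = lowerBounds {c, d} := lb_ub_lb _

lemma isCut_blk {p q w : M} (hp : p ≤ w) (hq : q ≤ w) : IsCut (blk p q) :=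
  ⟨⟨p, mem_blk_left p q⟩, ⟨w, by rw [ub_blk]; exact mem_ub_pair.2 ⟨hp, hq⟩⟩,
    by rw [ub_blk]; rfl⟩

lemma blk_subset_Iic {p q w : M} (hp : p ≤ w) (hq : q ≤ w) : blk p q ⊆ Iic w :=
  fun _ hx => hx (mem_ub_pair.2 ⟨hp, hq⟩)

lemma dblk_subset_Ici {c d a : M} (hc : a ≤ c) (hd : a ≤ d) : dblk c d ⊆ Ici a :=
  fun _ hx => hx (mem_lb_pair.2 ⟨hc, hd⟩)

lemma blk_subset {p q : M} {J : Set M} (hJ : lowerBounds (upperBounds J) = J)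
    (hp : p ∈ J) (hq : q ∈ J) : blk p q ⊆ J := by
  rw [← hJ]
  intro x hx u hu
  exact hx (mem_ub_pair.2 ⟨hu hp, hu hq⟩)

lemma dblk_subset {c d : M} {F : Set M} (hF : upperBounds (lowerBounds F) = F)
    (hc : c ∈ F) (hd : d ∈ F) : dblk c d ⊆ F := by
  rw [← hF]
  intro x hx u hu
  exact hx (mem_lb_pair.2 ⟨hu hc, hu hd⟩)

lemma isCut_lb_pair {c d a : M} (hc : a ≤ c) (hd : a ≤ d) :
    IsCut (lowerBounds ({c, d} : Set M)) :=
  ⟨⟨a, mem_lb_pair.2 ⟨hc, hd⟩⟩, ⟨c, fun _ hx => hx (by simp)⟩, lb_ub_lb _⟩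

/- ### order iso machinery -/

lemma image_cl (g : M ≃o M) (S : Set M) :
    g '' lowerBounds (upperBounds S) = lowerBounds (upperBounds (g '' S)) := by
  rw [OrderIso.upperBounds_image, OrderIso.lowerBounds_image]

lemma image_dcl (g : M ≃o M) (S : Set M) :
    g '' upperBounds (lowerBounds S) = upperBounds (lowerBounds (g '' S)) := by
  rw [OrderIso.lowerBounds_image, OrderIso.upperBounds_image]

lemma image_blk (g : M ≃o M) (p q : M) : g '' blk p q = blk (g p) (g q) := by
  unfold blk; rw [image_cl, Set.image_pair]

lemma image_dblk (g : M ≃o M) (c d : M) : g '' dblk c d = dblk (g c) (g d) := by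
  unfold dblk; rw [image_dcl, Set.image_pair]

lemma isCut_image (g : M ≃o M) {J : Set M} (h : IsCut J) : IsCut (g '' J) := by
  obtain ⟨h1, h2, h3⟩ := h
  refine ⟨h1.image _, ?_, ?_⟩
  · rw [OrderIso.upperBounds_image]
    exact h2.image _
  · rw [← image_cl, h3]

lemma image_Iic (g : M ≃o M) (a : M) : g '' Set.Iic a = Set.Iic (g a) := by
  ext x; simp only [mem_image, mem_Iic]
  constructor
  · rintro ⟨y, hy, rfl⟩; exact g.monotone hy
  · intro h; exact ⟨g.symm x, by rwa [← g.le_iff_le, g.apply_symm_apply], g.apply_symm_apply x⟩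

def cutMap (g : M ≃o M) (J : DMC M) : DMC M := ⟨g '' J.1, isCut_image g J.2⟩

lemma cutMap_principal (g : M ≃o M) (a : M) :
    cutMap g (principalCut a) = principalCut (g a) :=
  Subtype.ext (image_Iic g a)

lemma cutMap_cutMap_symm (g : M ≃o M) (J : DMC M) : cutMap g (cutMap g.symm J) = J := by
  apply Subtype.ext
  show g '' (g.symm '' J.1) = J.1
  rw [← Set.image_comp]
  simp

lemma cutMap_symm_cutMap (g : M ≃o M) (J : DMC M) : cutMap g.symm (cutMap g J) = J := by
  apply Subtype.ext
  show g.symm '' (g '' J.1) = J.1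
  rw [← Set.image_comp]
  simp

lemma cutMap_injective (g : M ≃o M) : Function.Injective (cutMap g) := by
  intro J K h
  have := congrArg (cutMap g.symm) h
  rwa [cutMap_symm_cutMap, cutMap_symm_cutMap] at this

lemma cutMap_le_iff (g : M ≃o M) {J K : DMC M} : cutMap g J ≤ cutMap g K ↔ J ≤ K := by
  show g '' J.1 ⊆ g '' K.1 ↔ J.1 ⊆ K.1
  exact Set.image_subset_image_iff g.injective

lemma cutMap_image_Icc (g : M ≃o M) (u v : M) :
    cutMap g '' Set.Icc (principalCut u) (principalCut v) =
      Set.Icc (principalCut (g u)) (principalCut (g v)) := by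
  apply Set.Subset.antisymm
  · rintro _ ⟨J, hJ, rfl⟩
    rw [← cutMap_principal, ← cutMap_principal]
    exact ⟨(cutMap_le_iff g).2 hJ.1, (cutMap_le_iff g).2 hJ.2⟩
  · intro K hK
    refine ⟨cutMap g.symm K, ⟨?_, ?_⟩, cutMap_cutMap_symm g K⟩
    · have : principalCut u = cutMap g.symm (principalCut (g u)) := by
        rw [cutMap_principal, g.symm_apply_apply]
      rw [this]
      exact (cutMap_le_iff g.symm).2 hK.1
    · have : principalCut v = cutMap g.symm (principalCut (g v)) := by
        rw [cutMap_principal, g.symm_apply_apply]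
      rw [this]
      exact (cutMap_le_iff g.symm).2 hK.2

lemma ncard_Icc_transfer (g : M ≃o M) (u v : M) :
    (Set.Icc (principalCut (g u)) (principalCut (g v))).ncard =
      (Set.Icc (principalCut u) (principalCut v)).ncard := by
  rw [← cutMap_image_Icc g u v]
  exact Set.ncard_image_of_injective _ (cutMap_injective g)

lemma isMax_map (g : M ≃o M) {x : M} (h : IsMax x) : IsMax (g x) := by
  intro y hy
  have h2 : x ≤ g.symm y := by rwa [← g.le_iff_le, g.apply_symm_apply]
  have := g.monotone (h h2)
  rwa [g.apply_symm_apply] at this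

lemma isMin_map (g : M ≃o M) {x : M} (h : IsMin x) : IsMin (g x) := by
  intro y hy
  have h2 : g.symm y ≤ x := by rwa [← g.le_iff_le, g.apply_symm_apply]
  have := g.monotone (h h2)
  rwa [g.apply_symm_apply] at this

/- ### order helpers -/

lemma isMin_Iic_eq {a : M} (h : IsMin a) : Set.Iic a = {a} := by
  ext x; simp only [mem_Iic, mem_singleton_iff]
  exact ⟨fun hx => le_antisymm hx (h hx), fun hx => hx.le⟩

lemma min_not_le {p q : M} (hq : IsMin q) (hne : p ≠ q) : ¬ p ≤ q :=
  fun hle => hne (le_antisymm hle (hq hle))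

lemma max_not_le {p q : M} (hp : IsMax p) (hne : p ≠ q) : ¬ p ≤ q :=
  fun hle => hne (le_antisymm hle (hp hle))

lemma lower_min (h2 : IsTwoLevel M) {x y : M} (h : x < y) : IsMin x :=
  (h2 x).resolve_right (fun hx => absurd h hx.not_lt)

lemma upper_max (h2 : IsTwoLevel M) {x y : M} (h : x < y) : IsMax y :=
  (h2 y).resolve_left (fun hy => absurd h hy.not_lt)

lemma principal_le_iff {a : M} (ha : IsMin a) (J : DMC M) :
    principalCut a ≤ J ↔ a ∈ J.1 := by
  constructor
  · intro h; exact h (le_refl a)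
  · intro h x hx
    have : x = a := le_antisymm hx (ha hx)
    rwa [this]

lemma le_principal_iff {J : DMC M} {b : M} : J ≤ principalCut b ↔ J.1 ⊆ Set.Iic b :=
  Iff.rfl

lemma cut_eq_Iic {J : DMC M} {b : M} (hb : J.1 ⊆ Set.Iic b) (hmem : b ∈ J.1) :
    J = principalCut b := by
  apply Subtype.ext
  apply Set.Subset.antisymm hb
  rw [← J.2.2.2]
  intro x hx u hu
  exact le_trans hx (hu hmem)

end LFAux
namespace LFAux
open Set
open scoped Classical
variable {M : Type*} [PartialOrder M]

omit [PartialOrder M] in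
lemma ncard_triple {p q w : M} (h1 : p ≠ q) (h2 : p ≠ w) (h3 : q ≠ w) :
    ({p, q, w} : Set M).ncard = 3 := by
  rw [Set.ncard_insert_of_notMem (by simp [h1, h2]) (Set.toFinite _), Set.ncard_pair h3]

lemma triple_connected_lam {p q w : M} (hpw : p < w) (hqw : q < w) :
    ((compGraph M).induce ({p, q, w} : Set M)).Connected := by
  rw [SimpleGraph.connected_iff]
  have hw : w ∈ ({p, q, w} : Set M) := by simp
  refine ⟨?_, ⟨⟨w, hw⟩⟩⟩
  have reach : ∀ z : ({p, q, w} : Set M),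
      ((compGraph M).induce ({p, q, w} : Set M)).Reachable z ⟨w, hw⟩ := by
    rintro ⟨z, hz⟩
    obtain rfl | rfl | rfl := hz
    · exact SimpleGraph.Adj.reachable (show (compGraph M).Adj z w from Or.inl hpw)
    · exact SimpleGraph.Adj.reachable (show (compGraph M).Adj z w from Or.inl hqw)
    · exact SimpleGraph.Reachable.refl _
  intro x y
  exact (reach x).trans (reach y).symm

lemma triple_connected_vee {p c d : M} (hpc : p < c) (hpd : p < d) :
    ((compGraph M).induce ({c, d, p} : Set M)).Connected := by
  rw [SimpleGraph.connected_iff]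
  have hp : p ∈ ({c, d, p} : Set M) := by simp
  refine ⟨?_, ⟨⟨p, hp⟩⟩⟩
  have reach : ∀ z : ({c, d, p} : Set M),
      ((compGraph M).induce ({c, d, p} : Set M)).Reachable z ⟨p, hp⟩ := by
    rintro ⟨z, hz⟩
    obtain rfl | rfl | rfl := hz
    · exact SimpleGraph.Adj.reachable (show (compGraph M).Adj z p from Or.inr hpc)
    · exact SimpleGraph.Adj.reachable (show (compGraph M).Adj z p from Or.inr hpd)
    · exact SimpleGraph.Reachable.refl _
  intro x y
  exact (reach x).trans (reach y).symm

lemma triple_iso_nonempty (p q w u v w' : M)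
    (hpq : p ≠ q) (hpw : p ≠ w) (hqw : q ≠ w)
    (huv : u ≠ v) (huw : u ≠ w') (hvw : v ≠ w')
    (hiff : ∀ x y : M, x ∈ ({p, q, w} : Set M) → y ∈ ({p, q, w} : Set M) →
      ((if x = p then u else if x = q then v else w') ≤
        (if y = p then u else if y = q then v else w') ↔ x ≤ y)) :
    Nonempty ((↥({p, q, w} : Set M)) ≃o (↥({u, v, w'} : Set M))) := by
  classical
  set fA : M → M := fun x => if x = p then u else if x = q then v else w' with hfA
  set fB : M → M := fun y => if y = u then p else if y = v then q else w with hfB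
  have hmemA : ∀ x, x ∈ ({p, q, w} : Set M) → fA x ∈ ({u, v, w'} : Set M) := by
    intro x hx
    obtain rfl | rfl | rfl := hx
    · simp [hfA]
    · simp [hfA, Ne.symm hpq]
    · simp [hfA, Ne.symm hpw, Ne.symm hqw]
  have hmemB : ∀ y, y ∈ ({u, v, w'} : Set M) → fB y ∈ ({p, q, w} : Set M) := by
    intro y hy
    obtain rfl | rfl | rfl := hy
    · simp [hfB]
    · simp [hfB, Ne.symm huv]
    · simp [hfB, Ne.symm huw, Ne.symm hvw]
  have hBA : ∀ x, x ∈ ({p, q, w} : Set M) → fB (fA x) = x := by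
    intro x hx
    obtain rfl | rfl | rfl := hx
    · simp [hfA, hfB]
    · simp [hfA, hfB, Ne.symm hpq, Ne.symm huv]
    · simp [hfA, hfB, Ne.symm hpw, Ne.symm hqw, Ne.symm huw, Ne.symm hvw]
  have hAB : ∀ y, y ∈ ({u, v, w'} : Set M) → fA (fB y) = y := by
    intro y hy
    obtain rfl | rfl | rfl := hy
    · simp [hfA, hfB]
    · simp [hfA, hfB, Ne.symm hpq, Ne.symm huv]
    · simp [hfA, hfB, Ne.symm hpw, Ne.symm hqw, Ne.symm huw, Ne.symm hvw]
  refine ⟨⟨⟨fun x => ⟨fA x.1, hmemA x.1 x.2⟩, fun y => ⟨fB y.1, hmemB y.1 y.2⟩, ?_, ?_⟩, ?_⟩⟩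
  · intro x; exact Subtype.ext (hBA x.1 x.2)
  · intro y; exact Subtype.ext (hAB y.1 y.2)
  · intro x y
    simpa using hiff x.1 y.1 x.2 y.2

/-- Conjugacy of Λ-configurations. -/
lemma lam_conj (h3cs : ThreeCSTransitive M)
    {p q w u v w' : M}
    (hpq : ¬ p ≤ q) (hqp : ¬ q ≤ p) (hpw : p < w) (hqw : q < w)
    (huv : ¬ u ≤ v) (hvu : ¬ v ≤ u) (huw : u < w') (hvw : v < w') :
    ∃ g : M ≃o M, g w = w' ∧ ((g p = u ∧ g q = v) ∨ (g p = v ∧ g q = u)) := by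
  classical
  have hpq' : p ≠ q := fun h => hpq (le_of_eq h)
  have huv' : u ≠ v := fun h => huv (le_of_eq h)
  have hiff : ∀ x y : M, x ∈ ({p, q, w} : Set M) → y ∈ ({p, q, w} : Set M) →
      ((if x = p then u else if x = q then v else w') ≤
        (if y = p then u else if y = q then v else w') ↔ x ≤ y) := by
    intro x y hx hy
    obtain rfl | rfl | rfl := hx <;> obtain rfl | rfl | rfl := hy
    · simp
    · rw [if_pos rfl, if_neg (Ne.symm hpq'), if_pos rfl]
      exact iff_of_false huv hpq
    · rw [if_pos rfl, if_neg (Ne.symm hpw.ne), if_neg (Ne.symm hqw.ne)]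
      exact iff_of_true huw.le hpw.le
    · rw [if_neg (Ne.symm hpq'), if_pos rfl, if_pos rfl]
      exact iff_of_false hvu hqp
    · simp
    · rw [if_neg (Ne.symm hpq'), if_pos rfl, if_neg (Ne.symm hpw.ne), if_neg (Ne.symm hqw.ne)]
      exact iff_of_true hvw.le hqw.le
    · rw [if_neg (Ne.symm hpw.ne), if_neg (Ne.symm hqw.ne), if_pos rfl]
      exact iff_of_false huw.not_ge hpw.not_ge
    · rw [if_neg (Ne.symm hpw.ne), if_neg (Ne.symm hqw.ne), if_neg (Ne.symm hpq'), if_pos rfl]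
      exact iff_of_false hvw.not_ge hqw.not_ge
    · simp
  obtain ⟨g, hg⟩ := h3cs {p, q, w} {u, v, w'}
    (ncard_triple hpq' hpw.ne hqw.ne) (ncard_triple huv' huw.ne hvw.ne)
    (triple_connected_lam hpw hqw) (triple_connected_lam huw hvw)
    (triple_iso_nonempty p q w u v w' hpq' hpw.ne hqw.ne huv' huw.ne hvw.ne hiff)
  have hinj : Function.Injective g := g.injective
  have hmem : ∀ x, x ∈ ({p, q, w} : Set M) → g x ∈ ({u, v, w'} : Set M) := by
    intro x hx; rw [← hg]; exact Set.mem_image_of_mem _ hx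
  have hgp := hmem p (by simp)
  have hgq := hmem q (by simp)
  have hgw := hmem w (by simp)
  have hlt1 : g p < g w := g.strictMono hpw
  have hlt2 : g q < g w := g.strictMono hqw
  have hgww : g w = w' := by
    obtain h1 | h1 | h1 := hgw
    · exfalso
      obtain h2 | h2 | h2 := hgp
      · exact hpw.ne (hinj (h2.trans h1.symm))
      · exact hvu (h1 ▸ h2 ▸ hlt1).le
      · exact lt_asymm huw (h1 ▸ h2 ▸ hlt1)
    · exfalso
      obtain h2 | h2 | h2 := hgp
      · exact huv (h1 ▸ h2 ▸ hlt1).le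
      · exact hpw.ne (hinj (h2.trans h1.symm))
      · exact lt_asymm hvw (h1 ▸ h2 ▸ hlt1)
    · exact h1
  have hgp' : g p = u ∨ g p = v := by
    obtain h | h | h := hgp
    exacts [Or.inl h, Or.inr h, absurd (hinj (h.trans hgww.symm)) hpw.ne]
  have hgq' : g q = u ∨ g q = v := by
    obtain h | h | h := hgq
    exacts [Or.inl h, Or.inr h, absurd (hinj (h.trans hgww.symm)) hqw.ne]
  refine ⟨g, hgww, ?_⟩
  obtain h1 | h1 := hgp' <;> obtain h2 | h2 := hgq'
  · exact absurd (hinj (h1.trans h2.symm)) hpq'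
  · exact Or.inl ⟨h1, h2⟩
  · exact Or.inr ⟨h1, h2⟩
  · exact absurd (hinj (h1.trans h2.symm)) hpq'

/-- Conjugacy of V-configurations. -/
lemma vee_conj (h3cs : ThreeCSTransitive M)
    {c d p c' d' p' : M}
    (hcd : ¬ c ≤ d) (hdc : ¬ d ≤ c) (hpc : p < c) (hpd : p < d)
    (hcd' : ¬ c' ≤ d') (hdc' : ¬ d' ≤ c') (hpc' : p' < c') (hpd' : p' < d') :
    ∃ g : M ≃o M, g p = p' ∧ ((g c = c' ∧ g d = d') ∨ (g c = d' ∧ g d = c')) := by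
  classical
  have hcd0 : c ≠ d := fun h => hcd (le_of_eq h)
  have hcd0' : c' ≠ d' := fun h => hcd' (le_of_eq h)
  have hiff : ∀ x y : M, x ∈ ({c, d, p} : Set M) → y ∈ ({c, d, p} : Set M) →
      ((if x = c then c' else if x = d then d' else p') ≤
        (if y = c then c' else if y = d then d' else p') ↔ x ≤ y) := by
    intro x y hx hy
    obtain rfl | rfl | rfl := hx <;> obtain rfl | rfl | rfl := hy
    · simp
    · rw [if_pos rfl, if_neg (Ne.symm hcd0), if_pos rfl]
      exact iff_of_false hcd' hcd
    · rw [if_pos rfl, if_neg (Ne.symm hpc.ne'), if_neg (Ne.symm hpd.ne')]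
      exact iff_of_false hpc'.not_ge hpc.not_ge
    · rw [if_neg (Ne.symm hcd0), if_pos rfl, if_pos rfl]
      exact iff_of_false hdc' hdc
    · simp
    · rw [if_neg (Ne.symm hcd0), if_pos rfl, if_neg (Ne.symm hpc.ne'), if_neg (Ne.symm hpd.ne')]
      exact iff_of_false hpd'.not_ge hpd.not_ge
    · rw [if_neg (Ne.symm hpc.ne'), if_neg (Ne.symm hpd.ne'), if_pos rfl]
      exact iff_of_true hpc'.le hpc.le
    · rw [if_neg (Ne.symm hpc.ne'), if_neg (Ne.symm hpd.ne'), if_neg (Ne.symm hcd0), if_pos rfl]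
      exact iff_of_true hpd'.le hpd.le
    · simp
  obtain ⟨g, hg⟩ := h3cs {c, d, p} {c', d', p'}
    (ncard_triple hcd0 hpc.ne' hpd.ne') (ncard_triple hcd0' hpc'.ne' hpd'.ne')
    (triple_connected_vee hpc hpd) (triple_connected_vee hpc' hpd')
    (triple_iso_nonempty c d p c' d' p' hcd0 hpc.ne' hpd.ne' hcd0' hpc'.ne' hpd'.ne' hiff)
  have hinj : Function.Injective g := g.injective
  have hmem : ∀ x, x ∈ ({c, d, p} : Set M) → g x ∈ ({c', d', p'} : Set M) := by
    intro x hx; rw [← hg]; exact Set.mem_image_of_mem _ hx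
  have hgc := hmem c (by simp)
  have hgd := hmem d (by simp)
  have hgp := hmem p (by simp)
  have hlt1 : g p < g c := g.strictMono hpc
  have hlt2 : g p < g d := g.strictMono hpd
  have hgpp : g p = p' := by
    obtain h1 | h1 | h1 := hgp
    · exfalso
      obtain h2 | h2 | h2 := hgd
      · exact hpd.ne (hinj (h1.trans h2.symm))
      · exact hcd' (h1 ▸ h2 ▸ hlt2).le
      · exact lt_asymm hpc' (h1 ▸ h2 ▸ hlt2)
    · exfalso
      obtain h2 | h2 | h2 := hgc
      · exact hdc' (h1 ▸ h2 ▸ hlt1).le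
      · exact hpc.ne (hinj (h1.trans h2.symm))
      · exact lt_asymm hpd' (h1 ▸ h2 ▸ hlt1)
    · exact h1
  have hgc' : g c = c' ∨ g c = d' := by
    obtain h | h | h := hgc
    exacts [Or.inl h, Or.inr h, absurd (hinj (h.trans hgpp.symm)).symm hpc.ne]
  have hgd' : g d = c' ∨ g d = d' := by
    obtain h | h | h := hgd
    exacts [Or.inl h, Or.inr h, absurd (hinj (h.trans hgpp.symm)).symm hpd.ne]
  refine ⟨g, hgpp, ?_⟩
  obtain h1 | h1 := hgc' <;> obtain h2 | h2 := hgd'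
  · exact absurd (hinj (h1.trans h2.symm)) hcd0
  · exact Or.inl ⟨h1, h2⟩
  · exact Or.inr ⟨h1, h2⟩
  · exact absurd (hinj (h1.trans h2.symm)) hcd0

end LFAux
namespace LFAux
open Set
variable {M : Type*} [PartialOrder M]

lemma mem_interval_iff {x w : M} (hx : IsMin x) (J : DMC M) :
    J ∈ Set.Icc (principalCut x) (principalCut w) ↔ x ∈ J.1 ∧ J.1 ⊆ Set.Iic w := by
  rw [Set.mem_Icc]
  exact and_congr (principal_le_iff hx J) Iff.rfl

lemma interval_ncard_const (h2cs : TwoCSTransitive M) {a₀ b₀ : M} (hab₀ : a₀ < b₀)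
    {x w : M} (hxw : x < w) :
    (Set.Icc (principalCut x) (principalCut w)).ncard
      = (Set.Icc (principalCut a₀) (principalCut b₀)).ncard := by
  obtain ⟨g, hg1, hg2⟩ := h2cs x w a₀ b₀ hxw hab₀
  rw [← hg1, ← hg2]
  exact (ncard_Icc_transfer g x w).symm

lemma exists_base (h2lev : IsTwoLevel M)
    (hpair : ∃ a b : M, a ∈ minSet M ∧ b ∈ maxSet M ∧ a < b)
    (hnot : ∀ a b : M, a ∈ minSet M → b ∈ maxSet M → a < b →
      (Set.Icc (principalCut a) (principalCut b)).ncard ≠ 2 ∧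
      (Set.Icc (principalCut a) (principalCut b)).ncard ≠ 3) :
    ∃ p q c c' : M, IsMin p ∧ IsMin q ∧ IsMax c ∧ IsMax c' ∧ p ≠ q ∧ c ≠ c' ∧
      p < c ∧ q < c ∧ p < c' ∧ q < c' := by
  obtain ⟨a, b, hamin, hbmax, hab⟩ := hpair
  have hIne := hnot a b hamin hbmax hab
  have hamin' : IsMin a := hamin
  have hbmax' : IsMax b := hbmax
  have hpa : principalCut a ∈ Set.Icc (principalCut a) (principalCut b) :=
    ⟨le_refl _, fun x hx => le_trans hx hab.le⟩
  have hpb : principalCut b ∈ Set.Icc (principalCut a) (principalCut b) :=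
    ⟨(principal_le_iff hamin' _).2 hab.le, le_refl _⟩
  have hpane : principalCut a ≠ principalCut b := by
    intro h
    have h2 : Set.Iic a = Set.Iic b := congrArg Subtype.val h
    have : b ∈ Set.Iic a := by rw [h2]; exact le_refl b
    exact hab.not_ge this
  have hcover : ¬ (Set.Icc (principalCut a) (principalCut b)
      ⊆ {principalCut a, principalCut b}) := by
    intro hsub
    have heq : Set.Icc (principalCut a) (principalCut b)
        = {principalCut a, principalCut b} :=
      Set.Subset.antisymm hsub (by rintro x (rfl | rfl); exacts [hpa, hpb])
    exact hIne.1 (by rw [heq]; exact Set.ncard_pair hpane)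
  obtain ⟨J, hJint, hJne⟩ := Set.not_subset.1 hcover
  have hJa : a ∈ J.1 := (principal_le_iff hamin' J).1 hJint.1
  have hJb : J.1 ⊆ Set.Iic b := hJint.2
  have hbJ : b ∉ J.1 := fun hb => hJne (Or.inr (cut_eq_Iic hJb hb))
  have hx : ∃ x ∈ J.1, x ≠ a := by
    by_contra h
    push_neg at h
    refine hJne (Or.inl (Subtype.ext ?_))
    show J.1 = Set.Iic a
    rw [isMin_Iic_eq hamin']
    apply Set.Subset.antisymm
    · intro z hz; exact h z hz
    · intro z hz; rw [Set.mem_singleton_iff] at hz; rw [hz]; exact hJa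
  obtain ⟨x, hxJ, hxa⟩ := hx
  have hxb : x < b := lt_of_le_of_ne (hJb hxJ) (fun h => hbJ (h ▸ hxJ))
  have hxmin : IsMin x := lower_min h2lev hxb
  have hblkJ : blk a x ⊆ J.1 := blk_subset J.2.2.2 hJa hxJ
  have hsecond : ∃ c', c' ∈ upperBounds {a, x} ∧ c' ≠ b := by
    by_contra h
    push_neg at h
    have hbblk : b ∈ blk a x := by
      intro u hu
      rw [h u hu]
    exact hbJ (hblkJ hbblk)
  obtain ⟨c', hc'ub, hc'b⟩ := hsecond
  have hac' : a ≤ c' := hc'ub (by simp)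
  have hxc' : x ≤ c' := hc'ub (by simp)
  have hane : a ≠ c' := fun h => hxa (le_antisymm (h ▸ hxc') (hamin' (h ▸ hxc')))
  have hac'' : a < c' := lt_of_le_of_ne hac' hane
  have hxne : x ≠ c' := fun h => hxa (le_antisymm (hxmin (h ▸ hac')) (h ▸ hac'))
  exact ⟨a, x, b, c', hamin', hxmin, hbmax', upper_max h2lev hac'', Ne.symm hxa,
    Ne.symm hc'b, hab, hxb, hac'', lt_of_le_of_ne hxc' hxne⟩

lemma star_lam (h2lev : IsTwoLevel M) (h3cs : ThreeCSTransitive M)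
    (hpair : ∃ a b : M, a ∈ minSet M ∧ b ∈ maxSet M ∧ a < b)
    (hnot : ∀ a b : M, a ∈ minSet M → b ∈ maxSet M → a < b →
      (Set.Icc (principalCut a) (principalCut b)).ncard ≠ 2 ∧
      (Set.Icc (principalCut a) (principalCut b)).ncard ≠ 3)
    {p q w : M} (hp : IsMin p) (hq : IsMin q)
    (hpq : p ≠ q) (hpw : p < w) (hqw : q < w) :
    ∃ w', IsMax w' ∧ w' ≠ w ∧ p < w' ∧ q < w' := by
  obtain ⟨p₀, q₀, c₀, c₀', hp₀, hq₀, hc₀, hc₀', hpq₀, hcc₀, h1, h2, h3, h4⟩ :=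
    exists_base h2lev hpair hnot
  obtain ⟨g, hgw, hgpq⟩ := lam_conj h3cs (min_not_le hq₀ hpq₀) (min_not_le hp₀ (Ne.symm hpq₀))
    h1 h2 (min_not_le hq hpq) (min_not_le hp (Ne.symm hpq)) hpw hqw
  refine ⟨g c₀', isMax_map g hc₀', ?_, ?_, ?_⟩
  · intro h
    exact hcc₀ (g.injective (hgw ▸ h)).symm
  · rcases hgpq with ⟨e1, _⟩ | ⟨_, e2⟩
    · exact e1 ▸ g.strictMono h3
    · exact e2 ▸ g.strictMono h4
  · rcases hgpq with ⟨_, e2⟩ | ⟨e1, _⟩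
    · exact e2 ▸ g.strictMono h4
    · exact e1 ▸ g.strictMono h3

lemma star_vee (h2lev : IsTwoLevel M) (h3cs : ThreeCSTransitive M)
    (hpair : ∃ a b : M, a ∈ minSet M ∧ b ∈ maxSet M ∧ a < b)
    (hnot : ∀ a b : M, a ∈ minSet M → b ∈ maxSet M → a < b →
      (Set.Icc (principalCut a) (principalCut b)).ncard ≠ 2 ∧
      (Set.Icc (principalCut a) (principalCut b)).ncard ≠ 3)
    {c d p₁ : M} (hc : IsMax c) (hd : IsMax d)
    (hcd : c ≠ d) (h1 : p₁ < c) (h2 : p₁ < d) :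
    ∃ p₂, IsMin p₂ ∧ p₂ ≠ p₁ ∧ p₂ < c ∧ p₂ < d := by
  obtain ⟨p₀, q₀, c₀, c₀', hp₀, hq₀, hc₀, hc₀', hpq₀, hcc₀, e1, e2, e3, e4⟩ :=
    exists_base h2lev hpair hnot
  obtain ⟨g, hgp, hgcd⟩ := vee_conj h3cs (max_not_le hc₀ hcc₀) (max_not_le hc₀' (Ne.symm hcc₀))
    e1 e3 (max_not_le hc hcd) (max_not_le hd (Ne.symm hcd)) h1 h2
  refine ⟨g q₀, isMin_map g hq₀, ?_, ?_, ?_⟩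
  · intro h
    exact hpq₀ (g.injective (hgp ▸ h)).symm
  · rcases hgcd with ⟨e, _⟩ | ⟨_, e⟩
    · exact e ▸ g.strictMono e2
    · exact e ▸ g.strictMono e4
  · rcases hgcd with ⟨_, e⟩ | ⟨e, _⟩
    · exact e ▸ g.strictMono e4
    · exact e ▸ g.strictMono e2

lemma not_top_mem_blk (h2lev : IsTwoLevel M) (h3cs : ThreeCSTransitive M)
    (hpair : ∃ a b : M, a ∈ minSet M ∧ b ∈ maxSet M ∧ a < b)
    (hnot : ∀ a b : M, a ∈ minSet M → b ∈ maxSet M → a < b →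
      (Set.Icc (principalCut a) (principalCut b)).ncard ≠ 2 ∧
      (Set.Icc (principalCut a) (principalCut b)).ncard ≠ 3)
    {p q w : M} (hp : IsMin p) (hq : IsMin q) (hpq : p ≠ q) (hpw : p < w) (hqw : q < w)
    (hw : IsMax w) : w ∉ blk p q := by
  intro hmem
  obtain ⟨w', _, hw'w, hpw', hqw'⟩ := star_lam h2lev h3cs hpair hnot hp hq hpq hpw hqw
  have hle : w ≤ w' := hmem (mem_ub_pair.2 ⟨hpw'.le, hqw'.le⟩)
  exact hw'w (le_antisymm (hw hle) hle)

lemma not_bot_mem_dblk (h2lev : IsTwoLevel M) (h3cs : ThreeCSTransitive M)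
    (hpair : ∃ a b : M, a ∈ minSet M ∧ b ∈ maxSet M ∧ a < b)
    (hnot : ∀ a b : M, a ∈ minSet M → b ∈ maxSet M → a < b →
      (Set.Icc (principalCut a) (principalCut b)).ncard ≠ 2 ∧
      (Set.Icc (principalCut a) (principalCut b)).ncard ≠ 3)
    {c d p₁ : M} (hc : IsMax c) (hd : IsMax d) (hcd : c ≠ d) (h1 : p₁ < c) (h2 : p₁ < d)
    (hp : IsMin p₁) : p₁ ∉ dblk c d := by
  intro hmem
  obtain ⟨p₂, _, hp₂p, hp₂c, hp₂d⟩ := star_vee h2lev h3cs hpair hnot hc hd hcd h1 h2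
  have hle : p₂ ≤ p₁ := hmem (mem_lb_pair.2 ⟨hp₂c.le, hp₂d.le⟩)
  exact hp₂p (le_antisymm hle (hp hle))

lemma blk_elts (h2lev : IsTwoLevel M) (h3cs : ThreeCSTransitive M)
    (hpair : ∃ a b : M, a ∈ minSet M ∧ b ∈ maxSet M ∧ a < b)
    (hnot : ∀ a b : M, a ∈ minSet M → b ∈ maxSet M → a < b →
      (Set.Icc (principalCut a) (principalCut b)).ncard ≠ 2 ∧
      (Set.Icc (principalCut a) (principalCut b)).ncard ≠ 3)
    {p q w x : M} (hp : IsMin p) (hq : IsMin q) (hpq : p ≠ q) (hpw : p < w) (hqw : q < w)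
    (hw : IsMax w) (hx : x ∈ blk p q) : x < w ∧ IsMin x := by
  have hle : x ≤ w := blk_subset_Iic hpw.le hqw.le hx
  have hne : x ≠ w := fun h => not_top_mem_blk h2lev h3cs hpair hnot hp hq hpq hpw hqw hw (h ▸ hx)
  have hlt : x < w := lt_of_le_of_ne hle hne
  exact ⟨hlt, lower_min h2lev hlt⟩

lemma dblk_elts (h2lev : IsTwoLevel M) (h3cs : ThreeCSTransitive M)
    (hpair : ∃ a b : M, a ∈ minSet M ∧ b ∈ maxSet M ∧ a < b)
    (hnot : ∀ a b : M, a ∈ minSet M → b ∈ maxSet M → a < b →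
      (Set.Icc (principalCut a) (principalCut b)).ncard ≠ 2 ∧
      (Set.Icc (principalCut a) (principalCut b)).ncard ≠ 3)
    {c d a x : M} (hc : IsMax c) (hd : IsMax d) (hcd : c ≠ d) (h1 : a < c) (h2 : a < d)
    (ha : IsMin a) (hx : x ∈ dblk c d) : a < x ∧ IsMax x := by
  have hle : a ≤ x := dblk_subset_Ici h1.le h2.le hx
  have hne : a ≠ x :=
    fun h => not_bot_mem_dblk h2lev h3cs hpair hnot hc hd hcd h1 h2 ha (h ▸ hx)
  have hlt : a < x := lt_of_le_of_ne hle hne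
  exact ⟨hlt, upper_max h2lev hlt⟩

end LFAux
namespace LFAux
open Set
variable {M : Type*} [PartialOrder M]

lemma no_drop (h2lev : IsTwoLevel M) (h2cs : TwoCSTransitive M) (h3cs : ThreeCSTransitive M)
    (hpair : ∃ a b : M, a ∈ minSet M ∧ b ∈ maxSet M ∧ a < b)
    (hnot : ∀ a b : M, a ∈ minSet M → b ∈ maxSet M → a < b →
      (Set.Icc (principalCut a) (principalCut b)).ncard ≠ 2 ∧
      (Set.Icc (principalCut a) (principalCut b)).ncard ≠ 3)
    (hfin : ∀ a b : M, a ∈ minSet M → b ∈ maxSet M → a < b →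
        (Set.Icc (principalCut a) (principalCut b)).Finite)
    {a₀ b₀ : M} (hab₀ : a₀ < b₀)
    {b : M} (hb : IsMax b)
    {p q u v : M} (hp : IsMin p) (hq : IsMin q) (hpq : p ≠ q) (hpb : p < b) (hqb : q < b)
    (hu : u ∈ blk p q) (hv : v ∈ blk p q) (huv : u ≠ v) :
    blk u v = blk p q := by
  have hsub : blk u v ⊆ blk p q := blk_subset (isCut_blk hpb.le hqb.le).2.2 hu hv
  by_contra hne
  obtain ⟨hub, humin⟩ := blk_elts h2lev h3cs hpair hnot hp hq hpq hpb hqb hb hu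
  obtain ⟨hvb, hvmin⟩ := blk_elts h2lev h3cs hpair hnot hp hq hpq hpb hqb hb hv
  obtain ⟨g, hgb, hguv⟩ := lam_conj h3cs (min_not_le hq hpq) (min_not_le hp (Ne.symm hpq))
    hpb hqb (min_not_le hvmin huv) (min_not_le humin (Ne.symm huv)) hub hvb
  have himg : g '' blk p q = blk u v := by
    rw [image_blk]
    rcases hguv with ⟨h1, h2⟩ | ⟨h1, h2⟩ <;> rw [h1, h2]
    exact blk_comm v u
  set φ : ℕ → Set M := fun i => (fun S => g '' S)^[i] (blk p q) with hφdef
  have hstep : ∀ i, φ (i + 1) = g '' φ i := by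
    intro i
    simp only [hφdef, Function.iterate_succ_apply']
  have hφ0 : φ 0 = blk p q := rfl
  have hcut : ∀ i, IsCut (φ i) := by
    intro i; induction i with
    | zero => exact isCut_blk hpb.le hqb.le
    | succ n ih => rw [hstep]; exact isCut_image g ih
  have hIic : ∀ i, φ i ⊆ Set.Iic b := by
    intro i; induction i with
    | zero => exact blk_subset_Iic hpb.le hqb.le
    | succ n ih =>
      rw [hstep]
      rintro _ ⟨y, hy, rfl⟩
      have := g.monotone (ih hy)
      rwa [hgb] at this
  have hdec : ∀ i, φ (i + 1) ⊂ φ i := by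
    intro i; induction i with
    | zero =>
      rw [hstep, hφ0, himg]
      exact Set.ssubset_iff_subset_ne.2 ⟨hsub, hne⟩
    | succ n ih =>
      have h2 : g '' φ (n + 1) ⊂ g '' φ n := Set.ssubset_iff_subset_ne.2
        ⟨Set.image_mono ih.subset,
          fun h => ih.ne (Set.image_injective.mpr g.injective h)⟩
      rw [← hstep (n + 1), ← hstep n] at h2
      exact h2
  have hmono : ∀ i j, i ≤ j → φ j ⊆ φ i := by
    intro i j hij
    induction hij with
    | refl => exact subset_rfl
    | step h ih => exact Set.Subset.trans (hdec _).subset ih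
  set N := (Set.Icc (principalCut a₀) (principalCut b₀)).ncard with hN
  obtain ⟨x, hxφ⟩ := (hcut N).1
  have hxall : ∀ i, i ≤ N → x ∈ φ i := fun i hi => hmono i N hi hxφ
  obtain ⟨hxb, hxmin⟩ := blk_elts h2lev h3cs hpair hnot hp hq hpq hpb hqb hb
    (hφ0 ▸ hxall 0 (Nat.zero_le N))
  have hKfin : (Set.Icc (principalCut x) (principalCut b)).Finite := hfin x b hxmin hb hxb
  have hKcard : (Set.Icc (principalCut x) (principalCut b)).ncard = N :=
    interval_ncard_const h2cs hab₀ hxb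
  have hφne : ∀ i j, i < j → φ i ≠ φ j := by
    intro i j hij h
    exact (hdec i).not_subset (h ▸ hmono (i + 1) j hij)
  have hle : (Set.Iic N).ncard ≤ (Set.Icc (principalCut x) (principalCut b)).ncard :=
    Set.ncard_le_ncard_of_injOn (fun i => (⟨φ i, hcut i⟩ : DMC M))
      (fun i hi => (mem_interval_iff hxmin _).2 ⟨hxall i hi, hIic i⟩)
      (fun i _ j _ hijeq => by
        by_contra hne'
        have hvals : φ i = φ j := congrArg Subtype.val hijeq
        rcases lt_trichotomy i j with h | h | h
        · exact hφne i j h hvals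
        · exact hne' h
        · exact hφne j i h hvals.symm) hKfin
  rw [← Finset.coe_Iic, Set.ncard_coe_finset, Nat.card_Iic, hKcard] at hle
  omega

lemma no_drop_dual (h2lev : IsTwoLevel M) (h2cs : TwoCSTransitive M) (h3cs : ThreeCSTransitive M)
    (hpair : ∃ a b : M, a ∈ minSet M ∧ b ∈ maxSet M ∧ a < b)
    (hnot : ∀ a b : M, a ∈ minSet M → b ∈ maxSet M → a < b →
      (Set.Icc (principalCut a) (principalCut b)).ncard ≠ 2 ∧
      (Set.Icc (principalCut a) (principalCut b)).ncard ≠ 3)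
    (hfin : ∀ a b : M, a ∈ minSet M → b ∈ maxSet M → a < b →
        (Set.Icc (principalCut a) (principalCut b)).Finite)
    {a₀ b₀ : M} (hab₀ : a₀ < b₀)
    {a : M} (ha : IsMin a)
    {c d u v : M} (hc : IsMax c) (hd : IsMax d) (hcd : c ≠ d) (hac : a < c) (had : a < d)
    (hu : u ∈ dblk c d) (hv : v ∈ dblk c d) (huv : u ≠ v) :
    dblk u v = dblk c d := by
  have hclosed : upperBounds (lowerBounds (dblk c d)) = dblk c d := by
    rw [lb_dblk]; rfl
  have hsub : dblk u v ⊆ dblk c d := dblk_subset hclosed hu hv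
  by_contra hne
  obtain ⟨hau, humax⟩ := dblk_elts h2lev h3cs hpair hnot hc hd hcd hac had ha hu
  obtain ⟨hav, hvmax⟩ := dblk_elts h2lev h3cs hpair hnot hc hd hcd hac had ha hv
  obtain ⟨g, hga, hgcd⟩ := vee_conj h3cs (max_not_le hc hcd) (max_not_le hd (Ne.symm hcd))
    hac had (max_not_le humax huv) (max_not_le hvmax (Ne.symm huv)) hau hav
  have himg : g '' dblk c d = dblk u v := by
    rw [image_dblk]
    rcases hgcd with ⟨h1, h2⟩ | ⟨h1, h2⟩ <;> rw [h1, h2]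
    exact dblk_comm v u
  set φ : ℕ → Set M := fun i => (fun S => g '' S)^[i] (dblk c d) with hφdef
  have hstep : ∀ i, φ (i + 1) = g '' φ i := by
    intro i
    simp only [hφdef, Function.iterate_succ_apply']
  have hφ0 : φ 0 = dblk c d := rfl
  have hfilt : ∀ i, upperBounds (lowerBounds (φ i)) = φ i := by
    intro i; induction i with
    | zero => exact hclosed
    | succ n ih =>
      rw [hstep, ← image_dcl, ih]
  have hune : ∀ i, (φ i).Nonempty := by
    intro i; induction i with
    | zero => exact ⟨c, mem_dblk_left c d⟩
    | succ n ih => rw [hstep]; exact ih.image _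
  have haφ : ∀ i, a ∈ lowerBounds (φ i) := by
    intro i; induction i with
    | zero => rw [hφ0, lb_dblk]; exact mem_lb_pair.2 ⟨hac.le, had.le⟩
    | succ n ih =>
      rw [hstep, OrderIso.lowerBounds_image]
      exact ⟨a, ih, hga⟩
  have hdec : ∀ i, φ (i + 1) ⊂ φ i := by
    intro i; induction i with
    | zero =>
      rw [hstep, hφ0, himg]
      exact Set.ssubset_iff_subset_ne.2 ⟨hsub, hne⟩
    | succ n ih =>
      have h2 : g '' φ (n + 1) ⊂ g '' φ n := Set.ssubset_iff_subset_ne.2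
        ⟨Set.image_mono ih.subset,
          fun h => ih.ne (Set.image_injective.mpr g.injective h)⟩
      rw [← hstep (n + 1), ← hstep n] at h2
      exact h2
  have hmono : ∀ i j, i ≤ j → φ j ⊆ φ i := by
    intro i j hij
    induction hij with
    | refl => exact subset_rfl
    | step h ih => exact Set.Subset.trans (hdec _).subset ih
  have hφne : ∀ i j, i < j → φ i ≠ φ j := by
    intro i j hij h
    exact (hdec i).not_subset (h ▸ hmono (i + 1) j hij)
  set D : ℕ → Set M := fun i => lowerBounds (φ i) with hDdef
  have hDcut : ∀ i, IsCut (D i) := by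
    intro i
    refine ⟨⟨a, haφ i⟩, ?_, lb_ub_lb _⟩
    have : upperBounds (D i) = φ i := hfilt i
    rw [this]
    exact hune i
  have hDmono : ∀ i j, i ≤ j → D i ⊆ D j :=
    fun i j hij => lowerBounds_mono_set (hmono i j hij)
  have hDne : ∀ i j, i < j → D i ≠ D j := by
    intro i j hij h
    apply hφne i j hij
    rw [← hfilt i, ← hfilt j]
    show upperBounds (D i) = upperBounds (D j)
    rw [h]
  set N := (Set.Icc (principalCut a₀) (principalCut b₀)).ncard with hN
  obtain ⟨cs, hcsφ⟩ := hune N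
  have hcsall : ∀ i, i ≤ N → cs ∈ φ i := fun i hi => hmono i N hi hcsφ
  obtain ⟨hacs, hcsmax⟩ := dblk_elts h2lev h3cs hpair hnot hc hd hcd hac had ha
    (hφ0 ▸ hcsall 0 (Nat.zero_le N))
  have hKfin : (Set.Icc (principalCut a) (principalCut cs)).Finite := hfin a cs ha hcsmax hacs
  have hKcard : (Set.Icc (principalCut a) (principalCut cs)).ncard = N :=
    interval_ncard_const h2cs hab₀ hacs
  have hle : (Set.Iic N).ncard ≤ (Set.Icc (principalCut a) (principalCut cs)).ncard :=
    Set.ncard_le_ncard_of_injOn (fun i => (⟨D i, hDcut i⟩ : DMC M))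
      (fun i hi => (mem_interval_iff ha _).2 ⟨haφ i, fun x hx => hx (hcsall i hi)⟩)
      (fun i _ j _ hijeq => by
        by_contra hne'
        have hvals : D i = D j := congrArg Subtype.val hijeq
        rcases lt_trichotomy i j with h | h | h
        · exact hDne i j h hvals
        · exact hne' h
        · exact hDne j i h hvals.symm) hKfin
  rw [← Finset.coe_Iic, Set.ncard_coe_finset, Nat.card_Iic, hKcard] at hle
  omega

end LFAux
namespace LFAux
open Set
variable {M : Type*} [PartialOrder M]

lemma max_nbhd_finite (h2lev : IsTwoLevel M) (h2cs : TwoCSTransitive M)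
    (h3cs : ThreeCSTransitive M)
    (hpair : ∃ a b : M, a ∈ minSet M ∧ b ∈ maxSet M ∧ a < b)
    (hnot : ∀ a b : M, a ∈ minSet M → b ∈ maxSet M → a < b →
      (Set.Icc (principalCut a) (principalCut b)).ncard ≠ 2 ∧
      (Set.Icc (principalCut a) (principalCut b)).ncard ≠ 3)
    (hfin : ∀ a b : M, a ∈ minSet M → b ∈ maxSet M → a < b →
        (Set.Icc (principalCut a) (principalCut b)).Finite)
    {a₀ b₀ : M} (hab₀ : a₀ < b₀)
    {b : M} (hb : IsMax b) : {x : M | x < b}.Finite := by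
  by_contra hinf'
  have hinf : {x : M | x < b}.Infinite := hinf'
  obtain ⟨a, ha⟩ := hinf.nonempty
  have hab : a < b := ha
  have hamin : IsMin a := lower_min h2lev hab
  set T : Set M := {z | z < b ∧ z ≠ a} with hT
  have hTinf : T.Infinite := by
    refine (hinf.diff (Set.finite_singleton a)).mono ?_
    intro z hz
    exact ⟨hz.1, hz.2⟩
  have hzmin : ∀ z ∈ T, IsMin z := fun z hz => lower_min h2lev hz.1
  have hblkcut : ∀ z ∈ T, IsCut (blk a z) := fun z hz => isCut_blk hab.le hz.1.le
  have hblkmem : ∀ z (hz : z ∈ T), (⟨blk a z, hblkcut z hz⟩ : DMC M)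
      ∈ Set.Icc (principalCut a) (principalCut b) :=
    fun z hz => (mem_interval_iff hamin _).2
      ⟨mem_blk_left a z, blk_subset_Iic hab.le hz.1.le⟩
  have hIfin : (Set.Icc (principalCut a) (principalCut b)).Finite := hfin a b hamin hb hab
  set V : Set (Set M) := Subtype.val '' (Set.Icc (principalCut a) (principalCut b)) with hV
  have hVfin : V.Finite := hIfin.image _
  have hcover : T ⊆ ⋃ S ∈ V, {z | z ∈ T ∧ blk a z = S} := by
    intro z hz
    exact Set.mem_biUnion (⟨_, hblkmem z hz, rfl⟩ : blk a z ∈ V) ⟨hz, rfl⟩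
  have hexinf : ∃ S ∈ V, {z | z ∈ T ∧ blk a z = S}.Infinite := by
    by_contra h
    push_neg at h
    have hfinU : (⋃ S ∈ V, {z | z ∈ T ∧ blk a z = S}).Finite :=
      Set.Finite.biUnion hVfin (fun S hS => by simpa using h S hS)
    exact hTinf (hfinU.subset hcover)
  obtain ⟨S, _, hSinf⟩ := hexinf
  obtain ⟨z₀, hz₀fib⟩ := hSinf.nonempty
  have hz₀T : z₀ ∈ T := hz₀fib.1
  have hz₀min : IsMin z₀ := hzmin z₀ hz₀T
  have hfibsub : {z | z ∈ T ∧ blk a z = S} ⊆ blk a z₀ := by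
    intro z hz
    rw [hz₀fib.2, ← hz.2]
    exact mem_blk_right a z
  have hB1inf : (blk a z₀).Infinite := hSinf.mono hfibsub
  -- there is a second block through a
  have hz₁ : ∃ z₁ ∈ T, blk a z₁ ≠ blk a z₀ := by
    by_contra hpush
    push_neg at hpush
    have hNb : {x : M | x < b} = blk a z₀ := by
      apply Set.Subset.antisymm
      · intro z hz
        rcases eq_or_ne z a with rfl | hza
        · exact mem_blk_left z z₀
        · rw [← hpush z ⟨hz, hza⟩]; exact mem_blk_right a z
      · intro x hx
        exact (blk_elts h2lev h3cs hpair hnot hamin hz₀min (Ne.symm hz₀T.2) hab hz₀T.1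
          hb hx).1
    have hclass : ∀ J, J ∈ Set.Icc (principalCut a) (principalCut b) →
        J = principalCut a ∨ J.1 = blk a z₀ ∨ J = principalCut b := by
      intro J hJ
      have hJa : a ∈ J.1 := ((mem_interval_iff hamin J).1 hJ).1
      have hJb : J.1 ⊆ Set.Iic b := ((mem_interval_iff hamin J).1 hJ).2
      by_cases hbJ : b ∈ J.1
      · exact Or.inr (Or.inr (cut_eq_Iic hJb hbJ))
      by_cases hsing : ∀ z ∈ J.1, z = a
      · refine Or.inl (Subtype.ext ?_)
        show J.1 = Set.Iic a
        rw [isMin_Iic_eq hamin]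
        apply Set.Subset.antisymm
        · intro z hz; exact hsing z hz
        · intro z hz
          rw [Set.mem_singleton_iff] at hz
          rw [hz]; exact hJa
      · refine Or.inr (Or.inl ?_)
        push_neg at hsing
        obtain ⟨z, hzJ, hza⟩ := hsing
        have hzb : z < b := lt_of_le_of_ne (hJb hzJ) (fun e => hbJ (e ▸ hzJ))
        have hBsub : blk a z₀ ⊆ J.1 := by
          rw [← hpush z ⟨hzb, hza⟩]
          exact blk_subset J.2.2.2 hJa hzJ
        refine Set.Subset.antisymm ?_ hBsub
        intro x hxJ
        rw [← hNb]
        exact lt_of_le_of_ne (hJb hxJ) (fun e => hbJ (e ▸ hxJ))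
    have hB1cut : IsCut (blk a z₀) := hblkcut z₀ hz₀T
    have hIeq : Set.Icc (principalCut a) (principalCut b)
        = {principalCut a, ⟨blk a z₀, hB1cut⟩, principalCut b} := by
      apply Set.Subset.antisymm
      · intro J hJ
        rcases hclass J hJ with h1 | h1 | h1
        · exact Or.inl h1
        · exact Or.inr (Or.inl (Subtype.ext h1))
        · exact Or.inr (Or.inr h1)
      · rintro J (rfl | rfl | rfl)
        · exact ⟨le_refl _, (principal_le_iff hamin _).2 hab.le⟩
        · exact hblkmem z₀ hz₀T
        · exact ⟨(principal_le_iff hamin _).2 hab.le, le_refl _⟩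
    have hne1 : principalCut a ≠ (⟨blk a z₀, hB1cut⟩ : DMC M) := by
      intro h
      have hval : Set.Iic a = blk a z₀ := congrArg Subtype.val h
      have : z₀ ∈ Set.Iic a := by rw [hval]; exact mem_blk_right a z₀
      exact hz₀T.2 (le_antisymm this (hamin this))
    have hne2 : principalCut a ≠ principalCut b := by
      intro h
      have hval : Set.Iic a = Set.Iic b := congrArg Subtype.val h
      have : b ∈ Set.Iic a := by rw [hval]; exact le_refl b
      exact hab.not_ge this
    have hne3 : (⟨blk a z₀, hB1cut⟩ : DMC M) ≠ principalCut b := by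
      intro h
      have hval : blk a z₀ = Set.Iic b := congrArg Subtype.val h
      have : b ∈ blk a z₀ := by rw [hval]; exact le_refl b
      exact not_top_mem_blk h2lev h3cs hpair hnot hamin hz₀min (Ne.symm hz₀T.2) hab
        hz₀T.1 hb this
    have := (hnot a b hamin hb hab).2
    rw [hIeq] at this
    exact this (ncard_triple hne1 hne2 hne3)
  obtain ⟨z₁, hz₁T, hz₁ne⟩ := hz₁
  have hz₁min : IsMin z₁ := hzmin z₁ hz₁T
  have hz01 : z₀ ≠ z₁ := fun e => hz₁ne (by rw [e])
  have ND : ∀ (p q : M), IsMin p → IsMin q → p ≠ q → p < b → q < b →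
      ∀ u v, u ∈ blk p q → v ∈ blk p q → u ≠ v → blk u v = blk p q :=
    fun p q hp hq hpq hpb hqb u v hu hv huv =>
      no_drop h2lev h2cs h3cs hpair hnot hfin hab₀ hb hp hq hpq hpb hqb hu hv huv
  obtain ⟨g, hgb, hgpair⟩ := lam_conj h3cs (min_not_le hz₀min (Ne.symm hz₀T.2))
    (min_not_le hamin hz₀T.2) hab hz₀T.1
    (min_not_le hz₁min hz01) (min_not_le hz₀min (Ne.symm hz01)) hz₀T.1 hz₁T.1
  have hCimg : g '' blk a z₀ = blk z₀ z₁ := by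
    rw [image_blk]
    rcases hgpair with ⟨e1, e2⟩ | ⟨e1, e2⟩ <;> rw [e1, e2]
    exact blk_comm z₁ z₀
  have hCinf : (blk z₀ z₁).Infinite := by
    rw [← hCimg]
    exact hB1inf.image (g.injective.injOn)
  have haC : a ∉ blk z₀ z₁ := by
    intro haC
    have h1 : blk a z₀ = blk z₀ z₁ :=
      ND z₀ z₁ hz₀min hz₁min hz01 hz₀T.1 hz₁T.1 a z₀ haC (mem_blk_left z₀ z₁)
        (Ne.symm hz₀T.2)
    have hz₁B1 : z₁ ∈ blk a z₀ := by rw [h1]; exact mem_blk_right z₀ z₁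
    have h2 : blk a z₁ = blk a z₀ :=
      ND a z₀ hamin hz₀min (Ne.symm hz₀T.2) hab hz₀T.1 a z₁ (mem_blk_left a z₀) hz₁B1
        (Ne.symm hz₁T.2)
    exact hz₁ne h2
  have hCmem : ∀ z ∈ blk z₀ z₁ \ {z₀, z₁}, z ∈ T := by
    intro z hz
    have h1 := (blk_elts h2lev h3cs hpair hnot hz₀min hz₁min hz01 hz₀T.1 hz₁T.1 hb hz.1).1
    exact ⟨h1, fun e => haC (e ▸ hz.1)⟩
  have himgfin : ((fun z => blk a z) '' (blk z₀ z₁ \ {z₀, z₁})).Finite := by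
    apply hVfin.subset
    rintro _ ⟨z, hz, rfl⟩
    exact ⟨_, hblkmem z (hCmem z hz), rfl⟩
  have hinjOn : Set.InjOn (fun z => blk a z) (blk z₀ z₁ \ {z₀, z₁}) := by
    intro z hz z' hz' heq
    by_contra hne'
    have hzT := hCmem z hz
    have hz'T := hCmem z' hz'
    have hzD : z ∈ blk a z := mem_blk_right a z
    have hz'D : z' ∈ blk a z := by
      show z' ∈ (fun z => blk a z) z
      rw [heq]
      exact mem_blk_right a z'
    have h1 : blk z z' = blk a z :=
      ND a z hamin (hzmin z hzT) (Ne.symm hzT.2) hab hzT.1 z z' hzD hz'D hne'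
    have h2 : blk z z' = blk z₀ z₁ :=
      ND z₀ z₁ hz₀min hz₁min hz01 hz₀T.1 hz₁T.1 z z' hz.1 hz'.1 hne'
    apply haC
    rw [← h2, h1]
    exact mem_blk_left a z
  have hCfin' : (blk z₀ z₁ \ {z₀, z₁}).Finite := Set.Finite.of_finite_image himgfin hinjOn
  have hCfin : (blk z₀ z₁).Finite := by
    refine ((hCfin'.union (Set.toFinite {z₀, z₁})).subset ?_)
    intro z hz
    by_cases h : z ∈ ({z₀, z₁} : Set M)
    · exact Or.inr h
    · exact Or.inl ⟨hz, h⟩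
  exact hCinf hCfin

end LFAux
namespace LFAux
open Set
variable {M : Type*} [PartialOrder M]

lemma min_nbhd_finite (h2lev : IsTwoLevel M) (h2cs : TwoCSTransitive M)
    (h3cs : ThreeCSTransitive M)
    (hpair : ∃ a b : M, a ∈ minSet M ∧ b ∈ maxSet M ∧ a < b)
    (hnot : ∀ a b : M, a ∈ minSet M → b ∈ maxSet M → a < b →
      (Set.Icc (principalCut a) (principalCut b)).ncard ≠ 2 ∧
      (Set.Icc (principalCut a) (principalCut b)).ncard ≠ 3)
    (hfin : ∀ a b : M, a ∈ minSet M → b ∈ maxSet M → a < b →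
        (Set.Icc (principalCut a) (principalCut b)).Finite)
    {a₀ b₀ : M} (hab₀ : a₀ < b₀)
    {a : M} (ha : IsMin a) : {y : M | a < y}.Finite := by
  by_contra hinf'
  have hinf : {y : M | a < y}.Infinite := hinf'
  obtain ⟨b, hb⟩ := hinf.nonempty
  have hab : a < b := hb
  have hbmax : IsMax b := upper_max h2lev hab
  set T : Set M := {z | a < z ∧ z ≠ b} with hT
  have hTinf : T.Infinite := by
    refine (hinf.diff (Set.finite_singleton b)).mono ?_
    intro z hz
    exact ⟨hz.1, hz.2⟩
  have hzmax : ∀ z ∈ T, IsMax z := fun z hz => upper_max h2lev hz.1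
  have hDcut : ∀ z ∈ T, IsCut (lowerBounds ({b, z} : Set M)) :=
    fun z hz => isCut_lb_pair hab.le hz.1.le
  have hDmem : ∀ z (hz : z ∈ T), (⟨lowerBounds ({b, z} : Set M), hDcut z hz⟩ : DMC M)
      ∈ Set.Icc (principalCut a) (principalCut b) := by
    intro z hz
    refine (mem_interval_iff ha _).2 ⟨mem_lb_pair.2 ⟨hab.le, hz.1.le⟩, ?_⟩
    intro x hx
    exact hx (show b ∈ ({b, z} : Set M) by simp)
  have hIfin : (Set.Icc (principalCut a) (principalCut b)).Finite := hfin a b ha hbmax hab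
  set V : Set (Set M) := Subtype.val '' (Set.Icc (principalCut a) (principalCut b)) with hV
  have hVfin : V.Finite := hIfin.image _
  have hcover : T ⊆ ⋃ S ∈ V, {z | z ∈ T ∧ lowerBounds ({b, z} : Set M) = S} := by
    intro z hz
    exact Set.mem_biUnion (⟨_, hDmem z hz, rfl⟩ : lowerBounds ({b, z} : Set M) ∈ V) ⟨hz, rfl⟩
  have hexinf : ∃ S ∈ V, {z | z ∈ T ∧ lowerBounds ({b, z} : Set M) = S}.Infinite := by
    by_contra h
    push_neg at h
    have hfinU : (⋃ S ∈ V, {z | z ∈ T ∧ lowerBounds ({b, z} : Set M) = S}).Finite :=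
      Set.Finite.biUnion hVfin (fun S hS => by simpa using h S hS)
    exact hTinf (hfinU.subset hcover)
  obtain ⟨S, _, hSinf⟩ := hexinf
  obtain ⟨z₀, hz₀fib⟩ := hSinf.nonempty
  have hz₀T : z₀ ∈ T := hz₀fib.1
  have hz₀max : IsMax z₀ := hzmax z₀ hz₀T
  have hfibsub : {z | z ∈ T ∧ lowerBounds ({b, z} : Set M) = S} ⊆ dblk b z₀ := by
    intro z hz
    have e : dblk b z₀ = dblk b z := by
      unfold dblk
      rw [hz₀fib.2, ← hz.2]
    rw [e]
    exact mem_dblk_right b z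
  have hF1inf : (dblk b z₀).Infinite := hSinf.mono hfibsub
  -- there is a second dual block through b
  have hz₁ : ∃ z₁ ∈ T, dblk b z₁ ≠ dblk b z₀ := by
    by_contra hpush
    push_neg at hpush
    have hNa : {y : M | a < y} = dblk b z₀ := by
      apply Set.Subset.antisymm
      · intro z hz
        rcases eq_or_ne z b with rfl | hzb
        · exact mem_dblk_left z z₀
        · rw [← hpush z ⟨hz, hzb⟩]; exact mem_dblk_right b z
      · intro x hx
        exact (dblk_elts h2lev h3cs hpair hnot hbmax hz₀max (Ne.symm hz₀T.2) hab hz₀T.1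
          ha hx).1
    have hclass : ∀ J, J ∈ Set.Icc (principalCut a) (principalCut b) →
        J = principalCut a ∨ J.1 = lowerBounds ({b, z₀} : Set M) ∨ J = principalCut b := by
      intro J hJ
      have hJa : a ∈ J.1 := ((mem_interval_iff ha J).1 hJ).1
      have hJb : J.1 ⊆ Set.Iic b := ((mem_interval_iff ha J).1 hJ).2
      have hbub : b ∈ upperBounds J.1 := fun y hy => hJb hy
      by_cases hsing : ∀ z ∈ J.1, z = a
      · refine Or.inl (Subtype.ext ?_)
        show J.1 = Set.Iic a
        rw [isMin_Iic_eq ha]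
        apply Set.Subset.antisymm
        · intro z hz; exact hsing z hz
        · intro z hz
          rw [Set.mem_singleton_iff] at hz
          rw [hz]; exact hJa
      push_neg at hsing
      obtain ⟨x, hxJ, hxa⟩ := hsing
      by_cases hubb : upperBounds J.1 ⊆ {b}
      · refine Or.inr (Or.inr (Subtype.ext ?_))
        show J.1 = Set.Iic b
        apply Set.Subset.antisymm hJb
        rw [← J.2.2.2]
        intro y hy u hu
        rw [show u = b from hubb hu]
        exact hy
      · refine Or.inr (Or.inl ?_)
        obtain ⟨c, hcub, hcb⟩ := Set.not_subset.1 hubb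
        rw [Set.mem_singleton_iff] at hcb
        have hac : a ≤ c := hcub hJa
        have hane : a ≠ c := by
          intro e
          have : x ≤ a := e ▸ hcub hxJ
          exact hxa (le_antisymm this (ha this))
        have haclt : a < c := lt_of_le_of_ne hac hane
        have hcT : c ∈ T := ⟨haclt, hcb⟩
        have hFsub : dblk b c ⊆ upperBounds J.1 :=
          dblk_subset (ub_lb_ub J.1) hbub hcub
        have hF1ub : upperBounds J.1 = dblk b z₀ := by
          apply Set.Subset.antisymm
          · intro u hu
            have hau : a ≤ u := hu hJa
            have hune : a ≠ u := by
              intro e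
              have : x ≤ a := e ▸ hu hxJ
              exact hxa (le_antisymm this (ha this))
            have : u ∈ {y : M | a < y} := lt_of_le_of_ne hau hune
            rwa [hNa] at this
          · rw [← hpush c hcT]
            exact hFsub
        rw [← J.2.2.2, hF1ub, ← lb_dblk b z₀]
    have hmidcut : IsCut (lowerBounds ({b, z₀} : Set M)) := hDcut z₀ hz₀T
    have hIeq : Set.Icc (principalCut a) (principalCut b)
        = {principalCut a, ⟨lowerBounds ({b, z₀} : Set M), hmidcut⟩, principalCut b} := by
      apply Set.Subset.antisymm
      · intro J hJ
        rcases hclass J hJ with h1 | h1 | h1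
        · exact Or.inl h1
        · exact Or.inr (Or.inl (Subtype.ext h1))
        · exact Or.inr (Or.inr h1)
      · rintro J (rfl | rfl | rfl)
        · exact ⟨le_refl _, (principal_le_iff ha _).2 hab.le⟩
        · exact hDmem z₀ hz₀T
        · exact ⟨(principal_le_iff ha _).2 hab.le, le_refl _⟩
    obtain ⟨p₂, hp₂min, hp₂a, hp₂b, hp₂z₀⟩ := star_vee h2lev h3cs hpair hnot hbmax hz₀max
      (Ne.symm hz₀T.2) hab hz₀T.1
    have hne1 : principalCut a ≠ (⟨lowerBounds ({b, z₀} : Set M), hmidcut⟩ : DMC M) := by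
      intro h
      have hval : Set.Iic a = lowerBounds ({b, z₀} : Set M) := congrArg Subtype.val h
      have : p₂ ∈ Set.Iic a := by
        rw [hval]
        exact mem_lb_pair.2 ⟨hp₂b.le, hp₂z₀.le⟩
      exact hp₂a (le_antisymm this (ha this))
    have hne2 : principalCut a ≠ principalCut b := by
      intro h
      have hval : Set.Iic a = Set.Iic b := congrArg Subtype.val h
      have : b ∈ Set.Iic a := by rw [hval]; exact le_refl b
      exact hab.not_ge this
    have hne3 : (⟨lowerBounds ({b, z₀} : Set M), hmidcut⟩ : DMC M) ≠ principalCut b := by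
      intro h
      have hval : lowerBounds ({b, z₀} : Set M) = Set.Iic b := congrArg Subtype.val h
      have hbmem : b ∈ lowerBounds ({b, z₀} : Set M) := by rw [hval]; exact le_refl b
      have : b ≤ z₀ := hbmem (show z₀ ∈ ({b, z₀} : Set M) by simp)
      exact hz₀T.2 (le_antisymm this (hbmax this)).symm
    have := (hnot a b ha hbmax hab).2
    rw [hIeq] at this
    exact this (ncard_triple hne1 hne2 hne3)
  obtain ⟨z₁, hz₁T, hz₁ne⟩ := hz₁
  have hz₁max : IsMax z₁ := hzmax z₁ hz₁T
  have hz01 : z₀ ≠ z₁ := fun e => hz₁ne (by rw [e])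
  have ND : ∀ (c d : M), IsMax c → IsMax d → c ≠ d → a < c → a < d →
      ∀ u v, u ∈ dblk c d → v ∈ dblk c d → u ≠ v → dblk u v = dblk c d :=
    fun c d hc hd hcd hac had u v hu hv huv =>
      no_drop_dual h2lev h2cs h3cs hpair hnot hfin hab₀ ha hc hd hcd hac had hu hv huv
  obtain ⟨g, hga, hgpair⟩ := vee_conj h3cs (max_not_le hbmax (Ne.symm hz₀T.2))
    (max_not_le hz₀max hz₀T.2) hab hz₀T.1
    (max_not_le hz₀max hz01) (max_not_le hz₁max (Ne.symm hz01)) hz₀T.1 hz₁T.1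
  have hGimg : g '' dblk b z₀ = dblk z₀ z₁ := by
    rw [image_dblk]
    rcases hgpair with ⟨e1, e2⟩ | ⟨e1, e2⟩ <;> rw [e1, e2]
    exact dblk_comm z₁ z₀
  have hGinf : (dblk z₀ z₁).Infinite := by
    rw [← hGimg]
    exact hF1inf.image (g.injective.injOn)
  have hbG : b ∉ dblk z₀ z₁ := by
    intro hbG
    have h1 : dblk b z₀ = dblk z₀ z₁ :=
      ND z₀ z₁ hz₀max hz₁max hz01 hz₀T.1 hz₁T.1 b z₀ hbG (mem_dblk_left z₀ z₁)
        (Ne.symm hz₀T.2)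
    have hz₁F1 : z₁ ∈ dblk b z₀ := by rw [h1]; exact mem_dblk_right z₀ z₁
    have h2 : dblk b z₁ = dblk b z₀ :=
      ND b z₀ hbmax hz₀max (Ne.symm hz₀T.2) hab hz₀T.1 b z₁ (mem_dblk_left b z₀) hz₁F1
        (Ne.symm hz₁T.2)
    exact hz₁ne h2
  have hGmem : ∀ z ∈ dblk z₀ z₁ \ {z₀, z₁}, z ∈ T := by
    intro z hz
    have h1 := (dblk_elts h2lev h3cs hpair hnot hz₀max hz₁max hz01 hz₀T.1 hz₁T.1 ha hz.1).1
    exact ⟨h1, fun e => hbG (e ▸ hz.1)⟩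
  have himgfin : ((fun z => lowerBounds ({b, z} : Set M)) '' (dblk z₀ z₁ \ {z₀, z₁})).Finite := by
    apply hVfin.subset
    rintro _ ⟨z, hz, rfl⟩
    exact ⟨_, hDmem z (hGmem z hz), rfl⟩
  have hinjOn : Set.InjOn (fun z => lowerBounds ({b, z} : Set M)) (dblk z₀ z₁ \ {z₀, z₁}) := by
    intro z hz z' hz' heq
    by_contra hne'
    have hzT := hGmem z hz
    have hz'T := hGmem z' hz'
    have hzF : z ∈ dblk b z := mem_dblk_right b z
    have hz'F : z' ∈ dblk b z := by
      have e : dblk b z = dblk b z' := by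
        unfold dblk
        rw [show lowerBounds ({b, z} : Set M) = lowerBounds ({b, z'} : Set M) from heq]
      rw [e]
      exact mem_dblk_right b z'
    have h1 : dblk z z' = dblk b z :=
      ND b z hbmax (hzmax z hzT) (Ne.symm hzT.2) hab hzT.1 z z' hzF hz'F hne'
    have h2 : dblk z z' = dblk z₀ z₁ :=
      ND z₀ z₁ hz₀max hz₁max hz01 hz₀T.1 hz₁T.1 z z' hz.1 hz'.1 hne'
    apply hbG
    rw [← h2, h1]
    exact mem_dblk_left b z
  have hGfin' : (dblk z₀ z₁ \ {z₀, z₁}).Finite := Set.Finite.of_finite_image himgfin hinjOn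
  have hGfin : (dblk z₀ z₁).Finite := by
    refine ((hGfin'.union (Set.toFinite {z₀, z₁})).subset ?_)
    intro z hz
    by_cases h : z ∈ ({z₀, z₁} : Set M)
    · exact Or.inr h
    · exact Or.inl ⟨hz, h⟩
  exact hGinf hGfin

end LFAux

/-- Proposition 4.4. Let `M` be a connected 2- and 3-CS-transitive 2-level
poset, with at least one pair `a < b` (`a` minimal, `b` maximal), in which no completion
interval is a 2- or 3-element chain. Then the comparability graph of `M` is locally finite
iff all completion intervals are finite. -/
theorem locally_finite_iff_finite_intervals (M : Type*) [PartialOrder M]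
    (h2lev : IsTwoLevel M)
    (hconn : (compGraph M).Connected)
    (h2cs : TwoCSTransitive M) (h3cs : ThreeCSTransitive M)
    (hpair : ∃ a b : M, a ∈ minSet M ∧ b ∈ maxSet M ∧ a < b)
    (hnot : ∀ a b : M, a ∈ minSet M → b ∈ maxSet M → a < b →
      (Set.Icc (principalCut a) (principalCut b)).ncard ≠ 2 ∧
      (Set.Icc (principalCut a) (principalCut b)).ncard ≠ 3) :
    (∀ v : M, {w : M | (compGraph M).Adj v w}.Finite) ↔
      (∀ a b : M, a ∈ minSet M → b ∈ maxSet M → a < b →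
        (Set.Icc (principalCut a) (principalCut b)).Finite) := by
  constructor
  · intro hlf a b _ _ hab
    have hIic : (Set.Iic b).Finite := by
      have hsub : Set.Iic b ⊆ insert b {w | (compGraph M).Adj b w} := by
        intro x hx
        rcases eq_or_lt_of_le hx with rfl | h
        · exact Set.mem_insert _ _
        · exact Set.mem_insert_of_mem _ (Or.inr h)
      exact ((hlf b).insert b).subset hsub
    have himg : (Subtype.val '' Set.Icc (principalCut a) (principalCut b)).Finite := by
      apply hIic.finite_subsets.subset
      rintro _ ⟨J, hJ, rfl⟩
      exact hJ.2
    exact Set.Finite.of_finite_image himg Subtype.val_injective.injOn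
  · intro hfin v
    obtain ⟨a₀, b₀, _, _, hab₀⟩ := id hpair
    rcases h2lev v with hvmin | hvmax
    · have hset : {w | (compGraph M).Adj v w} = {y | v < y} := by
        ext w
        constructor
        · rintro (h | h)
          · exact h
          · exact absurd h hvmin.not_lt
        · exact fun h => Or.inl h
      rw [hset]
      exact LFAux.min_nbhd_finite h2lev h2cs h3cs hpair hnot hfin hab₀ hvmin
    · have hset : {w | (compGraph M).Adj v w} = {x | x < v} := by
        ext w
        constructor
        · rintro (h | h)
          · exact absurd h hvmax.not_lt
          · exact h
        · exact fun h => Or.inr h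
      rw [hset]
      exact LFAux.max_nbhd_finite h2lev h2cs h3cs hpair hnot hfin hab₀ hvmax
end
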